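/- arXiv:1310.2900 — 9 statements merged into one kernel-verified Lean document; each statement's English description precedes it below -/
import Mathlib

section
/- The kernel of the Laplacian Δ on M_n(ℂ) consists exactly of the scalar multiples of the identity matrix: Δ(a) = 0 if and only if a = λ·1 for some λ ∈ ℂ. -/
open Matrix
open scoped ComplexOrder

/-- The derivation `δ₁(a) = ya − ay`. -/
noncomputable def delta1 {n : ℕ} (y a : Matrix (Fin n) (Fin n) ℂ) : Matrix (Fin n) (Fin n) ℂ :=
  y * a - a * y

/-- The derivation `δ₂(a) = ax − xa`. -/
noncomputable def delta2 {n : ℕ} (x a : Matrix (Fin n) (Fin n) ℂ) : Matrix (Fin n) (Fin n) ℂ :=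
  a * x - x * a

/-- The Laplacian `Δ = δ₁∘δ₁ + δ₂∘δ₂`. -/
noncomputable def lap {n : ℕ} (x y a : Matrix (Fin n) (Fin n) ℂ) : Matrix (Fin n) (Fin n) ℂ :=
  delta1 y (delta1 y a) + delta2 x (delta2 x a)

/-- The logarithm of a positive definite (in particular Hermitian) matrix, via the
functional calculus: unitarily diagonalize and take the real logarithm of the eigenvalues. -/
noncomputable def matLog {n : ℕ} (a : Matrix (Fin n) (Fin n) ℂ) : Matrix (Fin n) (Fin n) ℂ :=
  if h : a.IsHermitian then
    (h.eigenvectorUnitary : Matrix (Fin n) (Fin n) ℂ) *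
      Matrix.diagonal (fun i => (Real.log (h.eigenvalues i) : ℂ)) *
      (star (h.eigenvectorUnitary : Matrix (Fin n) (Fin n) ℂ))
  else 0

/-- The generating condition: the only matrices commuting with both `u = exp((2πi/n)x)`
and `v = exp((2πi/n)y)` are the scalar multiples of the identity matrix. -/
def GenCond {n : ℕ} (x y : Matrix (Fin n) (Fin n) ℂ) : Prop :=
  ∀ a : Matrix (Fin n) (Fin n) ℂ,
    a * NormedSpace.exp ((((2 * Real.pi : ℝ) : ℂ) * Complex.I / (n : ℂ)) • x)
      = NormedSpace.exp ((((2 * Real.pi : ℝ) : ℂ) * Complex.I / (n : ℂ)) • x) * a →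
    a * NormedSpace.exp ((((2 * Real.pi : ℝ) : ℂ) * Complex.I / (n : ℂ)) • y)
      = NormedSpace.exp ((((2 * Real.pi : ℝ) : ℂ) * Complex.I / (n : ℂ)) • y) * a →
    ∃ z : ℂ, a = z • (1 : Matrix (Fin n) (Fin n) ℂ)

/-- Key trace identity: `⟨a, δ²a⟩ = ⟨δa, δa⟩` for `δ = ad_y` with `y` Hermitian. -/
lemma trace_key {n : ℕ} (y a : Matrix (Fin n) (Fin n) ℂ) (hy : y.IsHermitian) :
    Matrix.trace (aᴴ * delta1 y (delta1 y a)) =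
      Matrix.trace ((delta1 y a)ᴴ * (delta1 y a)) := by
  have hd : (y * a - a * y)ᴴ = aᴴ * y - y * aᴴ := by
    simp [conjTranspose_sub, conjTranspose_mul, hy.eq]
  simp only [delta1, hd, Matrix.mul_sub, Matrix.sub_mul, Matrix.trace_sub, Matrix.mul_assoc]
  rw [Matrix.trace_mul_comm y (aᴴ * (y * a)), Matrix.trace_mul_comm y (aᴴ * (a * y))]
  simp only [Matrix.mul_assoc]

lemma trace_normSq {n : ℕ} (m : Matrix (Fin n) (Fin n) ℂ) :
    Matrix.trace (mᴴ * m) = ((∑ i, ∑ j, Complex.normSq (m j i) : ℝ) : ℂ) := by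
  simp [Matrix.trace, Matrix.diag, Matrix.mul_apply, Matrix.conjTranspose_apply,
    Complex.normSq_eq_conj_mul_self]

lemma delta2_sq {n : ℕ} (x a : Matrix (Fin n) (Fin n) ℂ) :
    delta2 x (delta2 x a) = delta1 x (delta1 x a) := by
  simp only [delta1, delta2]
  noncomm_ring

/-- The kernel of the Laplacian `Δ` consists exactly of the scalar multiples of the
identity matrix. -/
theorem ker_laplacian (n : ℕ) (x y : Matrix (Fin n) (Fin n) ℂ)
    (hx : x.IsHermitian) (hy : y.IsHermitian) (hgen : GenCond x y)
    (a : Matrix (Fin n) (Fin n) ℂ) :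
    lap x y a = 0 ↔ ∃ z : ℂ, a = z • (1 : Matrix (Fin n) (Fin n) ℂ) := by
  constructor
  · intro h
    -- ⟨a, Δa⟩ = ⟨δ₁a, δ₁a⟩ + ⟨δ'a, δ'a⟩ = 0 with δ' = ad_x
    have h0 : Matrix.trace (aᴴ * lap x y a) = 0 := by rw [h, Matrix.mul_zero, Matrix.trace_zero]
    have hsplit : Matrix.trace (aᴴ * lap x y a)
        = Matrix.trace ((delta1 y a)ᴴ * (delta1 y a))
          + Matrix.trace ((delta1 x a)ᴴ * (delta1 x a)) := by
      rw [lap, delta2_sq, Matrix.mul_add, Matrix.trace_add, trace_key y a hy, trace_key x a hx]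
    rw [hsplit, trace_normSq, trace_normSq, ← Complex.ofReal_add] at h0
    have hr : (∑ i, ∑ j, Complex.normSq ((delta1 y a) j i))
        + (∑ i, ∑ j, Complex.normSq ((delta1 x a) j i)) = 0 := by
      exact_mod_cast h0
    have nonneg : ∀ m : Matrix (Fin n) (Fin n) ℂ,
        (0:ℝ) ≤ ∑ i, ∑ j, Complex.normSq (m j i) :=
      fun m => Finset.sum_nonneg fun i _ => Finset.sum_nonneg fun j _ => Complex.normSq_nonneg _
    have hzero : ∀ m : Matrix (Fin n) (Fin n) ℂ,
        (∑ i, ∑ j, Complex.normSq (m j i)) = 0 → m = 0 := by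
      intro m hm
      ext i j
      have := (Finset.sum_eq_zero_iff_of_nonneg
        (fun i _ => Finset.sum_nonneg fun j _ => Complex.normSq_nonneg _)).mp hm j
        (Finset.mem_univ j)
      have := (Finset.sum_eq_zero_iff_of_nonneg
        (fun k _ => Complex.normSq_nonneg _)).mp this i (Finset.mem_univ i)
      simpa [Complex.normSq_eq_zero] using this
    have h1 : delta1 y a = 0 := by
      apply hzero
      linarith [nonneg (delta1 y a), nonneg (delta1 x a)]
    have h2 : delta1 x a = 0 := by
      apply hzero
      linarith [nonneg (delta1 y a), nonneg (delta1 x a)]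
    have cy : Commute a y := (sub_eq_zero.mp h1).symm
    have cx : Commute a x := (sub_eq_zero.mp h2).symm
    refine hgen a ?_ ?_
    · exact ((cx.smul_right _).exp_right).eq
    · exact ((cy.smul_right _).exp_right).eq
  · rintro ⟨z, rfl⟩
    simp [lap, delta1, delta2, Matrix.smul_mul, Matrix.mul_smul]
end

section
/- Let w ∈ M_n(ℂ) be Hermitian and let δ(a) := wa − aw be the corresponding inner derivation. Let h ∈ M_n(ℂ) be Hermitian and positive semidefinite. Then for all integers p, q ≥ 0, the trace τ((δh) h^p (δh) h^q) is real and satisfies τ((δh) h^p (δh) h^q) ≤ 0. -/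
open Matrix
open scoped ComplexOrder

/-- For an inner derivation `δ(a) = wa − aw` with `w` Hermitian, and `h` Hermitian positive
semidefinite: `τ((δh) hᵖ (δh) h^q) ≤ 0` (real and nonpositive, phrased via the order on `ℂ`). -/
theorem trace_derivation_power_nonpos (n : ℕ) (w h : Matrix (Fin n) (Fin n) ℂ)
    (hw : w.IsHermitian) (hh : h.PosSemidef) (p q : ℕ) :
    ((w * h - h * w) * h ^ p * (w * h - h * w) * h ^ q).trace ≤ 0 := by
  have hherm := hh.1
  set U : Matrix (Fin n) (Fin n) ℂ := (hherm.eigenvectorUnitary : Matrix (Fin n) (Fin n) ℂ) with hUdef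
  have hUU : star U * U = 1 := Unitary.coe_star_mul_self _
  have hUU' : U * star U = 1 := Unitary.coe_mul_star_self _
  set e : Fin n → ℝ := hherm.eigenvalues with hedef
  have he : ∀ i, 0 ≤ e i := fun i => hh.eigenvalues_nonneg i
  set D : Matrix (Fin n) (Fin n) ℂ := diagonal (fun i => (e i : ℂ)) with hDdef
  have hspec : h = U * D * star U := by
    exact hherm.spectral_theorem
  set b : Matrix (Fin n) (Fin n) ℂ := star U * w * U with hbdef
  have hbherm : star b = b := by
    simp only [hbdef, Matrix.star_eq_conjTranspose, Matrix.conjTranspose_mul, Matrix.conjTranspose_conjTranspose, hw.eq, mul_assoc]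
  have hwU : U * b * star U = w := by
    calc U * (star U * w * U) * star U = (U * star U) * w * (U * star U) := by
          simp only [mul_assoc]
        _ = w := by rw [hUU']; simp
  have hcomm : w * h - h * w = U * (b * D - D * b) * star U := by
    rw [hspec, ← hwU]
    simp only [mul_sub, sub_mul, mul_assoc]
    rw [show star U * (U * (D * star U)) = D * star U by
      rw [← mul_assoc, hUU, one_mul]]
    rw [show star U * (U * (b * star U)) = b * star U by
      rw [← mul_assoc, hUU, one_mul]]
  have hpow : ∀ k : ℕ, h ^ k = U * D ^ k * star U := by
    intro k
    induction k with
    | zero => simp [hUU']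
    | succ k ih =>
      rw [pow_succ, ih, hspec, pow_succ]
      calc U * D ^ k * star U * (U * D * star U)
          = U * D ^ k * (star U * U) * D * star U := by simp only [mul_assoc]
        _ = U * (D ^ k * D) * star U := by rw [hUU]; simp only [mul_one, mul_assoc]
  set M : Matrix (Fin n) (Fin n) ℂ := b * D - D * b with hMdef
  have hmain : (w * h - h * w) * h ^ p * (w * h - h * w) * h ^ q
      = U * (M * D ^ p * M * D ^ q) * star U := by
    rw [hcomm, hpow p, hpow q]
    calc U * M * star U * (U * D ^ p * star U) * (U * M * star U) * (U * D ^ q * star U)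
        = U * M * (star U * U) * D ^ p * (star U * U) * M * (star U * U) * D ^ q * star U := by
          simp only [mul_assoc]
      _ = U * (M * D ^ p * M * D ^ q) * star U := by
          rw [hUU]; simp only [mul_one, mul_assoc]
  rw [hmain]
  have htr : (U * (M * D ^ p * M * D ^ q) * star U).trace
      = (M * D ^ p * M * D ^ q).trace := by
    rw [trace_mul_cycle, ← mul_assoc, hUU, one_mul]
  rw [htr]
  have hDp : D ^ p = diagonal (fun i => (e i : ℂ) ^ p) := by
    rw [hDdef, diagonal_pow]; rfl
  have hDq : D ^ q = diagonal (fun i => (e i : ℂ) ^ q) := by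
    rw [hDdef, diagonal_pow]; rfl
  have hM : ∀ i j, M i j = b i j * ((e j : ℂ) - (e i : ℂ)) := by
    intro i j
    simp only [hMdef, hDdef, Matrix.sub_apply, mul_diagonal, diagonal_mul]
    ring
  have hbsym : ∀ i j, b j i = (starRingEnd ℂ) (b i j) := by
    intro i j
    have := congrFun (congrFun hbherm j) i
    simpa [conjTranspose_apply] using this.symm
  rw [hDp, hDq, Matrix.trace]
  apply Finset.sum_nonpos
  intro i _
  rw [diag_apply, mul_diagonal, Matrix.mul_apply]
  have : ∀ j, (M * diagonal fun i => (e i : ℂ) ^ p) i j * M j i ≤ 0 := by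
    intro j
    rw [mul_diagonal, hM, hM, hbsym i j]
    have hz : b i j * (starRingEnd ℂ) (b i j) = (Complex.normSq (b i j) : ℂ) :=
      Complex.mul_conj _
    have key : b i j * ((e j : ℂ) - (e i : ℂ)) * (e j : ℂ) ^ p *
        ((starRingEnd ℂ) (b i j) * ((e i : ℂ) - (e j : ℂ)))
        = ((-(Complex.normSq (b i j) * (e i - e j) ^ 2 * (e j) ^ p) : ℝ) : ℂ) := by
      push_cast
      rw [← hz]
      push_cast
      ring
    rw [key]
    rw [show (0 : ℂ) = ((0 : ℝ) : ℂ) by norm_num, Complex.real_le_real]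
    have : 0 ≤ Complex.normSq (b i j) * (e i - e j) ^ 2 * (e j) ^ p :=
      mul_nonneg (mul_nonneg (Complex.normSq_nonneg _) (sq_nonneg _)) (pow_nonneg (he j) p)
    linarith
  calc (∑ j, (M * diagonal fun i => (e i : ℂ) ^ p) i j * M j i) * (e i : ℂ) ^ q
      ≤ 0 * (e i : ℂ) ^ q := by
        apply mul_le_mul_of_nonneg_right
        · exact Finset.sum_nonpos fun j _ => this j
        · rw [show ((e i : ℂ) ^ q) = (((e i ^ q : ℝ)) : ℂ) by push_cast; ring]
          rw [show (0 : ℂ) = ((0 : ℝ) : ℂ) by norm_num, Complex.real_le_real]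
          exact pow_nonneg (he i) q
    _ = 0 := by rw [zero_mul]
end

section
/- Let w ∈ M_n(ℂ) be Hermitian and let δ(a) := wa − aw be the corresponding inner derivation. Let h ∈ M_n(ℂ) be Hermitian and positive semidefinite. Then τ((δh)·δ(exp(h))) is real and satisfies τ((δh)·δ(exp(h))) ≤ 0. -/
open Matrix
open scoped ComplexOrder

lemma key_trace_le (n : ℕ) (v : Matrix (Fin n) (Fin n) ℂ) (hv : v.IsHermitian)
    (d : Fin n → ℝ) :
    ((v * diagonal (fun i => (d i : ℂ)) - diagonal (fun i => (d i : ℂ)) * v) *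
      (v * diagonal (fun i => (Real.exp (d i) : ℂ)) -
        diagonal (fun i => (Real.exp (d i) : ℂ)) * v)).trace ≤ 0 := by
  have hA : ∀ i j : Fin n, (v * diagonal (fun i => (d i : ℂ)) -
      diagonal (fun i => (d i : ℂ)) * v) i j = v i j * (d j : ℂ) - (d i : ℂ) * v i j := by
    intro i j; simp [Matrix.sub_apply, mul_diagonal, diagonal_mul]
  have hB : ∀ i j : Fin n, (v * diagonal (fun i => (Real.exp (d i) : ℂ)) -
      diagonal (fun i => (Real.exp (d i) : ℂ)) * v) i j
      = v i j * (Real.exp (d j) : ℂ) - (Real.exp (d i) : ℂ) * v i j := by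
    intro i j; simp [Matrix.sub_apply, mul_diagonal, diagonal_mul]
  rw [Matrix.trace]
  simp only [diag_apply, Matrix.mul_apply, hA, hB]
  have key : ∀ i j : Fin n,
      (v i j * (d j : ℂ) - (d i : ℂ) * v i j) *
        (v j i * (Real.exp (d i) : ℂ) - (Real.exp (d j) : ℂ) * v j i)
      = ((Complex.normSq (v i j) * ((d j - d i) * (Real.exp (d i) - Real.exp (d j)))) : ℝ) := by
    intro i j
    have hvji : v j i = starRingEnd ℂ (v i j) := by
      have h0 := congr_fun (congr_fun hv j) i
      rw [Matrix.conjTranspose_apply] at h0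
      exact h0.symm
    rw [hvji, Complex.ofReal_mul, ← Complex.mul_conj]
    push_cast
    ring
  refine Finset.sum_nonpos fun i _ => Finset.sum_nonpos fun j _ => ?_
  rw [key i j, ← Complex.ofReal_zero, Complex.real_le_real]
  have h2 : (0:ℝ) ≤ (d i - d j) * (Real.exp (d i) - Real.exp (d j)) := by
    rcases le_total (d i) (d j) with hd | hd
    · have := Real.exp_le_exp.mpr hd; nlinarith
    · have := Real.exp_le_exp.mpr hd; nlinarith
  nlinarith [Complex.normSq_nonneg (v i j)]

/-- For an inner derivation `δ(a) = wa − aw` with `w` Hermitian, and `h` Hermitian positive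
semidefinite: `τ((δh)·δ(exp h)) ≤ 0` (real and nonpositive, phrased via the order on `ℂ`). -/
theorem trace_derivation_exp_nonpos (n : ℕ) (w h : Matrix (Fin n) (Fin n) ℂ)
    (hw : w.IsHermitian) (hh : h.PosSemidef) :
    ((w * h - h * w) * (w * NormedSpace.exp h - NormedSpace.exp h * w)).trace ≤ 0 := by
  have hH := hh.1
  set U : Matrix (Fin n) (Fin n) ℂ := (hH.eigenvectorUnitary : Matrix (Fin n) (Fin n) ℂ) with hU
  have hUU : U * star U = 1 := (Matrix.mem_unitaryGroup_iff).mp hH.eigenvectorUnitary.2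
  have hUU' : star U * U = 1 := (Matrix.mem_unitaryGroup_iff').mp hH.eigenvectorUnitary.2
  have cancel1 : ∀ X : Matrix (Fin n) (Fin n) ℂ, U * (star U * X) = X := fun X => by
    rw [← mul_assoc, hUU, one_mul]
  have cancel2 : ∀ X : Matrix (Fin n) (Fin n) ℂ, star U * (U * X) = X := fun X => by
    rw [← mul_assoc, hUU', one_mul]
  set d : Fin n → ℝ := hH.eigenvalues with hd
  set D : Matrix (Fin n) (Fin n) ℂ := diagonal (fun i => (d i : ℂ)) with hD
  set E : Matrix (Fin n) (Fin n) ℂ := diagonal (fun i => (Real.exp (d i) : ℂ)) with hE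
  have hspec : h = U * D * star U := hH.spectral_theorem
  have hUunit : IsUnit U := ⟨⟨U, star U, hUU, hUU'⟩, rfl⟩
  have hUinv : U⁻¹ = star U := Matrix.inv_eq_right_inv hUU
  have hexpD : NormedSpace.exp D = E := by
    rw [hD, Matrix.exp_diagonal, hE]
    funext i
    simp [Pi.exp_def, ← Complex.exp_eq_exp_ℂ, Complex.ofReal_exp]
  have hexp : NormedSpace.exp h = U * E * star U := by
    rw [hspec, ← hUinv, Matrix.exp_conj U D hUunit, hexpD, hUinv]
  set v : Matrix (Fin n) (Fin n) ℂ := star U * w * U with hv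
  have hvherm : v.IsHermitian := by
    rw [Matrix.IsHermitian, hv]
    simp only [Matrix.star_eq_conjTranspose, Matrix.conjTranspose_mul,
      Matrix.conjTranspose_conjTranspose, hw.eq]
    rw [mul_assoc]
  have h1 : w * h - h * w = U * (v * D - D * v) * star U := by
    rw [hspec, hv]
    simp only [Matrix.mul_sub, Matrix.sub_mul, mul_assoc, cancel1, cancel2, hUU,
      one_mul, mul_one]
  have h2 : w * NormedSpace.exp h - NormedSpace.exp h * w
      = U * (v * E - E * v) * star U := by
    rw [hexp, hv]
    simp only [Matrix.mul_sub, Matrix.sub_mul, mul_assoc, cancel1, cancel2, hUU,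
      one_mul, mul_one]
  rw [h1, h2]
  have h3 : U * (v * D - D * v) * star U * (U * (v * E - E * v) * star U)
      = U * ((v * D - D * v) * (v * E - E * v)) * star U := by
    simp only [mul_assoc, cancel1, cancel2]
  rw [h3, Matrix.trace_mul_comm, ← mul_assoc, hUU', one_mul]
  exact key_trace_le n v hvherm d
end

section
/- For every Hermitian a ∈ M_n(ℂ), the trace τ(exp(a)·Δ(a)) is real and satisfies τ(exp(a)·Δ(a)) ≥ 0, with equality if and only if a is a scalar multiple of the identity matrix. -/
open Matrix
open scoped ComplexOrder

/- Auxiliary lemmas -/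

lemma aux_nonneg (s t : ℝ) : 0 ≤ (Real.exp s - Real.exp t) * (s - t) := by
  rcases le_total s t with h | h
  · exact mul_nonneg_iff.mpr (Or.inr ⟨sub_nonpos.mpr (Real.exp_le_exp.mpr h),
      sub_nonpos.mpr h⟩)
  · exact mul_nonneg (sub_nonneg.mpr (Real.exp_le_exp.mpr h)) (sub_nonneg.mpr h)

lemma aux_pos {s t : ℝ} (h : s ≠ t) : 0 < (Real.exp s - Real.exp t) * (s - t) := by
  rcases h.lt_or_gt with h | h
  · exact mul_pos_of_neg_of_neg (sub_neg.mpr (Real.exp_lt_exp.mpr h)) (sub_neg.mpr h)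
  · exact mul_pos (sub_pos.mpr (Real.exp_lt_exp.mpr h)) (sub_pos.mpr h)

lemma traceA {n : ℕ} (E B y : Matrix (Fin n) (Fin n) ℂ) :
    (E * (y * B - B * y)).trace = ((E * y - y * E) * B).trace := by
  rw [Matrix.mul_sub, Matrix.sub_mul, Matrix.trace_sub, Matrix.trace_sub,
    ← Matrix.mul_assoc, ← Matrix.mul_assoc, Matrix.trace_mul_cycle E B y]

lemma traceB {n : ℕ} (E B x : Matrix (Fin n) (Fin n) ℂ) :
    (E * (B * x - x * B)).trace = ((x * E - E * x) * B).trace := by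
  rw [Matrix.mul_sub, Matrix.sub_mul, Matrix.trace_sub, Matrix.trace_sub,
    ← Matrix.mul_assoc, ← Matrix.mul_assoc, Matrix.trace_mul_cycle E B x]

lemma trace_mul_entries {n : ℕ} (A B : Matrix (Fin n) (Fin n) ℂ) :
    (A * B).trace = ∑ i, ∑ j, A i j * B j i := by
  simp [Matrix.trace, Matrix.diag, Matrix.mul_apply]

lemma traceC {n : ℕ} (e d : Fin n → ℂ) (m : Matrix (Fin n) (Fin n) ℂ) :
    ((Matrix.diagonal e * m - m * Matrix.diagonal e) *
      (m * Matrix.diagonal d - Matrix.diagonal d * m)).trace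
      = ∑ i, ∑ j, (e i - e j) * (d i - d j) * (m i j * m j i) := by
  rw [trace_mul_entries]
  refine Finset.sum_congr rfl fun i _ => Finset.sum_congr rfl fun j _ => ?_
  simp only [Matrix.sub_apply, Matrix.diagonal_mul, Matrix.mul_diagonal]
  ring

lemma traceC2 {n : ℕ} (e d : Fin n → ℂ) (m : Matrix (Fin n) (Fin n) ℂ) :
    ((m * Matrix.diagonal e - Matrix.diagonal e * m) *
      (Matrix.diagonal d * m - m * Matrix.diagonal d)).trace
      = ∑ i, ∑ j, (e i - e j) * (d i - d j) * (m i j * m j i) := by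
  rw [trace_mul_entries]
  refine Finset.sum_congr rfl fun i _ => Finset.sum_congr rfl fun j _ => ?_
  simp only [Matrix.sub_apply, Matrix.diagonal_mul, Matrix.mul_diagonal]
  ring

lemma conj_mul_conj {n : ℕ} {U : Matrix (Fin n) (Fin n) ℂ} (hU : U * star U = 1)
    (p q : Matrix (Fin n) (Fin n) ℂ) :
    star U * (p * q) * U = star U * p * U * (star U * q * U) := by
  rw [show star U * p * U * (star U * q * U) = star U * (p * (U * star U) * q) * U from by
      noncomm_ring, hU, Matrix.mul_one]

lemma conj_comm {n : ℕ} {U p q : Matrix (Fin n) (Fin n) ℂ} (hU : star U * U = 1)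
    (h : p * q = q * p) :
    (U * p * star U) * (U * q * star U) = (U * q * star U) * (U * p * star U) := by
  have e : ∀ r s : Matrix (Fin n) (Fin n) ℂ,
      (U * r * star U) * (U * s * star U) = U * (r * s) * star U := by
    intro r s
    rw [show U * r * star U * (U * s * star U) = U * (r * (star U * U) * s) * star U from by
        noncomm_ring, hU, Matrix.mul_one]
  rw [e, e, h]

/-- For every Hermitian `a`, `τ(exp(a)·Δa) ≥ 0` (real and nonnegative, phrased via the
order on `ℂ`), with equality if and only if `a` is a scalar multiple of the identity. -/
theorem trace_exp_laplacian_nonneg (n : ℕ) (x y : Matrix (Fin n) (Fin n) ℂ)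
    (hx : x.IsHermitian) (hy : y.IsHermitian) (hgen : GenCond x y)
    (a : Matrix (Fin n) (Fin n) ℂ) (ha : a.IsHermitian) :
    0 ≤ (NormedSpace.exp a * lap x y a).trace ∧
    ((NormedSpace.exp a * lap x y a).trace = 0 ↔
      ∃ z : ℂ, a = z • (1 : Matrix (Fin n) (Fin n) ℂ)) := by
  classical
  set U : Matrix (Fin n) (Fin n) ℂ := (ha.eigenvectorUnitary : Matrix (Fin n) (Fin n) ℂ)
    with hUdef
  set d : Fin n → ℝ := ha.eigenvalues with hddef
  have hU1 : star U * U = 1 := (Matrix.mem_unitaryGroup_iff').mp ha.eigenvectorUnitary.2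
  have hU2 : U * star U = 1 := (Matrix.mem_unitaryGroup_iff).mp ha.eigenvectorUnitary.2
  set dC : Fin n → ℂ := fun i => (d i : ℂ) with hdC
  set D : Matrix (Fin n) (Fin n) ℂ := Matrix.diagonal dC with hDdef
  have hφa : star U * a * U = D := by
    rw [hDdef]
    have h := ha.conjStarAlgAut_star_eigenvectorUnitary
    rw [Unitary.conjStarAlgAut_apply, Unitary.coe_star, star_star] at h
    exact h
  set x' : Matrix (Fin n) (Fin n) ℂ := star U * x * U with hx'def
  set y' : Matrix (Fin n) (Fin n) ℂ := star U * y * U with hy'def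
  have hherm : ∀ m : Matrix (Fin n) (Fin n) ℂ, m.IsHermitian →
      (star U * m * U).IsHermitian := by
    intro m hm
    have h : (star U * m * U)ᴴ = star U * m * U := by
      rw [Matrix.conjTranspose_mul, Matrix.conjTranspose_mul, hm]
      simp [← Matrix.star_eq_conjTranspose, star_star, Matrix.mul_assoc]
    exact h
  have hx' : x'.IsHermitian := hherm x hx
  have hy' : y'.IsHermitian := hherm y hy
  have hUunit : IsUnit U := ⟨⟨U, star U, hU2, hU1⟩, rfl⟩
  have hUinv : U⁻¹ = star U := Matrix.inv_eq_left_inv hU1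
  have hexpD : star U * NormedSpace.exp a * U = NormedSpace.exp D := by
    have h := Matrix.exp_conj' U a hUunit
    rw [hUinv] at h
    rw [← h, hφa]
  have htrφ : ∀ m : Matrix (Fin n) (Fin n) ℂ, (star U * m * U).trace = m.trace := by
    intro m
    rw [Matrix.trace_mul_cycle, hU2, Matrix.one_mul]
  have hφmul : ∀ p q : Matrix (Fin n) (Fin n) ℂ,
      star U * (p * q) * U = star U * p * U * (star U * q * U) := conj_mul_conj hU2
  have hφd1 : ∀ m : Matrix (Fin n) (Fin n) ℂ,
      star U * delta1 y m * U = delta1 y' (star U * m * U) := by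
    intro m
    simp only [delta1, Matrix.mul_sub, Matrix.sub_mul, hφmul, ← hy'def]
  have hφd2 : ∀ m : Matrix (Fin n) (Fin n) ℂ,
      star U * delta2 x m * U = delta2 x' (star U * m * U) := by
    intro m
    simp only [delta2, Matrix.mul_sub, Matrix.sub_mul, hφmul, ← hx'def]
  have hφlap : star U * lap x y a * U = lap x' y' D := by
    simp only [lap, Matrix.mul_add, Matrix.add_mul, hφd1, hφd2, hφa]
  set eC : Fin n → ℂ := fun i => (Real.exp (d i) : ℂ) with heC
  have hexpDdiag : NormedSpace.exp D = Matrix.diagonal eC := by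
    rw [hDdef, Matrix.exp_diagonal]
    have he : NormedSpace.exp dC = eC := funext fun i => (Pi.coe_exp dC i).trans
      ((Complex.ofReal_exp (d i)).trans (congr_fun Complex.exp_eq_exp_ℂ ((d i : ℂ)))).symm
    rw [he]
  set S : ℝ := ∑ i, ∑ j, (Real.exp (d i) - Real.exp (d j)) * (d i - d j) *
      (Complex.normSq (y' i j) + Complex.normSq (x' i j)) with hS
  have htrace : (NormedSpace.exp a * lap x y a).trace = (S : ℂ) := by
    have h1 : (NormedSpace.exp a * lap x y a).trace
        = (NormedSpace.exp D * lap x' y' D).trace := by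
      rw [← htrφ (NormedSpace.exp a * lap x y a), hφmul, hexpD, hφlap]
    rw [h1, hexpDdiag,
      show lap x' y' D = (y' * (y' * D - D * y') - (y' * D - D * y') * y')
        + ((D * x' - x' * D) * x' - x' * (D * x' - x' * D)) from rfl,
      Matrix.mul_add, Matrix.trace_add,
      traceA (Matrix.diagonal eC) (y' * D - D * y') y',
      traceB (Matrix.diagonal eC) (D * x' - x' * D) x', hDdef, traceC, traceC2,
      hS, Complex.ofReal_sum, ← Finset.sum_add_distrib]
    refine Finset.sum_congr rfl fun i _ => ?_
    rw [Complex.ofReal_sum, ← Finset.sum_add_distrib]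
    refine Finset.sum_congr rfl fun j _ => ?_
    have hyv : y' i j * y' j i = (Complex.normSq (y' i j) : ℂ) := by
      rw [← hy'.apply j i, Complex.star_def, Complex.mul_conj]
    have hxv : x' i j * x' j i = (Complex.normSq (x' i j) : ℂ) := by
      rw [← hx'.apply j i, Complex.star_def, Complex.mul_conj]
    rw [hyv, hxv]
    simp only [heC, hdC]
    push_cast
    ring
  have hterm_nonneg : ∀ i j : Fin n,
      0 ≤ (Real.exp (d i) - Real.exp (d j)) * (d i - d j) *
        (Complex.normSq (y' i j) + Complex.normSq (x' i j)) := fun i j =>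
    mul_nonneg (aux_nonneg _ _)
      (add_nonneg (Complex.normSq_nonneg _) (Complex.normSq_nonneg _))
  have hS_nonneg : 0 ≤ S := by
    rw [hS]
    exact Finset.sum_nonneg fun i _ => Finset.sum_nonneg fun j _ => hterm_nonneg i j
  have hlap0 : ∀ z : ℂ, lap x y (z • (1 : Matrix (Fin n) (Fin n) ℂ)) = 0 := by
    intro z
    simp [lap, delta1, delta2, Matrix.mul_smul, Matrix.smul_mul]
  refine ⟨by rw [htrace]; exact Complex.zero_le_real.mpr hS_nonneg, ?_, ?_⟩
  · intro h0
    rw [htrace, Complex.ofReal_eq_zero, hS] at h0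
    have h1 := (Finset.sum_eq_zero_iff_of_nonneg fun i _ =>
      Finset.sum_nonneg fun j _ => hterm_nonneg i j).mp h0
    have hterm0 : ∀ i j : Fin n, (Real.exp (d i) - Real.exp (d j)) * (d i - d j) *
        (Complex.normSq (y' i j) + Complex.normSq (x' i j)) = 0 := fun i j =>
      (Finset.sum_eq_zero_iff_of_nonneg fun j _ => hterm_nonneg i j).mp
        (h1 i (Finset.mem_univ i)) j (Finset.mem_univ j)
    have hzero : ∀ i j : Fin n, d i ≠ d j → y' i j = 0 ∧ x' i j = 0 := by
      intro i j hne
      have hp := aux_pos hne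
      rcases mul_eq_zero.mp (hterm0 i j) with h | h
      · exact absurd h hp.ne'
      · have h2 := (add_eq_zero_iff_of_nonneg (Complex.normSq_nonneg _)
          (Complex.normSq_nonneg _)).mp h
        exact ⟨Complex.normSq_eq_zero.mp h2.1, Complex.normSq_eq_zero.mp h2.2⟩
    have hDy : D * y' = y' * D := by
      rw [hDdef]
      ext i j
      rw [Matrix.diagonal_mul, Matrix.mul_diagonal]
      rcases eq_or_ne (d i) (d j) with h | h
      · simp only [hdC, h, mul_comm]
      · rw [(hzero i j h).1]
        simp
    have hDx : D * x' = x' * D := by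
      rw [hDdef]
      ext i j
      rw [Matrix.diagonal_mul, Matrix.mul_diagonal]
      rcases eq_or_ne (d i) (d j) with h | h
      · simp only [hdC, h, mul_comm]
      · rw [(hzero i j h).2]
        simp
    have hconj : ∀ m : Matrix (Fin n) (Fin n) ℂ, U * (star U * m * U) * star U = m := by
      intro m
      rw [show U * (star U * m * U) * star U = (U * star U) * m * (U * star U) from by
          noncomm_ring, hU2, Matrix.one_mul, Matrix.mul_one]
    have haeq : U * D * star U = a := by rw [← hφa]; exact hconj a
    have hxeq : U * x' * star U = x := hconj x
    have hyeq : U * y' * star U = y := hconj y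
    have haxy : a * x = x * a := by
      rw [← haeq, ← hxeq]
      exact conj_comm hU1 hDx
    have haxy2 : a * y = y * a := by
      rw [← haeq, ← hyeq]
      exact conj_comm hU1 hDy
    have hcx : Commute a (NormedSpace.exp
        ((((2 * Real.pi : ℝ) : ℂ) * Complex.I / (n : ℂ)) • x)) :=
      (Commute.smul_right (haxy : Commute a x) _).exp_right
    have hcy : Commute a (NormedSpace.exp
        ((((2 * Real.pi : ℝ) : ℂ) * Complex.I / (n : ℂ)) • y)) :=
      (Commute.smul_right (haxy2 : Commute a y) _).exp_right
    exact hgen a hcx.eq hcy.eq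
  · rintro ⟨z, rfl⟩
    rw [hlap0 z, Matrix.mul_zero, Matrix.trace_zero]
end

section
/- For every Hermitian a ∈ M_n(ℂ), the trace τ(a·Δ(a)) is real and satisfies τ(a·Δ(a)) ≥ 0, with equality if and only if a is a scalar multiple of the identity matrix. -/
open Matrix
open scoped ComplexOrder

lemma aux_tr_comm {n : ℕ} (a h c : Matrix (Fin n) (Fin n) ℂ) :
    (a * (h * c - c * h)).trace = ((a * h - h * a) * c).trace := by
  rw [mul_sub, sub_mul, Matrix.trace_sub, Matrix.trace_sub]
  congr 1
  · rw [← mul_assoc]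
  · rw [← mul_assoc, Matrix.trace_mul_comm, ← mul_assoc]

lemma aux_tr_sq {n : ℕ} (B : Matrix (Fin n) (Fin n) ℂ) :
    (Bᴴ * B).trace = ((∑ j, ∑ i, Complex.normSq (B i j) : ℝ) : ℂ) := by
  simp only [Matrix.trace, Matrix.diag, Matrix.mul_apply, Matrix.conjTranspose_apply,
    Complex.star_def]
  push_cast
  refine Finset.sum_congr rfl fun j _ => Finset.sum_congr rfl fun i _ => ?_
  exact (Complex.normSq_eq_conj_mul_self).symm

/-- For every Hermitian `a`, `τ(a·Δa) ≥ 0` (real and nonnegative, phrased via the order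
on `ℂ`), with equality if and only if `a` is a scalar multiple of the identity. -/
theorem trace_laplacian_nonneg (n : ℕ) (x y : Matrix (Fin n) (Fin n) ℂ)
    (hx : x.IsHermitian) (hy : y.IsHermitian) (hgen : GenCond x y)
    (a : Matrix (Fin n) (Fin n) ℂ) (ha : a.IsHermitian) :
    0 ≤ (a * lap x y a).trace ∧
    ((a * lap x y a).trace = 0 ↔ ∃ z : ℂ, a = z • (1 : Matrix (Fin n) (Fin n) ℂ)) := by

  set b1 := y * a - a * y with hb1
  set b2 := a * x - x * a with hb2
  have hb1H : b1ᴴ = -b1 := by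
    simp [hb1, Matrix.conjTranspose_sub, Matrix.conjTranspose_mul, hx.eq, hy.eq, ha.eq]
  have hb2H : b2ᴴ = -b2 := by
    simp [hb2, Matrix.conjTranspose_sub, Matrix.conjTranspose_mul, hx.eq, hy.eq, ha.eq]
  have key : (a * lap x y a).trace = (b1ᴴ * b1).trace + (b2ᴴ * b2).trace := by
    have h1 : (a * (y * b1 - b1 * y)).trace = (b1ᴴ * b1).trace := by
      rw [aux_tr_comm, hb1H]
      have : a * y - y * a = -b1 := by rw [hb1]; exact (neg_sub _ _).symm
      rw [this]
    have h2 : (a * (b2 * x - x * b2)).trace = (b2ᴴ * b2).trace := by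
      have e : b2 * x - x * b2 = -(x * b2 - b2 * x) := (neg_sub _ _).symm
      rw [e, mul_neg, Matrix.trace_neg, aux_tr_comm, ← hb2, hb2H, Matrix.neg_mul, Matrix.trace_neg]
    have e : a * lap x y a = a * (y * b1 - b1 * y) + a * (b2 * x - x * b2) := by
      simp only [lap, delta1, delta2, hb1, hb2, mul_add]
    rw [e, Matrix.trace_add, h1, h2]
  set s1 : ℝ := ∑ j, ∑ i, Complex.normSq (b1 i j) with hs1
  set s2 : ℝ := ∑ j, ∑ i, Complex.normSq (b2 i j) with hs2
  have hs1n : 0 ≤ s1 := Finset.sum_nonneg fun j _ => Finset.sum_nonneg fun i _ =>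
    Complex.normSq_nonneg _
  have hs2n : 0 ≤ s2 := Finset.sum_nonneg fun j _ => Finset.sum_nonneg fun i _ =>
    Complex.normSq_nonneg _
  have keyR : (a * lap x y a).trace = ((s1 + s2 : ℝ) : ℂ) := by
    rw [key, aux_tr_sq, aux_tr_sq, ← hs1, ← hs2]; push_cast; ring
  constructor
  · rw [keyR]
    exact_mod_cast Complex.zero_le_real.mpr (add_nonneg hs1n hs2n)
  · constructor
    · intro h0
      rw [keyR] at h0
      have hsum : s1 + s2 = 0 := by exact_mod_cast h0
      have h1 : s1 = 0 := le_antisymm (by linarith) hs1n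
      have h2 : s2 = 0 := le_antisymm (by linarith) hs2n
      have hb1z : b1 = 0 := by
        ext i j
        have := (Finset.sum_eq_zero_iff_of_nonneg fun j _ =>
          Finset.sum_nonneg fun i _ => Complex.normSq_nonneg _).mp h1 j (Finset.mem_univ j)
        have := (Finset.sum_eq_zero_iff_of_nonneg fun i _ =>
          Complex.normSq_nonneg _).mp this i (Finset.mem_univ i)
        simpa [Complex.normSq_eq_zero] using this
      have hb2z : b2 = 0 := by
        ext i j
        have := (Finset.sum_eq_zero_iff_of_nonneg fun j _ =>
          Finset.sum_nonneg fun i _ => Complex.normSq_nonneg _).mp h2 j (Finset.mem_univ j)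
        have := (Finset.sum_eq_zero_iff_of_nonneg fun i _ =>
          Complex.normSq_nonneg _).mp this i (Finset.mem_univ i)
        simpa [Complex.normSq_eq_zero] using this
      have hcy : Commute a y := by
        have : y * a - a * y = 0 := hb1z
        exact (sub_eq_zero.mp this).symm
      have hcx : Commute a x := sub_eq_zero.mp hb2z
      have hcex : Commute a (NormedSpace.exp
          ((((2 * Real.pi : ℝ) : ℂ) * Complex.I / (n : ℂ)) • x)) :=
        (hcx.smul_right _).exp_right
      have hcey : Commute a (NormedSpace.exp
          ((((2 * Real.pi : ℝ) : ℂ) * Complex.I / (n : ℂ)) • y)) :=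
        (hcy.smul_right _).exp_right
      exact hgen a hcex hcey
    · rintro ⟨z, rfl⟩
      have e1 : b1 = 0 := by simp [hb1, Matrix.smul_mul, Matrix.mul_smul]
      have e2 : b2 = 0 := by simp [hb2, Matrix.smul_mul, Matrix.mul_smul]
      rw [key, e1, e2]
      simp
end

section
/- Let I ⊆ ℝ be an open interval and let l : I → M_n(ℂ) be a continuously differentiable map whose values are Hermitian matrices. Then the function t ↦ τ(exp(l(t))) is differentiable on I and its derivative satisfies d/dt τ(exp(l(t))) = τ(exp(l(t))·l′(t)). -/
open Matrix Metric Set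

section Aux

attribute [local instance] Matrix.linftyOpNormedAddCommGroup Matrix.linftyOpNormedRing
  Matrix.linftyOpNormedSpace Matrix.linftyOpNormedAlgebra

namespace TraceExpAux

variable {n : ℕ}

/-- The trace as a real-linear continuous map. -/
noncomputable def tCLM (n : ℕ) : Matrix (Fin n) (Fin n) ℂ →L[ℝ] ℂ :=
  LinearMap.toContinuousLinearMap ((Matrix.traceLinearMap (Fin n) ℂ ℂ).restrictScalars ℝ)

theorem tCLM_apply (A : Matrix (Fin n) (Fin n) ℂ) : tCLM n A = A.trace := rfl

/-- `A ↦ (A * B).trace` as a real-linear continuous map. -/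
noncomputable def mulTraceCLM (n : ℕ) (B : Matrix (Fin n) (Fin n) ℂ) :
    Matrix (Fin n) (Fin n) ℂ →L[ℝ] ℂ :=
  LinearMap.toContinuousLinearMap
    { toFun := fun A => (A * B).trace
      map_add' := fun x y => by simp [Matrix.add_mul]
      map_smul' := fun c x => by simp [Matrix.smul_mul] }

theorem mulTraceCLM_apply (B A : Matrix (Fin n) (Fin n) ℂ) :
    mulTraceCLM n B A = (A * B).trace := rfl

/-- Formal derivative of `A ^ k`. -/
noncomputable def D (A A' : Matrix (Fin n) (Fin n) ℂ) : ℕ → Matrix (Fin n) (Fin n) ℂ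
  | 0 => 0
  | (k+1) => A' * A ^ k + A * D A A' k

theorem trace_D_aux (A A' : Matrix (Fin n) (Fin n) ℂ) (k m : ℕ) :
    (A ^ m * D A A' (k+1)).trace = (k+1 : ℂ) * (A ^ (m + k) * A').trace := by
  induction k generalizing m with
  | zero => simp [D]
  | succ k ih =>
    have h1 : (A ^ m * (A' * A ^ (k+1))).trace = (A ^ (m + (k+1)) * A').trace := by
      rw [← mul_assoc, Matrix.trace_mul_comm, ← mul_assoc, ← pow_add, add_comm (k+1) m]
    calc (A ^ m * D A A' (k+2)).trace
        = (A ^ m * (A' * A ^ (k+1))).trace + (A ^ (m+1) * D A A' (k+1)).trace := by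
          simp [D, Matrix.mul_add, pow_succ, mul_assoc]
      _ = (A ^ (m + (k+1)) * A').trace + (k+1 : ℂ) * (A ^ ((m+1) + k) * A').trace := by
          rw [h1, ih]
      _ = ((k+1 : ℕ) + 1 : ℂ) * (A ^ (m + (k+1)) * A').trace := by
          have h2 : (m+1) + k = m + (k+1) := by omega
          rw [h2]; push_cast; ring_nf

theorem trace_D (A A' : Matrix (Fin n) (Fin n) ℂ) (k : ℕ) :
    (D A A' (k+1)).trace = (k+1 : ℂ) * (A ^ k * A').trace := by
  simpa using trace_D_aux A A' k 0

theorem hasDerivAt_matrix {l l' : ℝ → Matrix (Fin n) (Fin n) ℂ} {t : ℝ}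
    (h : ∀ i j, HasDerivAt (fun s => l s i j) (l' t i j) t) :
    HasDerivAt l (l' t) t := by
  have key : ∀ (f : ℝ → Matrix (Fin n) (Fin n) ℂ) (s : ℝ),
      f s = ∑ i : Fin n, ∑ j : Fin n, f s i j • Matrix.single i j (1:ℂ) := by
    intro f s
    conv_lhs => rw [matrix_eq_sum_single (f s)]
    simp [Matrix.smul_single]
  have : HasDerivAt (fun s => ∑ i : Fin n, ∑ j : Fin n, l s i j • Matrix.single i j (1:ℂ))
      (∑ i : Fin n, ∑ j : Fin n, l' t i j • Matrix.single i j (1:ℂ)) t :=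
    HasDerivAt.fun_sum fun i _ => HasDerivAt.fun_sum fun j _ => (h i j).smul_const _
  rw [show l = fun s => ∑ i : Fin n, ∑ j : Fin n, l s i j • Matrix.single i j (1:ℂ) from
    funext (key l), key l' t]
  exact this

theorem hasDerivAt_pow_matrix {l : ℝ → Matrix (Fin n) (Fin n) ℂ} {A' : Matrix (Fin n) (Fin n) ℂ}
    {t : ℝ} (h : HasDerivAt l A' t) (k : ℕ) :
    HasDerivAt (fun s => l s ^ k) (D (l t) A' k) t := by
  induction k with
  | zero => simp only [D, pow_zero]; exact hasDerivAt_const t (1 : Matrix (Fin n) (Fin n) ℂ)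
  | succ k ih =>
    have := h.fun_mul ih
    simp only [D, pow_succ']; exact this

set_option synthInstance.maxHeartbeats 1000000 in
theorem norm_one_le : ‖(1 : Matrix (Fin n) (Fin n) ℂ)‖ ≤ 1 := by
  rcases Nat.eq_zero_or_pos n with h | h
  · subst h
    rw [Subsingleton.elim (1 : Matrix (Fin 0) (Fin 0) ℂ) 0, norm_zero]
    norm_num
  · haveI : Nonempty (Fin n) := Fin.pos_iff_nonempty.mp h
    haveI : NormOneClass (Matrix (Fin n) (Fin n) ℂ) := Matrix.linfty_opNormOneClass
    exact norm_one.le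

theorem norm_pow_le {A : Matrix (Fin n) (Fin n) ℂ} {M : ℝ} (hA : ‖A‖ ≤ M) (hM0 : 0 ≤ M) :
    ∀ k, ‖A ^ k‖ ≤ M ^ k
  | 0 => by rw [pow_zero, pow_zero]; exact norm_one_le
  | (k+1) => by
    calc ‖A ^ (k+1)‖ = ‖A * A ^ k‖ := by rw [pow_succ']
      _ ≤ ‖A‖ * ‖A ^ k‖ := norm_mul_le _ _
      _ ≤ M * M ^ k := mul_le_mul hA (norm_pow_le hA hM0 k) (norm_nonneg _) hM0
      _ = M ^ (k+1) := (pow_succ' M k).symm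

theorem main (n : ℕ) (I : Set ℝ) (hIo : IsOpen I)
    (l l' : ℝ → Matrix (Fin n) (Fin n) ℂ)
    (hderiv : ∀ t ∈ I, ∀ i j, HasDerivAt (fun s => l s i j) (l' t i j) t)
    (hcont : ContinuousOn l' I) :
    ∀ t ∈ I, HasDerivAt (fun s => (NormedSpace.exp (l s)).trace)
      ((NormedSpace.exp (l t) * l' t).trace) t := by
  intro t ht
  have hl : ∀ y ∈ I, HasDerivAt l (l' y) y := fun y hy => hasDerivAt_matrix (hderiv y hy)
  obtain ⟨ε, hε, hball⟩ := Metric.isOpen_iff.mp hIo t ht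
  set K : Set ℝ := Metric.closedBall t (ε/2) with hK
  have hKI : K ⊆ I := fun y hy => hball (lt_of_le_of_lt (mem_closedBall.mp hy) (by linarith))
  have hKc : IsCompact K := isCompact_closedBall _ _
  obtain ⟨M0, hM0⟩ := hKc.exists_bound_of_continuousOn
    (fun y hy => ((hl y (hKI hy)).continuousAt).continuousWithinAt)
  obtain ⟨M1, hM1⟩ := hKc.exists_bound_of_continuousOn (hcont.mono hKI)
  set M : ℝ := max M0 0 with hMdef
  set M' : ℝ := max M1 0 with hM'def
  have hMnn : 0 ≤ M := le_max_right _ _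
  have hM'nn : 0 ≤ M' := le_max_right _ _
  have hMb : ∀ y ∈ K, ‖l y‖ ≤ M := fun y hy => (hM0 y hy).trans (le_max_left _ _)
  have hM'b : ∀ y ∈ K, ‖l' y‖ ≤ M' := fun y hy => (hM1 y hy).trans (le_max_left _ _)
  set C : ℝ := (tCLM n).opNorm with hC
  -- the series and its derivative series
  set g : ℕ → ℝ → ℂ := fun k y => ((k.factorial : ℂ))⁻¹ • (l y ^ k).trace with hg_def
  set g' : ℕ → ℝ → ℂ := fun k y =>
    Nat.rec 0 (fun k _ => ((k.factorial : ℂ))⁻¹ • ((l y ^ k) * l' y).trace) k with hg'_def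
  set u : ℕ → ℝ := fun k =>
    Nat.rec 0 (fun k _ => C * M' * (M ^ k / k.factorial)) k with hu_def
  have hu : Summable u := by
    have h1 : Summable (fun k => u (k+1)) := by
      simpa [hu_def, mul_assoc] using (Real.summable_pow_div_factorial M).mul_left (C * M')
    exact (summable_nat_add_iff 1).mp h1
  have hsball : Metric.ball t (ε/2) ⊆ K := Metric.ball_subset_closedBall
  have htball : t ∈ Metric.ball t (ε/2) := mem_ball_self (by linarith)
  -- derivatives of the terms
  have hfact : ∀ k : ℕ, (((k+1).factorial : ℂ))⁻¹ * ((k : ℂ) + 1) = ((k.factorial : ℂ))⁻¹ := by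
    intro k
    have h1 : (((k+1).factorial : ℂ)) = ((k : ℂ) + 1) * (k.factorial : ℂ) := by
      rw [Nat.factorial_succ]; push_cast; ring
    have h2 : ((k : ℂ) + 1) ≠ 0 := Nat.cast_add_one_ne_zero k
    rw [h1, mul_inv, mul_comm ((k:ℂ)+1)⁻¹, mul_assoc, inv_mul_cancel₀ h2, mul_one]
  have hg : ∀ (k : ℕ), ∀ y ∈ Metric.ball t (ε/2), HasDerivAt (g k) (g' k y) y := by
    intro k y hy
    have hyI : y ∈ I := hKI (hsball hy)
    have hpow := hasDerivAt_pow_matrix (hl y hyI) k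
    have htr : HasDerivAt (fun s => (l s ^ k).trace) ((D (l y) (l' y) k).trace) y := by
      have := (tCLM n).hasFDerivAt.comp_hasDerivAt y hpow
      simp only [Function.comp_def] at this; exact this
    have h2 : HasDerivAt (g k) (((k.factorial : ℂ))⁻¹ • (D (l y) (l' y) k).trace) y :=
      htr.fun_const_smul _
    match k with
    | 0 => simpa [hg'_def, D] using h2
    | (k+1) =>
      have h3 : (((k+1).factorial : ℂ))⁻¹ • (D (l y) (l' y) (k+1)).trace
          = ((k.factorial : ℂ))⁻¹ • ((l y ^ k) * l' y).trace := by
        rw [trace_D, smul_eq_mul, smul_eq_mul, ← mul_assoc]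
        congr 1
        push_cast
        exact hfact k
      rw [show g' (k+1) y = ((k.factorial : ℂ))⁻¹ • ((l y ^ k) * l' y).trace from rfl, ← h3]
      exact h2
  -- the bound
  have hgbound : ∀ (k : ℕ), ∀ y ∈ Metric.ball t (ε/2), ‖g' k y‖ ≤ u k := by
    intro k y hy
    have hyK : y ∈ K := hsball hy
    match k with
    | 0 => simp [hg'_def, hu_def]
    | (k+1) =>
      have h1 : ‖((l y ^ k) * l' y).trace‖ ≤ C * (M ^ k * M') := by
        have h2 : ‖tCLM n ((l y ^ k) * l' y)‖ ≤ C * ‖(l y ^ k) * l' y‖ :=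
          (tCLM n).le_opNorm _
        rw [tCLM_apply] at h2
        refine h2.trans (mul_le_mul_of_nonneg_left ?_ (tCLM n).opNorm_nonneg)
        calc ‖(l y ^ k) * l' y‖ ≤ ‖l y ^ k‖ * ‖l' y‖ := norm_mul_le _ _
          _ ≤ M ^ k * M' := mul_le_mul (norm_pow_le (hMb y hyK) hMnn k) (hM'b y hyK)
              (norm_nonneg _) (pow_nonneg hMnn k)
      have h3 : ‖g' (k+1) y‖ = ((k.factorial : ℝ))⁻¹ * ‖((l y ^ k) * l' y).trace‖ := by
        rw [show g' (k+1) y = ((k.factorial : ℂ))⁻¹ • ((l y ^ k) * l' y).trace from rfl,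
          norm_smul, norm_inv]
        norm_num
      rw [h3, show u (k+1) = C * M' * (M ^ k / k.factorial) from rfl]
      have hfpos : (0:ℝ) < (k.factorial : ℝ) := by exact_mod_cast k.factorial_pos
      rw [div_eq_mul_inv]
      calc ((k.factorial : ℝ))⁻¹ * ‖((l y ^ k) * l' y).trace‖
          ≤ ((k.factorial : ℝ))⁻¹ * (C * (M ^ k * M')) := by
            exact mul_le_mul_of_nonneg_left h1 (by positivity)
        _ = C * M' * (M ^ k * ((k.factorial : ℝ))⁻¹) := by ring
  -- summability of the exponential series
  have hsum : ∀ y : ℝ, Summable fun k : ℕ => ((k.factorial : ℂ))⁻¹ • (l y ^ k) := fun y =>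
    NormedSpace.expSeries_summable' (l y)
  have hg0 : Summable fun k => g k t := by
    have h1 := (hsum t).map (tCLM n) (tCLM n).continuous
    simpa [hg_def, Function.comp_def, tCLM_apply, Matrix.trace_smul] using h1
  -- apply the series differentiation theorem
  have main := hasDerivAt_tsum_of_isPreconnected hu Metric.isOpen_ball
    (convex_ball t (ε/2)).isPreconnected hg hgbound htball hg0 htball
  -- identify the function
  have hfun : (fun s : ℝ => (NormedSpace.exp (l s)).trace) = fun z => ∑' k, g k z := by
    funext z
    rw [NormedSpace.exp_eq_tsum ℂ]
    have h1 := (tCLM n).map_tsum (hsum z)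
    simpa [hg_def, Function.comp_def, tCLM_apply, Matrix.trace_smul] using h1
  -- identify the derivative
  have hder : (NormedSpace.exp (l t) * l' t).trace = ∑' k, g' k t := by
    have h2 : (NormedSpace.exp (l t) * l' t).trace
        = ∑' k : ℕ, ((k.factorial : ℂ))⁻¹ • ((l t ^ k) * l' t).trace := by
      rw [NormedSpace.exp_eq_tsum ℂ]
      have h1 := (mulTraceCLM n (l' t)).map_tsum (hsum t)
      simpa [mulTraceCLM_apply, Function.comp, Matrix.smul_mul, Matrix.trace_smul] using h1
    have hsumg' : Summable (fun k => g' k t) :=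
      Summable.of_norm_bounded hu (fun k => hgbound k t htball)
    rw [Summable.tsum_eq_zero_add hsumg']
    simp only [show g' 0 t = 0 from rfl, zero_add]
    exact h2
  rw [hfun, hder]
  exact main

end TraceExpAux

end Aux

/-- If `l` is a continuously differentiable Hermitian-matrix-valued map on an open interval
`I`, then `t ↦ τ(exp(l(t)))` is differentiable on `I` with derivative `τ(exp(l(t))·l′(t))`. -/
theorem hasDerivAt_trace_exp (n : ℕ) (I : Set ℝ) (hIo : IsOpen I) (hIc : I.OrdConnected)
    (l l' : ℝ → Matrix (Fin n) (Fin n) ℂ)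
    (hherm : ∀ t ∈ I, (l t).IsHermitian)
    (hderiv : ∀ t ∈ I, ∀ i j, HasDerivAt (fun s => l s i j) (l' t i j) t)
    (hcont : ContinuousOn l' I) :
    ∀ t ∈ I, HasDerivAt (fun s => (NormedSpace.exp (l s)).trace)
      ((NormedSpace.exp (l t) * l' t).trace) t :=
  TraceExpAux.main n I hIo l l' hderiv hcont
end

section
/- Let c : [t₀, ∞) → M_n(ℂ) be a differentiable map with c(t) positive definite for all t ≥ t₀, satisfying the noncommutative Ricci flow equation c′(t) = −Δ(log c(t)), with initial value c₀ := c(t₀). Then c(t) converges (in any norm on M_n(ℂ)) as t → ∞ to the flat metric c_∞·1, where c_∞ := τ(c₀)/n. -/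
open Matrix
open scoped ComplexOrder

namespace RicciAux

variable {n : ℕ}

/-- squared Frobenius norm -/
noncomputable def q (a : Matrix (Fin n) (Fin n) ℂ) : ℝ :=
  ∑ i, ∑ j, Complex.normSq (a i j)

lemma q_nonneg (a : Matrix (Fin n) (Fin n) ℂ) : 0 ≤ q a :=
  Finset.sum_nonneg fun _ _ => Finset.sum_nonneg fun _ _ => Complex.normSq_nonneg _

lemma entry_le_q (a : Matrix (Fin n) (Fin n) ℂ) (i j : Fin n) :
    Complex.normSq (a i j) ≤ q a := by
  have h1 : Complex.normSq (a i j) ≤ ∑ j', Complex.normSq (a i j') :=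
    Finset.single_le_sum (fun _ _ => Complex.normSq_nonneg _) (Finset.mem_univ j)
  exact h1.trans (Finset.single_le_sum (f := fun i' => ∑ j', Complex.normSq (a i' j'))
    (fun _ _ => Finset.sum_nonneg fun _ _ => Complex.normSq_nonneg _) (Finset.mem_univ i))

lemma q_eq_zero_iff (a : Matrix (Fin n) (Fin n) ℂ) : q a = 0 ↔ a = 0 := by
  constructor
  · intro h
    ext i j
    have h2 := entry_le_q a i j
    rw [h] at h2
    have := Complex.normSq_nonneg (a i j)
    have : Complex.normSq (a i j) = 0 := le_antisymm h2 this
    simpa [Complex.normSq_eq_zero] using this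
  · rintro rfl; simp [q]

lemma q_neg (a : Matrix (Fin n) (Fin n) ℂ) : q (-a) = q a := by
  simp [q]

lemma q_smul_real (s : ℝ) (a : Matrix (Fin n) (Fin n) ℂ) : q (s • a) = s ^ 2 * q a := by
  simp only [q, Finset.mul_sum]
  refine Finset.sum_congr rfl fun i _ => Finset.sum_congr rfl fun j _ => ?_
  have : (s • a) i j = (s : ℂ) * a i j := by
    simp [Matrix.smul_apply, Complex.real_smul]
  rw [this, Complex.normSq_mul, Complex.normSq_ofReal]
  ring

lemma trace_conjTranspose_mul (A B : Matrix (Fin n) (Fin n) ℂ) :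
    (Aᴴ * B).trace = ∑ i, ∑ j, (starRingEnd ℂ) (A i j) * B i j := by
  simp only [Matrix.trace, Matrix.diag, Matrix.mul_apply, Matrix.conjTranspose_apply]
  rw [Finset.sum_comm]
  rfl

lemma trace_conjTranspose_mul_self (A : Matrix (Fin n) (Fin n) ℂ) :
    (Aᴴ * A).trace = (q A : ℂ) := by
  rw [trace_conjTranspose_mul]
  push_cast [q]
  exact Finset.sum_congr rfl fun i _ => Finset.sum_congr rfl fun j _ => by
    rw [Complex.normSq_eq_conj_mul_self]

lemma q_unitary_conj (U A : Matrix (Fin n) (Fin n) ℂ)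
    (hU : star U * U = 1) (hU' : U * star U = 1) :
    q (U * A * star U) = q A := by
  have hmain : ((U * A * star U)ᴴ * (U * A * star U)).trace = (Aᴴ * A).trace := by
    have : (U * A * star U)ᴴ = U * Aᴴ * star U := by
      simp only [Matrix.star_eq_conjTranspose, Matrix.conjTranspose_mul,
        Matrix.conjTranspose_conjTranspose]
      rw [Matrix.mul_assoc]
    rw [this]
    have : U * Aᴴ * star U * (U * A * star U) = U * (Aᴴ * A) * star U := by
      calc U * Aᴴ * star U * (U * A * star U)
          = U * Aᴴ * (star U * U) * (A * star U) := by
            simp only [Matrix.mul_assoc]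
        _ = U * (Aᴴ * A) * star U := by rw [hU]; simp only [Matrix.mul_assoc, Matrix.mul_one,
            Matrix.one_mul]
    rw [this, Matrix.trace_mul_cycle, ← Matrix.mul_assoc, hU, Matrix.one_mul]
  have h1 := trace_conjTranspose_mul_self (U * A * star U)
  have h2 := trace_conjTranspose_mul_self A
  rw [h1, h2] at hmain
  exact_mod_cast hmain

lemma scalar_log_ineq {a b M : ℝ} (ha : 0 < a) (hb : 0 < b) (haM : a ≤ M) (hbM : b ≤ M) :
    (a - b) ^ 2 ≤ M * ((a - b) * (Real.log a - Real.log b)) := by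
  rcases le_total b a with hba | hab
  · have hlog : (a - b) / a ≤ Real.log a - Real.log b := by
      have h := Real.log_le_sub_one_of_pos (x := b / a) (by positivity)
      rw [Real.log_div hb.ne' ha.ne'] at h
      have : b / a - 1 = -((a - b) / a) := by field_simp; ring
      linarith
    have h1 : (a - b) * ((a - b) / a) ≤ (a - b) * (Real.log a - Real.log b) :=
      mul_le_mul_of_nonneg_left hlog (by linarith)
    have h2 : (a - b) ^ 2 ≤ M * ((a - b) * ((a - b) / a)) := by
      have : (a - b) * ((a - b) / a) = (a - b) ^ 2 / a := by ring
      rw [this]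
      have : (a - b) ^ 2 / a * a ≤ (a - b) ^ 2 / a * M :=
        mul_le_mul_of_nonneg_left haM (by positivity)
      calc (a - b) ^ 2 = (a - b) ^ 2 / a * a := by field_simp
        _ ≤ (a - b) ^ 2 / a * M := this
        _ = M * ((a - b) ^ 2 / a) := by ring
    calc (a - b) ^ 2 ≤ M * ((a - b) * ((a - b) / a)) := h2
      _ ≤ M * ((a - b) * (Real.log a - Real.log b)) :=
          mul_le_mul_of_nonneg_left h1 (by linarith)
  · have key : (b - a) ^ 2 ≤ M * ((b - a) * (Real.log b - Real.log a)) := by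
      have hlog : (b - a) / b ≤ Real.log b - Real.log a := by
        have h := Real.log_le_sub_one_of_pos (x := a / b) (by positivity)
        rw [Real.log_div ha.ne' hb.ne'] at h
        have : a / b - 1 = -((b - a) / b) := by field_simp; ring
        linarith
      have h1 : (b - a) * ((b - a) / b) ≤ (b - a) * (Real.log b - Real.log a) :=
        mul_le_mul_of_nonneg_left hlog (by linarith)
      have h2 : (b - a) ^ 2 ≤ M * ((b - a) * ((b - a) / b)) := by
        have heq : (b - a) * ((b - a) / b) = (b - a) ^ 2 / b := by ring
        rw [heq]
        have : (b - a) ^ 2 / b * b ≤ (b - a) ^ 2 / b * M :=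
          mul_le_mul_of_nonneg_left hbM (by positivity)
        calc (b - a) ^ 2 = (b - a) ^ 2 / b * b := by field_simp
          _ ≤ (b - a) ^ 2 / b * M := this
          _ = M * ((b - a) ^ 2 / b) := by ring
      calc (b - a) ^ 2 ≤ M * ((b - a) * ((b - a) / b)) := h2
        _ ≤ M * ((b - a) * (Real.log b - Real.log a)) :=
            mul_le_mul_of_nonneg_left h1 (by linarith)
    have e1 : (a - b) ^ 2 = (b - a) ^ 2 := by ring
    have e2 : (a - b) * (Real.log a - Real.log b) = (b - a) * (Real.log b - Real.log a) := by ring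
    rw [e1, e2]; exact key

lemma scalar_log_nonneg {a b : ℝ} (ha : 0 < a) (hb : 0 < b) :
    0 ≤ (a - b) * (Real.log a - Real.log b) := by
  rcases le_total b a with h | h
  · have := Real.log_le_log hb h
    nlinarith
  · have := Real.log_le_log ha h
    nlinarith


lemma comm_diag_apply (b : Matrix (Fin n) (Fin n) ℂ) (f : Fin n → ℂ) (i j : Fin n) :
    (b * Matrix.diagonal f - Matrix.diagonal f * b) i j = b i j * (f j - f i) := by
  simp [Matrix.mul_diagonal, Matrix.diagonal_mul, Matrix.sub_apply]
  ring

lemma trace_comm_diag_pairing (b : Matrix (Fin n) (Fin n) ℂ) (f g : Fin n → ℝ) :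
    ((b * Matrix.diagonal (fun i => (f i : ℂ)) - Matrix.diagonal (fun i => (f i : ℂ)) * b)ᴴ *
      (b * Matrix.diagonal (fun i => (g i : ℂ)) - Matrix.diagonal (fun i => (g i : ℂ)) * b)).trace
    = ((∑ i, ∑ j, Complex.normSq (b i j) * ((f j - f i) * (g j - g i)) : ℝ) : ℂ) := by
  rw [trace_conjTranspose_mul]
  push_cast
  refine Finset.sum_congr rfl fun i _ => Finset.sum_congr rfl fun j _ => ?_
  rw [comm_diag_apply, comm_diag_apply]
  rw [_root_.map_mul]
  have hconj : (starRingEnd ℂ) ((f j : ℂ) - (f i : ℂ)) = (f j : ℂ) - (f i : ℂ) := by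
    rw [map_sub, Complex.conj_ofReal, Complex.conj_ofReal]
  rw [hconj]
  have hb : ((Complex.normSq (b i j) : ℝ) : ℂ) = (starRingEnd ℂ) (b i j) * b i j :=
    Complex.normSq_eq_conj_mul_self
  rw [hb]
  ring

lemma q_comm_diag (b : Matrix (Fin n) (Fin n) ℂ) (f : Fin n → ℝ) :
    q (b * Matrix.diagonal (fun i => (f i : ℂ)) - Matrix.diagonal (fun i => (f i : ℂ)) * b)
    = ∑ i, ∑ j, Complex.normSq (b i j) * (f j - f i) ^ 2 := by
  unfold q
  refine Finset.sum_congr rfl fun i _ => Finset.sum_congr rfl fun j _ => ?_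
  rw [comm_diag_apply, Complex.normSq_mul]
  have : ((f j : ℂ) - (f i : ℂ)) = ((f j - f i : ℝ) : ℂ) := by push_cast; ring
  rw [this, Complex.normSq_ofReal]
  ring

lemma matLog_eq {a : Matrix (Fin n) (Fin n) ℂ} (h : a.IsHermitian) :
    matLog a = (h.eigenvectorUnitary : Matrix (Fin n) (Fin n) ℂ) *
      Matrix.diagonal (fun i => ((Real.log (h.eigenvalues i) : ℝ) : ℂ)) *
      (star (h.eigenvectorUnitary : Matrix (Fin n) (Fin n) ℂ)) := by
  rw [matLog, dif_pos h]

lemma spec_key {a : Matrix (Fin n) (Fin n) ℂ} (ha : a.PosDef)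
    (w : Matrix (Fin n) (Fin n) ℂ) (M : ℝ)
    (hM : ∀ i, ha.1.eigenvalues i ≤ M) :
    0 ≤ ((w * a - a * w)ᴴ * (w * matLog a - matLog a * w)).trace.re ∧
    q (w * a - a * w) ≤ M * ((w * a - a * w)ᴴ * (w * matLog a - matLog a * w)).trace.re := by
  have h : a.IsHermitian := ha.1
  set U : Matrix (Fin n) (Fin n) ℂ := (h.eigenvectorUnitary : Matrix (Fin n) (Fin n) ℂ) with hUdef
  have hU : star U * U = 1 := (Matrix.mem_unitaryGroup_iff').mp h.eigenvectorUnitary.2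
  have hU' : U * star U = 1 := (Matrix.mem_unitaryGroup_iff).mp h.eigenvectorUnitary.2
  set f : Fin n → ℝ := h.eigenvalues with hfdef
  set g : Fin n → ℝ := fun i => Real.log (h.eigenvalues i) with hgdef
  set D : Matrix (Fin n) (Fin n) ℂ := Matrix.diagonal (fun i => ((f i : ℝ) : ℂ)) with hDdef
  set E : Matrix (Fin n) (Fin n) ℂ := Matrix.diagonal (fun i => ((g i : ℝ) : ℂ)) with hEdef
  have hc : a = U * D * star U := by
    have := h.spectral_theorem
    exact this
  have hL : matLog a = U * E * star U := matLog_eq h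
  set b : Matrix (Fin n) (Fin n) ℂ := star U * w * U with hbdef
  have hw : w = U * b * star U := by
    rw [hbdef]
    calc w = (U * star U) * w * (U * star U) := by rw [hU']; simp
      _ = U * (star U * w * U) * star U := by simp only [Matrix.mul_assoc]
  have hA : w * a - a * w = U * (b * D - D * b) * star U := by
    rw [hc, hw]
    have e1 : U * b * star U * (U * D * star U) = U * (b * D) * star U := by
      calc U * b * star U * (U * D * star U) = U * b * (star U * U) * (D * star U) := by
            simp only [Matrix.mul_assoc]
        _ = U * (b * D) * star U := by rw [hU]; simp only [Matrix.mul_assoc, Matrix.one_mul,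
            Matrix.mul_one]
    have e2 : U * D * star U * (U * b * star U) = U * (D * b) * star U := by
      calc U * D * star U * (U * b * star U) = U * D * (star U * U) * (b * star U) := by
            simp only [Matrix.mul_assoc]
        _ = U * (D * b) * star U := by rw [hU]; simp only [Matrix.mul_assoc, Matrix.one_mul,
            Matrix.mul_one]
    rw [e1, e2, ← Matrix.sub_mul, ← Matrix.mul_sub]
  have hB : w * matLog a - matLog a * w = U * (b * E - E * b) * star U := by
    rw [hL, hw]
    have e1 : U * b * star U * (U * E * star U) = U * (b * E) * star U := by
      calc U * b * star U * (U * E * star U) = U * b * (star U * U) * (E * star U) := by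
            simp only [Matrix.mul_assoc]
        _ = U * (b * E) * star U := by rw [hU]; simp only [Matrix.mul_assoc, Matrix.one_mul,
            Matrix.mul_one]
    have e2 : U * E * star U * (U * b * star U) = U * (E * b) * star U := by
      calc U * E * star U * (U * b * star U) = U * E * (star U * U) * (b * star U) := by
            simp only [Matrix.mul_assoc]
        _ = U * (E * b) * star U := by rw [hU]; simp only [Matrix.mul_assoc, Matrix.one_mul,
            Matrix.mul_one]
    rw [e1, e2, ← Matrix.sub_mul, ← Matrix.mul_sub]
  -- trace computation
  have htr : ((w * a - a * w)ᴴ * (w * matLog a - matLog a * w)).trace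
      = ((∑ i, ∑ j, Complex.normSq (b i j) * ((f j - f i) * (g j - g i)) : ℝ) : ℂ) := by
    rw [hA, hB]
    have hct : (U * (b * D - D * b) * star U)ᴴ = U * (b * D - D * b)ᴴ * star U := by
      simp only [Matrix.star_eq_conjTranspose, Matrix.conjTranspose_mul,
        Matrix.conjTranspose_conjTranspose]
      rw [← Matrix.mul_assoc]
    rw [hct]
    have e3 : U * (b * D - D * b)ᴴ * star U * (U * (b * E - E * b) * star U)
        = U * ((b * D - D * b)ᴴ * (b * E - E * b)) * star U := by
      calc U * (b * D - D * b)ᴴ * star U * (U * (b * E - E * b) * star U)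
          = U * (b * D - D * b)ᴴ * (star U * U) * ((b * E - E * b) * star U) := by
            simp only [Matrix.mul_assoc]
        _ = _ := by rw [hU]; simp only [Matrix.mul_assoc, Matrix.one_mul, Matrix.mul_one]
    rw [e3, Matrix.trace_mul_cycle, ← Matrix.mul_assoc, hU, Matrix.one_mul]
    exact trace_comm_diag_pairing b f g
  have hq : q (w * a - a * w) = ∑ i, ∑ j, Complex.normSq (b i j) * (f j - f i) ^ 2 := by
    rw [hA, q_unitary_conj _ _ hU hU', q_comm_diag]
  have hre : ((w * a - a * w)ᴴ * (w * matLog a - matLog a * w)).trace.re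
      = ∑ i, ∑ j, Complex.normSq (b i j) * ((f j - f i) * (g j - g i)) := by
    rw [htr, Complex.ofReal_re]
  have hfpos : ∀ i, 0 < f i := fun i => ha.eigenvalues_pos i
  constructor
  · rw [hre]
    refine Finset.sum_nonneg fun i _ => Finset.sum_nonneg fun j _ => ?_
    exact mul_nonneg (Complex.normSq_nonneg _) (scalar_log_nonneg (hfpos j) (hfpos i))
  · rw [hre, hq, Finset.mul_sum]
    refine Finset.sum_le_sum fun i _ => ?_
    rw [Finset.mul_sum]
    refine Finset.sum_le_sum fun j _ => ?_
    have := scalar_log_ineq (hfpos j) (hfpos i) (hM j) (hM i)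
    calc Complex.normSq (b i j) * (f j - f i) ^ 2
        ≤ Complex.normSq (b i j) * (M * ((f j - f i) * (g j - g i))) :=
          mul_le_mul_of_nonneg_left this (Complex.normSq_nonneg _)
      _ = M * (Complex.normSq (b i j) * ((f j - f i) * (g j - g i))) := by ring

lemma delta1_smul (s : ℝ) (y a : Matrix (Fin n) (Fin n) ℂ) :
    delta1 y (s • a) = s • delta1 y a := by
  simp only [delta1, Matrix.mul_smul, Matrix.smul_mul, smul_sub]

lemma delta2_smul (s : ℝ) (x a : Matrix (Fin n) (Fin n) ℂ) :
    delta2 x (s • a) = s • delta2 x a := by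
  simp only [delta2, Matrix.mul_smul, Matrix.smul_mul, smul_sub]

lemma entry_continuous (i j : Fin n) : Continuous fun a : Matrix (Fin n) (Fin n) ℂ => a i j :=
  (continuous_apply j).comp (continuous_apply i)

lemma q_continuous : Continuous fun a : Matrix (Fin n) (Fin n) ℂ => q a := by
  unfold q
  refine continuous_finset_sum _ fun i _ => continuous_finset_sum _ fun j _ => ?_
  exact Complex.continuous_normSq.comp (entry_continuous i j)

lemma trace_continuous : Continuous fun a : Matrix (Fin n) (Fin n) ℂ => a.trace := by
  simp only [Matrix.trace, Matrix.diag]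
  exact continuous_finset_sum _ fun i _ => entry_continuous i i

lemma ker_delta_scalar (hn : 0 < n) (x y : Matrix (Fin n) (Fin n) ℂ) (hgen : GenCond x y)
    (a : Matrix (Fin n) (Fin n) ℂ) (h1 : delta1 y a = 0) (h2 : delta2 x a = 0)
    (htr : a.trace = 0) : a = 0 := by
  have hcy : Commute a y := by
    have : y * a - a * y = 0 := h1
    have := sub_eq_zero.mp this
    exact this.symm
  have hcx : Commute a x := by
    have : a * x - x * a = 0 := h2
    exact sub_eq_zero.mp this
  have hex : Commute a (NormedSpace.exp
      ((((2 * Real.pi : ℝ) : ℂ) * Complex.I / (n : ℂ)) • x)) :=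
    (hcx.smul_right _).exp_right
  have hey : Commute a (NormedSpace.exp
      ((((2 * Real.pi : ℝ) : ℂ) * Complex.I / (n : ℂ)) • y)) :=
    (hcy.smul_right _).exp_right
  obtain ⟨z, hz⟩ := hgen a hex.eq hey.eq
  have : a.trace = z * n := by
    rw [hz, Matrix.trace_smul, Matrix.trace_one]
    simp
  rw [htr] at this
  have hz0 : z = 0 := by
    have hne : (n : ℂ) ≠ 0 := by
      exact_mod_cast Nat.cast_ne_zero.mpr hn.ne'
    exact (mul_eq_zero.mp this.symm).resolve_right hne
  rw [hz, hz0, zero_smul]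

lemma gap (hn : 0 < n) (x y : Matrix (Fin n) (Fin n) ℂ) (hgen : GenCond x y) :
    ∃ γ : ℝ, 0 < γ ∧ ∀ a : Matrix (Fin n) (Fin n) ℂ, a.trace = 0 →
      γ * q a ≤ q (delta1 y a) + q (delta2 x a) := by
  set F : Matrix (Fin n) (Fin n) ℂ → ℝ := fun a => q (delta1 y a) + q (delta2 x a) with hF
  have hFcont : Continuous F := by
    refine Continuous.add ?_ ?_
    · exact q_continuous.comp (by
        refine Continuous.sub ?_ ?_ <;> exact Continuous.matrix_mul (by continuity) (by continuity))
    · exact q_continuous.comp (by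
        refine Continuous.sub ?_ ?_ <;> exact Continuous.matrix_mul (by continuity) (by continuity))
  have hFnonneg : ∀ a, 0 ≤ F a := fun a => add_nonneg (q_nonneg _) (q_nonneg _)
  have hFzero : ∀ a : Matrix (Fin n) (Fin n) ℂ, a.trace = 0 → F a = 0 → a = 0 := by
    intro a htr h0
    simp only [hF] at h0
    have hq1 := q_nonneg (delta1 y a)
    have hq2 := q_nonneg (delta2 x a)
    have h1 : q (delta1 y a) = 0 := by linarith
    have h2 : q (delta2 x a) = 0 := by linarith
    exact ker_delta_scalar hn x y hgen a ((q_eq_zero_iff _).mp h1) ((q_eq_zero_iff _).mp h2) htr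
  have hFsmul : ∀ (s : ℝ) (a : Matrix (Fin n) (Fin n) ℂ), F (s • a) = s ^ 2 * F a := by
    intro s a
    simp only [hF, delta1_smul, delta2_smul, q_smul_real]
    ring
  set S : Set (Matrix (Fin n) (Fin n) ℂ) := {a | a.trace = 0 ∧ q a = 1} with hS
  have hSclosed : IsClosed S := by
    refine IsClosed.inter ?_ ?_
    · exact isClosed_eq trace_continuous continuous_const
    · exact isClosed_eq q_continuous continuous_const
  have hScompact : IsCompact S := by
    have hB : IsCompact (Set.univ.pi fun _ : Fin n =>
        (Set.univ.pi fun _ : Fin n => Metric.closedBall (0 : ℂ) 1)) :=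
      isCompact_univ_pi fun _ => isCompact_univ_pi fun _ => isCompact_closedBall _ _
    refine IsCompact.of_isClosed_subset hB hSclosed ?_
    intro a ha
    refine Set.mem_univ_pi.mpr ?_
    intro i
    rw [Set.mem_univ_pi]
    intro j
    rw [Metric.mem_closedBall]
    have hent : Complex.normSq (a i j) ≤ 1 := by
      have := entry_le_q a i j
      rw [ha.2] at this
      exact this
    have : dist (a i j) 0 = Real.sqrt (Complex.normSq (a i j)) := by
      rw [Complex.dist_eq, sub_zero, Complex.norm_def]
    rw [this]
    exact Real.sqrt_le_one.mpr hent
  -- normalization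
  have hnormS : ∀ a : Matrix (Fin n) (Fin n) ℂ, a.trace = 0 → a ≠ 0 →
      ((Real.sqrt (q a))⁻¹ • a) ∈ S ∧ F ((Real.sqrt (q a))⁻¹ • a) = (q a)⁻¹ * F a := by
    intro a htr hane
    have hqpos : 0 < q a := by
      rcases lt_or_eq_of_le (q_nonneg a) with h | h
      · exact h
      · exact absurd ((q_eq_zero_iff a).mp h.symm) hane
    have hsq : ((Real.sqrt (q a))⁻¹) ^ 2 = (q a)⁻¹ := by
      rw [← Real.sqrt_inv, Real.sq_sqrt (by positivity)]
    constructor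
    · constructor
      · rw [Matrix.trace_smul, htr, smul_zero]
      · rw [q_smul_real, hsq, inv_mul_cancel₀ hqpos.ne']
    · rw [hFsmul, hsq]
  by_cases hSne : S.Nonempty
  · obtain ⟨a₀, ha₀S, hmin⟩ := hScompact.exists_isMinOn hSne hFcont.continuousOn
    refine ⟨F a₀, ?_, ?_⟩
    · rcases lt_or_eq_of_le (hFnonneg a₀) with h | h
      · exact h
      · exfalso
        have : a₀ = 0 := hFzero a₀ ha₀S.1 h.symm
        rw [this] at ha₀S
        have : q (0 : Matrix (Fin n) (Fin n) ℂ) = 1 := ha₀S.2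
        rw [(q_eq_zero_iff (0 : Matrix (Fin n) (Fin n) ℂ)).mpr rfl] at this
        norm_num at this
    · intro a htr
      by_cases hane : a = 0
      · subst hane
        simp only [q, Matrix.zero_apply, Complex.normSq_zero, Finset.sum_const_zero, mul_zero]
        exact hFnonneg 0
      · obtain ⟨hbS, hFb⟩ := hnormS a htr hane
        have hqpos : 0 < q a := by
          rcases lt_or_eq_of_le (q_nonneg a) with h | h
          · exact h
          · exact absurd ((q_eq_zero_iff a).mp h.symm) hane
        have hle : F a₀ ≤ (q a)⁻¹ * F a := hFb ▸ hmin hbS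
        have h2 : F a₀ * q a ≤ (q a)⁻¹ * F a * q a :=
          mul_le_mul_of_nonneg_right hle hqpos.le
        have heq : (q a)⁻¹ * F a * q a = F a := by field_simp
        show F a₀ * q a ≤ F a
        exact le_of_le_of_eq h2 heq
  · refine ⟨1, one_pos, ?_⟩
    intro a htr
    by_cases hane : a = 0
    · subst hane
      simp only [q, Matrix.zero_apply, Complex.normSq_zero, Finset.sum_const_zero, mul_zero]
      exact hFnonneg 0
    · exact absurd ⟨_, (hnormS a htr hane).1⟩ hSne

lemma trace_comm_shift (a b w : Matrix (Fin n) (Fin n) ℂ) :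
    ((a * w - w * a) * b).trace = (a * (w * b - b * w)).trace := by
  rw [Matrix.sub_mul, Matrix.mul_sub, Matrix.trace_sub, Matrix.trace_sub]
  congr 1
  · rw [Matrix.mul_assoc]
  · calc ((w * a) * b).trace = (w * (a * b)).trace := by rw [Matrix.mul_assoc]
      _ = ((a * b) * w).trace := Matrix.trace_mul_comm _ _
      _ = (a * (b * w)).trace := by rw [Matrix.mul_assoc]

lemma trace_d_lap (x y d L : Matrix (Fin n) (Fin n) ℂ) :
    (d * lap x y L).trace
    = -((delta1 y d * delta1 y L).trace) - ((delta2 x d * delta2 x L).trace) := by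
  rw [lap, Matrix.mul_add, Matrix.trace_add]
  have h1 : (d * delta1 y (delta1 y L)).trace = -((delta1 y d * delta1 y L).trace) := by
    rw [delta1, ← trace_comm_shift d (delta1 y L) y]
    have : d * y - y * d = -(y * d - d * y) := (neg_sub _ _).symm
    rw [this, Matrix.neg_mul, Matrix.trace_neg]
    rfl
  have h2 : (d * delta2 x (delta2 x L)).trace = -((delta2 x d * delta2 x L).trace) := by
    have e : delta2 x (delta2 x L) = -(x * delta2 x L - delta2 x L * x) := by
      show delta2 x L * x - x * delta2 x L = -(x * delta2 x L - delta2 x L * x)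
      exact (neg_sub _ _).symm
    rw [e, Matrix.mul_neg, Matrix.trace_neg, ← trace_comm_shift d (delta2 x L) x]
    rfl
  rw [h1, h2]
  ring

lemma trace_lap_zero (x y L : Matrix (Fin n) (Fin n) ℂ) : (lap x y L).trace = 0 := by
  have h1 : (delta1 y (delta1 y L)).trace = 0 := by
    rw [delta1, Matrix.trace_sub, Matrix.trace_mul_comm]
    ring
  have h2 : (delta2 x (delta2 x L)).trace = 0 := by
    rw [delta2, Matrix.trace_sub, Matrix.trace_mul_comm]
    ring
  rw [lap, Matrix.trace_add, h1, h2, add_zero]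

lemma q_diagonal (v : Fin n → ℂ) : q (Matrix.diagonal v) = ∑ i, Complex.normSq (v i) := by
  unfold q
  refine Finset.sum_congr rfl fun i _ => ?_
  rw [Finset.sum_eq_single i]
  · rw [Matrix.diagonal_apply_eq]
  · intro j _ hji
    rw [Matrix.diagonal_apply_ne' _ hji, Complex.normSq_zero]
  · intro h; exact absurd (Finset.mem_univ i) h

lemma q_sub_smul_one {a : Matrix (Fin n) (Fin n) ℂ} (h : a.IsHermitian) (s : ℝ) :
    q (a - (s : ℂ) • 1) = ∑ i, (h.eigenvalues i - s) ^ 2 := by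
  set U : Matrix (Fin n) (Fin n) ℂ := (h.eigenvectorUnitary : Matrix (Fin n) (Fin n) ℂ) with hUdef
  have hU : star U * U = 1 := (Matrix.mem_unitaryGroup_iff').mp h.eigenvectorUnitary.2
  have hU' : U * star U = 1 := (Matrix.mem_unitaryGroup_iff).mp h.eigenvectorUnitary.2
  have hc : a = U * Matrix.diagonal (fun i => ((h.eigenvalues i : ℝ) : ℂ)) * star U := by
    have := h.spectral_theorem
    exact this
  have hone : (s : ℂ) • (1 : Matrix (Fin n) (Fin n) ℂ)
      = U * ((s : ℂ) • 1) * star U := by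
    rw [Matrix.mul_smul, Matrix.smul_mul, Matrix.mul_one, hU']
  have hd : a - (s : ℂ) • 1
      = U * (Matrix.diagonal (fun i => ((h.eigenvalues i - s : ℝ) : ℂ))) * star U := by
    have hstep : a - (s : ℂ) • 1
        = U * Matrix.diagonal (fun i => ((h.eigenvalues i : ℝ) : ℂ)) * star U
          - U * ((s : ℂ) • 1) * star U := by rw [← hc, ← hone]
    rw [hstep, ← Matrix.sub_mul, ← Matrix.mul_sub]
    congr 2
    have h1 : ((s : ℂ) • (1 : Matrix (Fin n) (Fin n) ℂ)) = Matrix.diagonal (fun _ => (s : ℂ)) :=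
      Matrix.smul_one_eq_diagonal _
    rw [h1, Matrix.diagonal_sub]
    congr 1
    funext i
    push_cast
    ring
  rw [hd, q_unitary_conj _ _ hU hU', q_diagonal]
  refine Finset.sum_congr rfl fun i _ => ?_
  rw [Complex.normSq_ofReal]
  ring

lemma delta1_sub (y a b : Matrix (Fin n) (Fin n) ℂ) :
    delta1 y (a - b) = delta1 y a - delta1 y b := by
  simp only [delta1, Matrix.mul_sub, Matrix.sub_mul]
  abel

lemma delta2_sub (x a b : Matrix (Fin n) (Fin n) ℂ) :
    delta2 x (a - b) = delta2 x a - delta2 x b := by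
  simp only [delta2, Matrix.mul_sub, Matrix.sub_mul]
  abel

lemma delta1_smul_one (y : Matrix (Fin n) (Fin n) ℂ) (z : ℂ) :
    delta1 y (z • 1) = 0 := by
  simp only [delta1, Matrix.mul_smul, Matrix.smul_mul, Matrix.mul_one, Matrix.one_mul, sub_self]

lemma delta2_smul_one (x : Matrix (Fin n) (Fin n) ℂ) (z : ℂ) :
    delta2 x (z • 1) = 0 := by
  simp only [delta2, Matrix.mul_smul, Matrix.smul_mul, Matrix.mul_one, Matrix.one_mul, sub_self]

lemma conjTranspose_delta1 {y a : Matrix (Fin n) (Fin n) ℂ}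
    (hy : y.IsHermitian) (ha : a.IsHermitian) : (delta1 y a)ᴴ = -(delta1 y a) := by
  simp only [delta1, Matrix.conjTranspose_sub, Matrix.conjTranspose_mul, hy.eq, ha.eq]
  exact (neg_sub _ _).symm

lemma conjTranspose_delta2 {x a : Matrix (Fin n) (Fin n) ℂ}
    (hx : x.IsHermitian) (ha : a.IsHermitian) : (delta2 x a)ᴴ = -(delta2 x a) := by
  simp only [delta2, Matrix.conjTranspose_sub, Matrix.conjTranspose_mul, hx.eq, ha.eq]
  exact (neg_sub _ _).symm

lemma dissipation {x y : Matrix (Fin n) (Fin n) ℂ} (hx : x.IsHermitian) (hy : y.IsHermitian)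
    {a : Matrix (Fin n) (Fin n) ℂ} (ha : a.PosDef) (M γ : ℝ)
    (hM : ∀ i, ha.1.eigenvalues i ≤ M)
    (hgap : ∀ b : Matrix (Fin n) (Fin n) ℂ, b.trace = 0 →
      γ * q b ≤ q (delta1 y b) + q (delta2 x b))
    (z : ℂ) (hz : (a - z • 1).trace = 0) :
    0 ≤ ((a - z • (1 : Matrix (Fin n) (Fin n) ℂ)) * lap x y (matLog a)).trace.re ∧
    γ * q (a - z • (1 : Matrix (Fin n) (Fin n) ℂ)) ≤
      M * ((a - z • (1 : Matrix (Fin n) (Fin n) ℂ)) * lap x y (matLog a)).trace.re := by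
  set L := matLog a with hL
  set d : Matrix (Fin n) (Fin n) ℂ := a - z • 1 with hd
  have hd1 : delta1 y d = delta1 y a := by
    rw [hd, delta1_sub, delta1_smul_one, sub_zero]
  have hd2 : delta2 x d = delta2 x a := by
    rw [hd, delta2_sub, delta2_smul_one, sub_zero]
  -- spec applied with w = y
  have hspecy := spec_key ha y M hM
  have hspecx := spec_key ha x M hM
  -- rewrite identifications
  have idy1 : y * a - a * y = delta1 y a := rfl
  have idy2 : y * L - L * y = delta1 y L := rfl
  have idx1 : x * a - a * x = -(delta2 x a) := (neg_sub _ _).symm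
  have idx2 : x * L - L * x = -(delta2 x L) := (neg_sub _ _).symm
  have hS1 : ((y * a - a * y)ᴴ * (y * L - L * y)).trace = -((delta1 y a * delta1 y L).trace) := by
    rw [idy1, idy2, conjTranspose_delta1 hy ha.1, Matrix.neg_mul, Matrix.trace_neg]
  have hS2 : ((x * a - a * x)ᴴ * (x * L - L * x)).trace = -((delta2 x a * delta2 x L).trace) := by
    rw [idx1, idx2, Matrix.conjTranspose_neg, conjTranspose_delta2 hx ha.1, neg_neg,
      Matrix.mul_neg, Matrix.trace_neg]
  have htd : (d * lap x y L).trace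
      = -((delta1 y a * delta1 y L).trace) - ((delta2 x a * delta2 x L).trace) := by
    rw [trace_d_lap, hd1, hd2]
  have hsum : (d * lap x y L).trace
      = ((y * a - a * y)ᴴ * (y * L - L * y)).trace
        + ((x * a - a * x)ᴴ * (x * L - L * x)).trace := by
    rw [hS1, hS2, htd]; ring
  have hre : (d * lap x y L).trace.re
      = ((y * a - a * y)ᴴ * (y * L - L * y)).trace.re
        + ((x * a - a * x)ᴴ * (x * L - L * x)).trace.re := by
    rw [hsum, Complex.add_re]
  constructor
  · rw [hre]
    linarith [hspecy.1, hspecx.1]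
  · have hgap' := hgap d hz
    rw [hd1, hd2] at hgap'
    have hq1 : q (delta1 y a) = q (y * a - a * y) := by rw [idy1]
    have hq2 : q (delta2 x a) = q (x * a - a * x) := by rw [idx1, q_neg]
    rw [hq1, hq2] at hgap'
    rw [hre, mul_add]
    linarith [hspecy.2, hspecx.2]

lemma antitoneOn_Ici_of_deriv_nonpos {f f' : ℝ → ℝ} {t₀ : ℝ}
    (h : ∀ t ∈ Set.Ici t₀, HasDerivWithinAt f (f' t) (Set.Ici t₀) t)
    (h0 : ∀ t ∈ Set.Ici t₀, f' t ≤ 0) : AntitoneOn f (Set.Ici t₀) := by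
  refine antitoneOn_of_deriv_nonpos (convex_Ici t₀) (fun t ht => (h t ht).continuousWithinAt)
    ?_ ?_
  · intro t ht
    rw [interior_Ici] at ht
    exact ((h t (Set.Ioi_subset_Ici_self ht)).hasDerivAt (Ici_mem_nhds ht)).differentiableAt.differentiableWithinAt
  · intro t ht
    rw [interior_Ici] at ht
    rw [((h t (Set.Ioi_subset_Ici_self ht)).hasDerivAt (Ici_mem_nhds ht)).deriv]
    exact h0 t (Set.Ioi_subset_Ici_self ht)

lemma const_of_deriv_zero {f : ℝ → ℂ} {f' : ℝ → ℂ} {t₀ : ℝ}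
    (h : ∀ t ∈ Set.Ici t₀, HasDerivWithinAt f (f' t) (Set.Ici t₀) t)
    (h0 : ∀ t ∈ Set.Ici t₀, f' t = 0) : ∀ t ∈ Set.Ici t₀, f t = f t₀ := by
  intro t ht
  have hcont : ContinuousOn f (Set.Icc t₀ t) := fun u hu =>
    ((h u hu.1).continuousWithinAt).mono Set.Icc_subset_Ici_self
  have hderiv : ∀ u ∈ Set.Ico t₀ t, HasDerivWithinAt f 0 (Set.Ici u) u := by
    intro u hu
    have := (h u hu.1).mono (Set.Ici_subset_Ici.mpr hu.1)
    rwa [h0 u hu.1] at this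
  exact constant_of_has_deriv_right_zero hcont hderiv t (Set.right_mem_Icc.mpr ht)

lemma hasDerivWithinAt_normSq {e : ℝ → ℂ} {e' : ℂ} {s : Set ℝ} {t : ℝ}
    (h : HasDerivWithinAt e e' s t) :
    HasDerivWithinAt (fun u => Complex.normSq (e u))
      (((starRingEnd ℂ) e' * e t + (starRingEnd ℂ) (e t) * e').re) s t := by
  have hconj : HasDerivWithinAt (fun u => (starRingEnd ℂ) (e u)) ((starRingEnd ℂ) e') s t := by
    have hfd := (Complex.conjCLE.toContinuousLinearMap.hasFDerivAt (x := e t))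
    have := hfd.comp_hasDerivWithinAt t h
    exact this
  have hmul : HasDerivWithinAt (fun u => (starRingEnd ℂ) (e u) * e u)
      ((starRingEnd ℂ) e' * e t + (starRingEnd ℂ) (e t) * e') s t := hconj.mul h
  have hre := (Complex.reCLM.hasFDerivAt
    (x := (starRingEnd ℂ) (e t) * e t)).comp_hasDerivWithinAt t hmul
  have heq : (fun u => Complex.reCLM ((starRingEnd ℂ) (e u) * e u))
      = fun u => Complex.normSq (e u) := by
    funext u
    simp [Complex.normSq_apply, Complex.mul_re]
  rw [← heq]
  exact hre

end RicciAux

open RicciAux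

/-- Under the noncommutative Ricci flow, the metric converges as `t → ∞` to the flat metric
`c_∞·1` where `c_∞ = τ(c₀)/n`. -/
theorem ricci_flow_tendsto_flat (n : ℕ) (hn : 0 < n) (x y : Matrix (Fin n) (Fin n) ℂ)
    (hx : x.IsHermitian) (hy : y.IsHermitian) (hgen : GenCond x y)
    (t₀ : ℝ) (c : ℝ → Matrix (Fin n) (Fin n) ℂ)
    (hpos : ∀ t ∈ Set.Ici t₀, (c t).PosDef)
    (hflow : ∀ t ∈ Set.Ici t₀, ∀ i j, HasDerivWithinAt (fun s => c s i j)
      ((-(lap x y (matLog (c t)))) i j) (Set.Ici t₀) t) :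
    Filter.Tendsto c Filter.atTop
      (nhds (((c t₀).trace / (n : ℂ)) • (1 : Matrix (Fin n) (Fin n) ℂ))) := by
  classical
  haveI : Nonempty (Fin n) := ⟨⟨0, hn⟩⟩
  have hn' : (n : ℂ) ≠ 0 := Nat.cast_ne_zero.mpr hn.ne'
  set T : ℂ := (c t₀).trace with hT
  set cst : Matrix (Fin n) (Fin n) ℂ := (T / (n : ℂ)) • 1 with hcst
  -- T is real
  have hTreal : (starRingEnd ℂ) T = T := by
    have h1 : (c t₀)ᴴ.trace = star ((c t₀).trace) := Matrix.trace_conjTranspose _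
    rw [(hpos t₀ Set.self_mem_Ici).1.eq] at h1
    exact h1.symm
  set s : ℝ := T.re / n with hs
  have hsT : T / (n : ℂ) = ((s : ℝ) : ℂ) := by
    have hTim : T.im = 0 := by
      have := congrArg Complex.im hTreal
      simp only [Complex.conj_im] at this
      linarith
    have hTofReal : T = ((T.re : ℝ) : ℂ) := by
      apply Complex.ext <;> simp [hTim]
    rw [hTofReal, hs]
    push_cast
    rfl
  -- trace is constant
  have htrace : ∀ t ∈ Set.Ici t₀, (c t).trace = T := by
    refine const_of_deriv_zero (f' := fun t => (-(lap x y (matLog (c t)))).trace) ?_ ?_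
    · intro t ht
      have hsum : HasDerivWithinAt (fun u => ∑ i, c u i i)
          (∑ i, (-(lap x y (matLog (c t)))) i i) (Set.Ici t₀) t :=
        HasDerivWithinAt.fun_sum (fun i _ => hflow t ht i i)
      exact hsum
    · intro t ht
      show (-(lap x y (matLog (c t)))).trace = 0
      rw [Matrix.trace_neg, trace_lap_zero, neg_zero]
  set d : ℝ → Matrix (Fin n) (Fin n) ℂ := fun t => c t - cst with hd
  have hdtrace : ∀ t ∈ Set.Ici t₀, (d t).trace = 0 := by
    intro t ht
    rw [hd]
    simp only
    rw [Matrix.trace_sub, htrace t ht, hcst, Matrix.trace_smul, Matrix.trace_one]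
    simp only [smul_eq_mul, Fintype.card_fin]
    field_simp
    simp
  have hdherm : ∀ t ∈ Set.Ici t₀, (d t).IsHermitian := by
    intro t ht
    have h1 : (c t).IsHermitian := (hpos t ht).1
    have h2 : cst.IsHermitian := by
      rw [hcst, Matrix.IsHermitian, Matrix.conjTranspose_smul, Matrix.conjTranspose_one]
      congr 1
      rw [star_div₀, star_natCast, ← starRingEnd_apply, hTreal]
    exact h1.sub h2
  -- G and its derivative
  set G : ℝ → ℝ := fun t => q (d t) with hG
  set GV : ℝ → ℝ := fun t => -2 * ((d t * lap x y (matLog (c t))).trace.re) with hGV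
  have hGderiv : ∀ t ∈ Set.Ici t₀, HasDerivWithinAt G (GV t) (Set.Ici t₀) t := by
    intro t ht
    have hent : ∀ p : Fin n × Fin n, HasDerivWithinAt (fun u => d u p.1 p.2)
        ((-(lap x y (matLog (c t)))) p.1 p.2) (Set.Ici t₀) t := by
      intro p
      exact (hflow t ht p.1 p.2).sub_const (cst p.1 p.2)
    have hsum : HasDerivWithinAt (fun u => ∑ p : Fin n × Fin n, Complex.normSq (d u p.1 p.2))
        (∑ p : Fin n × Fin n,
          ((starRingEnd ℂ) ((-(lap x y (matLog (c t)))) p.1 p.2) * d t p.1 p.2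
            + (starRingEnd ℂ) (d t p.1 p.2) * (-(lap x y (matLog (c t)))) p.1 p.2).re)
        (Set.Ici t₀) t :=
      HasDerivWithinAt.fun_sum (fun p _ => hasDerivWithinAt_normSq (hent p))
    have hfun : (fun u => ∑ p : Fin n × Fin n, Complex.normSq (d u p.1 p.2)) = G := by
      funext u
      rw [hG]
      simp only [q]
      rw [Fintype.sum_prod_type]
    have hval : (∑ p : Fin n × Fin n,
          ((starRingEnd ℂ) ((-(lap x y (matLog (c t)))) p.1 p.2) * d t p.1 p.2
            + (starRingEnd ℂ) (d t p.1 p.2) * (-(lap x y (matLog (c t)))) p.1 p.2).re)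
        = GV t := by
      have hswap : ∀ a b : ℂ, ((starRingEnd ℂ) a * b).re = ((starRingEnd ℂ) b * a).re := by
        intro a b
        simp only [Complex.mul_re, Complex.conj_re, Complex.conj_im]
        ring
      have h1 : ∀ p : Fin n × Fin n,
          ((starRingEnd ℂ) ((-(lap x y (matLog (c t)))) p.1 p.2) * d t p.1 p.2
            + (starRingEnd ℂ) (d t p.1 p.2) * (-(lap x y (matLog (c t)))) p.1 p.2).re
          = 2 * ((starRingEnd ℂ) (d t p.1 p.2) * (-(lap x y (matLog (c t)))) p.1 p.2).re := by
        intro p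
        rw [Complex.add_re, hswap]
        ring
      rw [Finset.sum_congr rfl fun p _ => h1 p]
      rw [← Finset.mul_sum]
      have h2 : (∑ p : Fin n × Fin n,
          ((starRingEnd ℂ) (d t p.1 p.2) * (-(lap x y (matLog (c t)))) p.1 p.2).re)
          = (∑ p : Fin n × Fin n,
            ((starRingEnd ℂ) (d t p.1 p.2) * (-(lap x y (matLog (c t)))) p.1 p.2)).re := by
        rw [Complex.re_sum]
      rw [h2]
      have h3 : (∑ p : Fin n × Fin n,
            ((starRingEnd ℂ) (d t p.1 p.2) * (-(lap x y (matLog (c t)))) p.1 p.2))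
          = ((d t)ᴴ * (-(lap x y (matLog (c t))))).trace := by
        rw [trace_conjTranspose_mul]
        exact Fintype.sum_prod_type _
      rw [h3, (hdherm t ht).eq, Matrix.mul_neg, Matrix.trace_neg, hGV]
      simp
    rw [← hfun, ← hval]
    exact hsum
  -- dissipation estimates
  obtain ⟨γ, hγpos, hgap⟩ := gap hn x y hgen
  have hdz : ∀ t ∈ Set.Ici t₀, d t = c t - (T / (n : ℂ)) • 1 := by
    intro t ht; rw [hd]
  have hdiss : ∀ t (ht : t ∈ Set.Ici t₀) (M : ℝ),
      (∀ i, ((hpos t ht).1).eigenvalues i ≤ M) →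
      (0 ≤ ((d t) * lap x y (matLog (c t))).trace.re ∧
        γ * q (d t) ≤ M * ((d t) * lap x y (matLog (c t))).trace.re) := by
    intro t ht M hM
    have hz : (c t - (T / (n : ℂ)) • 1).trace = 0 := by
      rw [← hdz t ht]; exact hdtrace t ht
    have := dissipation hx hy (hpos t ht) M γ hM hgap (T / (n : ℂ)) hz
    rw [← hdz t ht] at this
    exact this
  -- Stage 1: GV is nonpositive, so G is antitone
  have hGV0 : ∀ t ∈ Set.Ici t₀, GV t ≤ 0 := by
    intro t ht
    set Mt : ℝ := Finset.univ.sup' Finset.univ_nonempty ((hpos t ht).1).eigenvalues with hMt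
    have hMle : ∀ i, ((hpos t ht).1).eigenvalues i ≤ Mt := fun i =>
      Finset.le_sup' _ (Finset.mem_univ i)
    have h := (hdiss t ht Mt hMle).1
    rw [hGV]
    simp only
    linarith
  have hGanti : AntitoneOn G (Set.Ici t₀) := antitoneOn_Ici_of_deriv_nonpos hGderiv hGV0
  have hGle : ∀ t ∈ Set.Ici t₀, G t ≤ G t₀ := fun t ht => hGanti Set.self_mem_Ici ht ht
  have hGnonneg : ∀ t, 0 ≤ G t := fun t => q_nonneg _
  -- uniform eigenvalue bound
  set R : ℝ := Real.sqrt (G t₀) with hR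
  set M : ℝ := s + R with hM
  have hqd : ∀ t (ht : t ∈ Set.Ici t₀),
      q (d t) = ∑ i, (((hpos t ht).1).eigenvalues i - s) ^ 2 := by
    intro t ht
    have : d t = c t - ((s : ℝ) : ℂ) • 1 := by rw [hdz t ht, hsT]
    rw [this]
    exact q_sub_smul_one (hpos t ht).1 s
  have hMbound : ∀ t (ht : t ∈ Set.Ici t₀), ∀ i, ((hpos t ht).1).eigenvalues i ≤ M := by
    intro t ht i
    have h1 : (((hpos t ht).1).eigenvalues i - s) ^ 2 ≤ q (d t) := by
      rw [hqd t ht]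
      exact Finset.single_le_sum (f := fun i => (((hpos t ht).1).eigenvalues i - s) ^ 2)
        (fun _ _ => sq_nonneg _) (Finset.mem_univ i)
    have h2 : (((hpos t ht).1).eigenvalues i - s) ^ 2 ≤ G t₀ := le_trans h1 (hGle t ht)
    have h3 : ((hpos t ht).1).eigenvalues i - s ≤ R := by
      calc ((hpos t ht).1).eigenvalues i - s ≤ |((hpos t ht).1).eigenvalues i - s| := le_abs_self _
        _ = Real.sqrt ((((hpos t ht).1).eigenvalues i - s) ^ 2) := (Real.sqrt_sq_eq_abs _).symm
        _ ≤ R := by rw [hR]; exact Real.sqrt_le_sqrt h2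
    linarith
  have hMpos : 0 < M := by
    have h1 := (hpos t₀ Set.self_mem_Ici).eigenvalues_pos (Classical.arbitrary (Fin n))
    have h2 := hMbound t₀ Set.self_mem_Ici (Classical.arbitrary (Fin n))
    linarith
  -- the decay rate
  set k : ℝ := 2 * γ / M with hk
  have hkpos : 0 < k := by positivity
  have hMk : M * k = 2 * γ := by rw [hk]; field_simp
  have hGVle : ∀ t ∈ Set.Ici t₀, GV t ≤ -k * G t := by
    intro t ht
    have h1 := (hdiss t ht M (hMbound t ht)).2
    have h2 : M * (k * G t) ≤ M * (2 * ((d t) * lap x y (matLog (c t))).trace.re) := by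
      rw [← mul_assoc, hMk]
      linarith
    have h3 : k * G t ≤ 2 * ((d t) * lap x y (matLog (c t))).trace.re :=
      le_of_mul_le_mul_left h2 hMpos
    rw [hGV]
    simp only
    linarith
  -- exponential decay
  set H : ℝ → ℝ := fun t => Real.exp (k * (t - t₀)) * G t with hH
  have hHderiv : ∀ t ∈ Set.Ici t₀, HasDerivWithinAt H
      (Real.exp (k * (t - t₀)) * k * G t + Real.exp (k * (t - t₀)) * GV t) (Set.Ici t₀) t := by
    intro t ht
    have hlin : HasDerivAt (fun u : ℝ => k * (u - t₀)) k t := by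
      simpa using ((hasDerivAt_id t).sub_const t₀).const_mul k
    have hexp : HasDerivAt (fun u : ℝ => Real.exp (k * (u - t₀)))
        (Real.exp (k * (t - t₀)) * k) t := by
      simpa [Function.comp_def] using (Real.hasDerivAt_exp (k * (t - t₀))).comp t hlin
    exact hexp.hasDerivWithinAt.mul (hGderiv t ht)
  have hH0 : ∀ t ∈ Set.Ici t₀,
      Real.exp (k * (t - t₀)) * k * G t + Real.exp (k * (t - t₀)) * GV t ≤ 0 := by
    intro t ht
    have h1 := hGVle t ht
    have h2 : Real.exp (k * (t - t₀)) * GV t ≤ Real.exp (k * (t - t₀)) * (-k * G t) :=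
      mul_le_mul_of_nonneg_left h1 (Real.exp_pos _).le
    nlinarith [Real.exp_pos (k * (t - t₀))]
  have hHanti : AntitoneOn H (Set.Ici t₀) := antitoneOn_Ici_of_deriv_nonpos hHderiv hH0
  have hGbound : ∀ t ∈ Set.Ici t₀, G t ≤ G t₀ / Real.exp (k * (t - t₀)) := by
    intro t ht
    have h1 : H t ≤ H t₀ := hHanti Set.self_mem_Ici ht ht
    rw [hH] at h1
    simp only [sub_self, mul_zero, Real.exp_zero, one_mul] at h1
    rw [le_div_iff₀ (Real.exp_pos _)]
    linarith [h1]
  -- G tends to zero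
  have hGtend : Filter.Tendsto G Filter.atTop (nhds 0) := by
    have hbound : Filter.Tendsto (fun t => G t₀ / Real.exp (k * (t - t₀)))
        Filter.atTop (nhds 0) := by
      have h1 : Filter.Tendsto (fun t : ℝ => k * (t - t₀)) Filter.atTop Filter.atTop := by
        apply Filter.Tendsto.const_mul_atTop hkpos
        have : (fun t : ℝ => t - t₀) = fun t : ℝ => t + (-t₀) := by funext t; ring
        rw [this]
        exact Filter.tendsto_atTop_add_const_right _ _ Filter.tendsto_id
      have h2 : Filter.Tendsto (fun t : ℝ => Real.exp (k * (t - t₀)))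
          Filter.atTop Filter.atTop := Real.tendsto_exp_atTop.comp h1
      exact Filter.Tendsto.div_atTop tendsto_const_nhds h2
    refine tendsto_of_tendsto_of_tendsto_of_le_of_le' tendsto_const_nhds hbound ?_ ?_
    · exact Filter.Eventually.of_forall hGnonneg
    · filter_upwards [Filter.eventually_ge_atTop t₀] with t ht
      exact hGbound t ht
  -- entrywise convergence and conclusion
  have hentry : ∀ i j, Filter.Tendsto (fun t => c t i j) Filter.atTop (nhds (cst i j)) := by
    intro i j
    have hns : Filter.Tendsto (fun t => Complex.normSq (c t i j - cst i j))
        Filter.atTop (nhds 0) := by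
      refine tendsto_of_tendsto_of_tendsto_of_le_of_le' tendsto_const_nhds hGtend ?_ ?_
      · exact Filter.Eventually.of_forall fun t => Complex.normSq_nonneg _
      · exact Filter.Eventually.of_forall fun t => entry_le_q (d t) i j
    have habs : Filter.Tendsto (fun t => ‖c t i j - cst i j‖) Filter.atTop (nhds 0) := by
      have h1 : Filter.Tendsto (fun t => Real.sqrt (Complex.normSq (c t i j - cst i j)))
          Filter.atTop (nhds 0) := by
        have := (Real.continuous_sqrt.tendsto 0).comp hns
        simpa [Function.comp_def] using this
      have heq : (fun t => ‖c t i j - cst i j‖)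
          = fun t => Real.sqrt (Complex.normSq (c t i j - cst i j)) := by
        funext t
        rw [Complex.norm_def]
      rw [heq]
      exact h1
    have hzero : Filter.Tendsto (fun t => c t i j - cst i j) Filter.atTop (nhds 0) :=
      tendsto_zero_iff_norm_tendsto_zero.mpr habs
    have := hzero.add_const (cst i j)
    simpa using this
  refine tendsto_pi_nhds.mpr ?_
  intro i
  rw [tendsto_pi_nhds]
  intro j
  exact hentry i j
end

section
/- Let c : [t₀, ∞) → M_n(ℂ) be a differentiable map with c(t) positive definite for all t ≥ t₀, satisfying the noncommutative Ricci flow equation c′(t) = −Δ(log c(t)), and set c_∞ := τ(c(t₀))/n. Then the function v(t) := τ((c(t) − c_∞·1)²) = ‖c(t) − c_∞·1‖₂² is nonincreasing on [t₀, ∞); indeed its derivative equals −2τ(c(t)·Δ(log c(t))) ≤ 0. -/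
open Matrix
open scoped ComplexOrder

/-- Integration by parts for the trace: `τ(c·δ²(b)) = −τ(δ(c)·δ(b))` for `δ(a) = wa − aw`. -/
lemma trace_mul_double_comm {n : ℕ} (c b w : Matrix (Fin n) (Fin n) ℂ) :
    (c * (w*(w*b - b*w) - (w*b - b*w)*w)).trace = -(((w*c - c*w) * (w*b - b*w)).trace) := by
  simp only [Matrix.mul_sub, Matrix.sub_mul, Matrix.trace_sub, Matrix.mul_assoc]
  rw [Matrix.trace_mul_comm w (c*(w*b)), Matrix.trace_mul_comm w (c*(b*w))]
  simp only [Matrix.mul_assoc]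
  ring

/-- Computation of `τ(δ(C)·δ(B))` where `C, B` are simultaneously unitarily diagonalized. -/
lemma trace_comm_mul_comm_diag {n : ℕ} (U w : Matrix (Fin n) (Fin n) ℂ)
    (hU : U * star U = 1) (hU' : star U * U = 1)
    (hw : wᴴ = w) (μ ν : Fin n → ℝ) :
    ((w * (U * Matrix.diagonal (fun i => (μ i : ℂ)) * star U)
        - (U * Matrix.diagonal (fun i => (μ i : ℂ)) * star U) * w)
      * (w * (U * Matrix.diagonal (fun i => (ν i : ℂ)) * star U)
        - (U * Matrix.diagonal (fun i => (ν i : ℂ)) * star U) * w)).trace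
      = ((∑ i, ∑ j, Complex.normSq ((star U * w * U) i j) * ((μ j - μ i) * (ν i - ν j)) : ℝ) : ℂ) := by
  set wt := star U * w * U with hwt
  have hconj : ∀ ρ : Fin n → ℝ,
      w * (U * Matrix.diagonal (fun i => (ρ i : ℂ)) * star U)
        - (U * Matrix.diagonal (fun i => (ρ i : ℂ)) * star U) * w
      = U * Matrix.of (fun i j => wt i j * ((ρ j : ℂ) - (ρ i : ℂ))) * star U := by
    intro ρ
    have hent : wt * Matrix.diagonal (fun i => (ρ i : ℂ))
        - Matrix.diagonal (fun i => (ρ i : ℂ)) * wt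
        = Matrix.of (fun i j => wt i j * ((ρ j : ℂ) - (ρ i : ℂ))) := by
      ext i j
      simp [Matrix.mul_diagonal, Matrix.diagonal_mul, Matrix.sub_apply]
      ring
    rw [← hent]
    simp only [Matrix.mul_sub, Matrix.sub_mul, hwt]
    congr 1
    · simp only [← Matrix.mul_assoc]
      rw [hU, Matrix.one_mul]
    · simp only [Matrix.mul_assoc]
      rw [hU, Matrix.mul_one]
  rw [hconj, hconj]
  have htr : ∀ A B : Matrix (Fin n) (Fin n) ℂ,
      ((U * A * star U) * (U * B * star U)).trace = (A * B).trace := by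
    intro A B
    have : (U * A * star U) * (U * B * star U) = U * (A * B) * star U := by
      simp only [Matrix.mul_assoc]
      rw [show star U * (U * (B * star U)) = B * star U by
        rw [← Matrix.mul_assoc, hU', Matrix.one_mul]]
    rw [this, Matrix.trace_mul_cycle, ← Matrix.mul_assoc, hU', Matrix.one_mul]
  rw [htr]
  have hwth : ∀ i j, wt j i = starRingEnd ℂ (wt i j) := by
    intro i j
    have h2 : wtᴴ = wt := by
      simp only [hwt, Matrix.conjTranspose_mul, Matrix.star_eq_conjTranspose, hw,
        Matrix.conjTranspose_conjTranspose, Matrix.mul_assoc]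
    have := congrFun (congrFun h2 j) i
    simpa [Matrix.conjTranspose_apply] using this.symm
  rw [Matrix.trace]
  push_cast
  simp only [Matrix.diag_apply, Matrix.mul_apply, Matrix.of_apply]
  refine Finset.sum_congr rfl fun i _ => Finset.sum_congr rfl fun j _ => ?_
  rw [hwth i j, show wt i j * (↑(μ j) - ↑(μ i)) * ((starRingEnd ℂ) (wt i j) * (↑(ν i) - ↑(ν j)))
    = (wt i j * (starRingEnd ℂ) (wt i j)) * ((↑(μ j) - ↑(μ i)) * (↑(ν i) - ↑(ν j))) by ring,
    Complex.mul_conj]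

/-- Spectral data of a positive definite matrix together with its logarithm. -/
lemma posdef_log_diag {n : ℕ} (a : Matrix (Fin n) (Fin n) ℂ) (ha : a.PosDef) :
    ∃ U : Matrix (Fin n) (Fin n) ℂ, ∃ e : Fin n → ℝ,
      U * star U = 1 ∧ star U * U = 1 ∧ (∀ i, 0 < e i) ∧
      a = U * Matrix.diagonal (fun i => (e i : ℂ)) * star U ∧
      matLog a = U * Matrix.diagonal (fun i => ((Real.log (e i) : ℝ) : ℂ)) * star U := by
  have h : a.IsHermitian := ha.isHermitian
  refine ⟨(h.eigenvectorUnitary : Matrix (Fin n) (Fin n) ℂ), h.eigenvalues,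
    h.eigenvectorUnitary.2.2, h.eigenvectorUnitary.2.1, ha.eigenvalues_pos, ?_, ?_⟩
  · have := h.spectral_theorem
    rw [Unitary.conjStarAlgAut_apply] at this
    exact this
  · rw [matLog, dif_pos h]

/-- The key positivity: `τ(a · Δ(log a)) ≥ 0` for positive definite `a`. -/
lemma key_nonneg {n : ℕ} (x y : Matrix (Fin n) (Fin n) ℂ)
    (hx : x.IsHermitian) (hy : y.IsHermitian)
    (a : Matrix (Fin n) (Fin n) ℂ) (ha : a.PosDef) :
    ∃ r : ℝ, 0 ≤ r ∧ (a * lap x y (matLog a)).trace = (r : ℂ) := by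
  obtain ⟨U, e, hU, hU', hepos, haeq, hlogeq⟩ := posdef_log_diag a ha
  set C := U * Matrix.diagonal (fun i => ((e i : ℝ) : ℂ)) * star U with hC
  set B := U * Matrix.diagonal (fun i => ((Real.log (e i) : ℝ) : ℂ)) * star U with hB
  have hlap : lap x y (matLog a)
      = (y*(y*B - B*y) - (y*B - B*y)*y) + (x*(x*B - B*x) - (x*B - B*x)*x) := by
    rw [hlogeq]
    unfold lap delta1 delta2
    noncomm_ring
  have hsign : ∀ w : Matrix (Fin n) (Fin n) ℂ, wᴴ = w →
      ∃ s : ℝ, s ≤ 0 ∧ ((w*C - C*w) * (w*B - B*w)).trace = (s : ℂ) := by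
    intro w hw
    refine ⟨∑ i, ∑ j, Complex.normSq ((star U * w * U) i j)
        * ((e j - e i) * (Real.log (e i) - Real.log (e j))), ?_, ?_⟩
    · refine Finset.sum_nonpos fun i _ => Finset.sum_nonpos fun j _ => ?_
      refine mul_nonpos_of_nonneg_of_nonpos (Complex.normSq_nonneg _) ?_
      rcases le_total (e i) (e j) with hij | hij
      · have hlog : Real.log (e i) ≤ Real.log (e j) := Real.log_le_log (hepos i) hij
        exact mul_nonpos_of_nonneg_of_nonpos (by linarith) (by linarith)
      · have hlog : Real.log (e j) ≤ Real.log (e i) := Real.log_le_log (hepos j) hij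
        exact mul_nonpos_of_nonpos_of_nonneg (by linarith) (by linarith)
    · exact trace_comm_mul_comm_diag U w hU hU' hw e (fun i => Real.log (e i))
  obtain ⟨s₁, hs₁, he₁⟩ := hsign y hy
  obtain ⟨s₂, hs₂, he₂⟩ := hsign x hx
  refine ⟨-(s₁ + s₂), by linarith, ?_⟩
  rw [hlap, Matrix.mul_add, Matrix.trace_add]
  rw [show a = C from haeq]
  rw [trace_mul_double_comm C B y, trace_mul_double_comm C B x, he₁, he₂]
  push_cast
  ring

/-- The trace of the square of a Hermitian matrix is a nonnegative real. -/
lemma herm_sq_trace_real {n : ℕ} (m : Matrix (Fin n) (Fin n) ℂ) (hm : mᴴ = m) :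
    ∃ r : ℝ, 0 ≤ r ∧ (m * m).trace = (r : ℂ) := by
  refine ⟨∑ i, ∑ j, Complex.normSq (m i j),
    Finset.sum_nonneg fun i _ => Finset.sum_nonneg fun j _ => Complex.normSq_nonneg _, ?_⟩
  rw [Matrix.trace]
  push_cast
  simp only [Matrix.diag_apply, Matrix.mul_apply]
  refine Finset.sum_congr rfl fun i _ => Finset.sum_congr rfl fun j _ => ?_
  have : m j i = starRingEnd ℂ (m i j) := by
    have := congrFun (congrFun hm j) i
    simpa [Matrix.conjTranspose_apply] using this.symm
  rw [this, Complex.mul_conj]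

/-- The Laplacian is trace free. -/
lemma trace_lap_zero {n : ℕ} (x y b : Matrix (Fin n) (Fin n) ℂ) :
    (lap x y b).trace = 0 := by
  unfold lap delta1 delta2
  simp only [Matrix.trace_add, Matrix.trace_sub]
  rw [Matrix.trace_mul_comm y (y*b - b*y), Matrix.trace_mul_comm x (b*x - x*b)]
  ring

/-- Along the noncommutative Ricci flow, `v(t) = τ((c(t) − c_∞·1)²) = ‖c(t) − c_∞·1‖₂²` has
derivative `−2τ(c(t)·Δ(log c(t))) ≤ 0` and is nonincreasing (inequalities phrased via the
order on `ℂ`). -/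
theorem ricci_flow_hs_distance_nonincreasing (n : ℕ) (hn : 0 < n)
    (x y : Matrix (Fin n) (Fin n) ℂ)
    (hx : x.IsHermitian) (hy : y.IsHermitian) (hgen : GenCond x y)
    (t₀ : ℝ) (c : ℝ → Matrix (Fin n) (Fin n) ℂ)
    (hpos : ∀ t ∈ Set.Ici t₀, (c t).PosDef)
    (hflow : ∀ t ∈ Set.Ici t₀, ∀ i j, HasDerivWithinAt (fun s => c s i j)
      ((-(lap x y (matLog (c t)))) i j) (Set.Ici t₀) t) :
    (∀ t ∈ Set.Ici t₀,
      HasDerivWithinAt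
        (fun s => ((c s - ((c t₀).trace / (n : ℂ)) • (1 : Matrix (Fin n) (Fin n) ℂ)) *
          (c s - ((c t₀).trace / (n : ℂ)) • (1 : Matrix (Fin n) (Fin n) ℂ))).trace)
        (-2 * ((c t) * lap x y (matLog (c t))).trace) (Set.Ici t₀) t ∧
      -2 * ((c t) * lap x y (matLog (c t))).trace ≤ 0) ∧
    (∀ s ∈ Set.Ici t₀, ∀ t ∈ Set.Ici t₀, s ≤ t →
      ((c t - ((c t₀).trace / (n : ℂ)) • (1 : Matrix (Fin n) (Fin n) ℂ)) *
        (c t - ((c t₀).trace / (n : ℂ)) • (1 : Matrix (Fin n) (Fin n) ℂ))).trace ≤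
      ((c s - ((c t₀).trace / (n : ℂ)) • (1 : Matrix (Fin n) (Fin n) ℂ)) *
        (c s - ((c t₀).trace / (n : ℂ)) • (1 : Matrix (Fin n) (Fin n) ℂ))).trace) := by
  set k : Matrix (Fin n) (Fin n) ℂ := ((c t₀).trace / (n : ℂ)) • 1 with hk
  -- the main derivative + sign statement
  have hmain : ∀ t ∈ Set.Ici t₀,
      HasDerivWithinAt (fun s => ((c s - k) * (c s - k)).trace)
        (-2 * ((c t) * lap x y (matLog (c t))).trace) (Set.Ici t₀) t ∧
      -2 * ((c t) * lap x y (matLog (c t))).trace ≤ 0 := by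
    intro t ht
    set L := lap x y (matLog (c t)) with hL
    constructor
    · have hsum : HasDerivWithinAt
          (fun s => ∑ i, ∑ j, (c s i j - k i j) * (c s j i - k j i))
          (∑ i, ∑ j, ((-L) i j * (c t j i - k j i) + (c t i j - k i j) * (-L) j i))
          (Set.Ici t₀) t := by
        refine HasDerivWithinAt.fun_sum fun i _ => HasDerivWithinAt.fun_sum fun j _ => ?_
        exact ((hflow t ht i j).sub_const (k i j)).mul ((hflow t ht j i).sub_const (k j i))
      have hfun : (fun s => ((c s - k) * (c s - k)).trace)
          = fun s => ∑ i, ∑ j, (c s i j - k i j) * (c s j i - k j i) := by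
        funext s
        simp [Matrix.trace, Matrix.mul_apply, Matrix.sub_apply]
      rw [hfun]
      convert hsum using 1
      -- value equality
      have h1 : ∑ i, ∑ j, ((-L) i j * (c t j i - k j i) + (c t i j - k i j) * (-L) j i)
          = ((-L) * (c t - k)).trace + ((c t - k) * (-L)).trace := by
        simp only [Matrix.trace, Matrix.diag_apply, Matrix.mul_apply, Matrix.sub_apply,
          ← Finset.sum_add_distrib]
      rw [h1, Matrix.trace_mul_comm ((-L)) (c t - k)]
      have h2 : ((c t - k) * (-L)).trace = -((c t) * L).trace + (k * L).trace := by
        simp only [Matrix.sub_mul, Matrix.mul_neg, Matrix.trace_neg, Matrix.trace_sub]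
        ring
      have h3 : (k * L).trace = 0 := by
        rw [hk, Matrix.smul_mul, Matrix.one_mul, Matrix.trace_smul, hL, trace_lap_zero]
        simp
      rw [h2, h3]
      ring
    · obtain ⟨r, hr, heq⟩ := key_nonneg x y hx hy (c t) (hpos t ht)
      rw [← hL] at heq
      rw [heq]
      have : (-2 : ℂ) * (r : ℂ) = (((-2 * r : ℝ)) : ℂ) := by push_cast; ring
      rw [this, show (0 : ℂ) = ((0 : ℝ) : ℂ) by norm_num, Complex.real_le_real]
      linarith
  refine ⟨hmain, ?_⟩
  -- hermitian-ness of c s - k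
  have htrreal : star ((c t₀).trace / (n : ℂ)) = (c t₀).trace / (n : ℂ) := by
    have hh : (c t₀).IsHermitian := (hpos t₀ Set.self_mem_Ici).isHermitian
    have h1 : star (c t₀).trace = (c t₀).trace := by
      rw [← Matrix.trace_conjTranspose, hh]
    rw [show star ((c t₀).trace / (n : ℂ)) = (starRingEnd ℂ) ((c t₀).trace / (n : ℂ)) from rfl,
      map_div₀, map_natCast,
      show (starRingEnd ℂ) (c t₀).trace = star (c t₀).trace from rfl, h1]
  have hherm : ∀ s ∈ Set.Ici t₀, (c s - k)ᴴ = c s - k := by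
    intro s hs
    rw [Matrix.conjTranspose_sub, (hpos s hs).isHermitian, hk, Matrix.conjTranspose_smul,
      Matrix.conjTranspose_one, htrreal]
  -- real part is antitone
  set f : ℝ → ℝ := fun s => (((c s - k) * (c s - k)).trace).re with hf
  have hfd : ∀ t ∈ Set.Ici t₀, HasDerivWithinAt f
      ((-2 * ((c t) * lap x y (matLog (c t))).trace).re) (Set.Ici t₀) t := by
    intro t ht
    have := Complex.reCLM.hasFDerivAt.comp_hasDerivWithinAt t (hmain t ht).1
    simpa [Function.comp_def, hf] using this
  have hanti : AntitoneOn f (Set.Ici t₀) := by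
    refine antitoneOn_of_deriv_nonpos (convex_Ici t₀)
      (fun s hs => (hfd s hs).continuousWithinAt) ?_ ?_
    · intro s hs
      rw [interior_Ici] at hs
      exact (((hfd s (Set.mem_Ici.mpr (le_of_lt hs))).hasDerivAt (Ici_mem_nhds hs)).differentiableAt).differentiableWithinAt
    · intro s hs
      rw [interior_Ici] at hs
      rw [((hfd s (Set.mem_Ici.mpr (le_of_lt hs))).hasDerivAt (Ici_mem_nhds hs)).deriv]
      have hle := (hmain s (Set.mem_Ici.mpr (le_of_lt hs))).2
      rw [Complex.le_def] at hle
      simpa using hle.1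
  intro s hs t ht hst
  obtain ⟨r1, _, h1⟩ := herm_sq_trace_real (c t - k) (hherm t ht)
  obtain ⟨r2, _, h2⟩ := herm_sq_trace_real (c s - k) (hherm s hs)
  rw [h1, h2, Complex.real_le_real]
  have hfs : f s = r2 := by rw [hf]; simp [h2]
  have hft : f t = r1 := by rw [hf]; simp [h1]
  have := hanti hs ht hst
  rw [hfs, hft] at this
  exact this
end

section
/- Let c : [0, ∞) → M_n(ℂ) be a differentiable map with c(t) positive definite for all t ≥ 0, satisfying the noncommutative Ricci flow equation c′(t) = −Δ(log c(t)), with initial metric c₀ := c(0). Then t ↦ log c(t) is differentiable at 0, and the scalar curvature R₀ := −(d/dt) log c(t)|_{t=0} satisfies τ(c₀·R₀) = 0. -/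
open Matrix
open scoped ComplexOrder

section Helpers
open MeasureTheory Set Filter
open scoped Topology

namespace FCAux
variable {n : ℕ} {a : Matrix (Fin n) (Fin n) ℂ}

/-- functional calculus -/
noncomputable def fc (h : a.IsHermitian) (g : ℝ → ℝ) : Matrix (Fin n) (Fin n) ℂ :=
  (h.eigenvectorUnitary : Matrix (Fin n) (Fin n) ℂ) *
    Matrix.diagonal (fun i => (g (h.eigenvalues i) : ℂ)) *
    (star (h.eigenvectorUnitary : Matrix (Fin n) (Fin n) ℂ))

lemma star_mul_self (h : a.IsHermitian) :
    star (h.eigenvectorUnitary : Matrix (Fin n) (Fin n) ℂ) *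
      (h.eigenvectorUnitary : Matrix (Fin n) (Fin n) ℂ) = 1 :=
  Unitary.coe_star_mul_self _

lemma mul_star_self (h : a.IsHermitian) :
    (h.eigenvectorUnitary : Matrix (Fin n) (Fin n) ℂ) *
      star (h.eigenvectorUnitary : Matrix (Fin n) (Fin n) ℂ) = 1 :=
  Unitary.coe_mul_star_self _

lemma matLog_eq_fc (h : a.IsHermitian) : matLog a = fc h Real.log := by
  rw [matLog, dif_pos h]; rfl

lemma fc_id (h : a.IsHermitian) : fc h (fun r => r) = a := by
  rw [fc]; exact (h.spectral_theorem).symm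

lemma fc_congr (h : a.IsHermitian) {g₁ g₂ : ℝ → ℝ}
    (hg : ∀ i, g₁ (h.eigenvalues i) = g₂ (h.eigenvalues i)) : fc h g₁ = fc h g₂ := by
  unfold fc
  have : (fun i => (g₁ (h.eigenvalues i) : ℂ)) = fun i => (g₂ (h.eigenvalues i) : ℂ) :=
    funext fun i => by rw [hg]
  rw [this]

lemma fc_mul (h : a.IsHermitian) (g₁ g₂ : ℝ → ℝ) :
    fc h g₁ * fc h g₂ = fc h (fun r => g₁ r * g₂ r) := by
  unfold fc
  have key : ∀ d₁ d₂ : Matrix (Fin n) (Fin n) ℂ,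
      ((h.eigenvectorUnitary : Matrix (Fin n) (Fin n) ℂ) * d₁ * star (h.eigenvectorUnitary : Matrix (Fin n) (Fin n) ℂ)) *
      ((h.eigenvectorUnitary : Matrix (Fin n) (Fin n) ℂ) * d₂ * star (h.eigenvectorUnitary : Matrix (Fin n) (Fin n) ℂ)) =
      (h.eigenvectorUnitary : Matrix (Fin n) (Fin n) ℂ) * (d₁ * ((star (h.eigenvectorUnitary : Matrix (Fin n) (Fin n) ℂ)) * (h.eigenvectorUnitary : Matrix (Fin n) (Fin n) ℂ)) * d₂) * star (h.eigenvectorUnitary : Matrix (Fin n) (Fin n) ℂ) := by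
    intro d₁ d₂
    noncomm_ring
  rw [key, star_mul_self h, mul_one, diagonal_mul_diagonal]
  push_cast
  rfl

lemma fc_one (h : a.IsHermitian) : fc h (fun _ => 1) = 1 := by
  unfold fc
  simp [mul_star_self h]

lemma fc_add (h : a.IsHermitian) (g₁ g₂ : ℝ → ℝ) :
    fc h g₁ + fc h g₂ = fc h (fun r => g₁ r + g₂ r) := by
  unfold fc
  rw [← add_mul, ← mul_add, diagonal_add]
  push_cast
  rfl

lemma fc_smul (h : a.IsHermitian) (r : ℝ) (g : ℝ → ℝ) :
    (r : ℂ) • fc h g = fc h (fun t => r * g t) := by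
  unfold fc
  rw [show (r:ℂ) • ((h.eigenvectorUnitary : Matrix (Fin n) (Fin n) ℂ) *
      Matrix.diagonal (fun i => (g (h.eigenvalues i) : ℂ)) *
      star (h.eigenvectorUnitary : Matrix (Fin n) (Fin n) ℂ)) =
      (h.eigenvectorUnitary : Matrix (Fin n) (Fin n) ℂ) *
      ((r:ℂ) • Matrix.diagonal (fun i => (g (h.eigenvalues i) : ℂ))) *
      star (h.eigenvectorUnitary : Matrix (Fin n) (Fin n) ℂ) from by
    rw [Matrix.mul_smul, Matrix.smul_mul]]
  rw [show (r:ℂ) • Matrix.diagonal (fun i => (g (h.eigenvalues i) : ℂ)) =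
      Matrix.diagonal (fun i => ((r * g (h.eigenvalues i) : ℝ) : ℂ)) from by
    ext i j
    rcases eq_or_ne i j with rfl|hij
    · push_cast
      simp [Matrix.diagonal_apply_eq, Matrix.smul_apply]
    · simp [Matrix.diagonal_apply_ne _ hij]]

lemma add_smul_one_eq_fc (h : a.IsHermitian) (u : ℝ) :
    a + (u : ℂ) • 1 = fc h (fun r => r + u) := by
  conv_lhs => rw [← fc_id h, ← fc_one h]
  rw [fc_smul h u, fc_add h]
  exact fc_congr h fun i => by ring

lemma fc_inv (h : a.IsHermitian) (g : ℝ → ℝ) (hg : ∀ i, g (h.eigenvalues i) ≠ 0) :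
    (fc h g)⁻¹ = fc h (fun r => (g r)⁻¹) := by
  apply Matrix.inv_eq_right_inv
  rw [fc_mul h]
  rw [fc_congr h (g₂ := fun _ => 1) (fun i => by
    rw [mul_inv_cancel₀ (hg i)])]
  exact fc_one h

lemma fc_apply (h : a.IsHermitian) (g : ℝ → ℝ) (i j : Fin n) :
    fc h g i j = ∑ k, (h.eigenvectorUnitary : Matrix (Fin n) (Fin n) ℂ) i k *
      (starRingEnd ℂ) ((h.eigenvectorUnitary : Matrix (Fin n) (Fin n) ℂ) j k) *
      (g (h.eigenvalues k) : ℂ) := by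
  unfold fc
  rw [Matrix.mul_apply]
  congr 1
  ext k
  rw [Matrix.mul_apply, Finset.sum_mul]
  rw [Finset.sum_eq_single k]
  · simp [Matrix.diagonal, Matrix.star_apply]
    ring
  · intro b _ hb
    simp [Matrix.diagonal_apply_ne _ hb]
  · simp

lemma unitary_entry_le_one (h : a.IsHermitian) (i k : Fin n) :
    ‖(h.eigenvectorUnitary : Matrix (Fin n) (Fin n) ℂ) i k‖ ≤ 1 := by
  have h1 := congr_fun (congr_fun (star_mul_self h) k) k
  rw [Matrix.mul_apply] at h1
  have h2 : ∑ l, Complex.normSq ((h.eigenvectorUnitary : Matrix (Fin n) (Fin n) ℂ) l k) = 1 := by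
    have := h1
    simp only [Matrix.star_apply, Matrix.one_apply_eq] at this
    have h3 : ∀ l, star ((h.eigenvectorUnitary : Matrix (Fin n) (Fin n) ℂ) l k) *
        (h.eigenvectorUnitary : Matrix (Fin n) (Fin n) ℂ) l k
        = (Complex.normSq ((h.eigenvectorUnitary : Matrix (Fin n) (Fin n) ℂ) l k) : ℂ) := by
      intro l
      rw [Complex.star_def, Complex.normSq_eq_conj_mul_self]
    rw [Finset.sum_congr rfl (fun l _ => h3 l)] at this
    exact_mod_cast this
  have h4 : Complex.normSq ((h.eigenvectorUnitary : Matrix (Fin n) (Fin n) ℂ) i k) ≤ 1 := by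
    rw [← h2]
    exact Finset.single_le_sum (f := fun l => Complex.normSq ((h.eigenvectorUnitary : Matrix (Fin n) (Fin n) ℂ) l k)) (fun l _ => Complex.normSq_nonneg _) (Finset.mem_univ i)
  rw [← Complex.sq_norm] at h4
  nlinarith [norm_nonneg ((h.eigenvectorUnitary : Matrix (Fin n) (Fin n) ℂ) i k)]


lemma quad_fc (h : a.IsHermitian) (g : ℝ → ℝ) (v : Fin n → ℂ) :
    star v ⬝ᵥ (fc h g *ᵥ v) = ∑ k, (g (h.eigenvalues k) : ℂ) *
      Complex.normSq ((star (h.eigenvectorUnitary : Matrix (Fin n) (Fin n) ℂ) *ᵥ v) k) := by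
  set U := (h.eigenvectorUnitary : Matrix (Fin n) (Fin n) ℂ) with hU
  set w := (star U) *ᵥ v with hw
  have key : star v ⬝ᵥ (fc h g *ᵥ v) = star w ⬝ᵥ ((Matrix.diagonal
      (fun i => (g (h.eigenvalues i) : ℂ))) *ᵥ w) := by
    unfold fc
    rw [← Matrix.mulVec_mulVec, ← Matrix.mulVec_mulVec]
    rw [Matrix.dotProduct_mulVec (star v) U]
    congr 1
    rw [hw, Matrix.star_mulVec]
    rw [Matrix.star_eq_conjTranspose, Matrix.conjTranspose_conjTranspose]
  rw [key]
  simp only [dotProduct, Matrix.mulVec_diagonal, Pi.star_apply]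
  congr 1; funext k
  rw [Complex.star_def]
  have hrg : (starRingEnd ℂ) (w k) * ((g (h.eigenvalues k):ℂ) * w k)
      = (g (h.eigenvalues k):ℂ) * ((starRingEnd ℂ) (w k) * w k) := by ring
  rw [hrg, ← Complex.normSq_eq_conj_mul_self]

lemma sum_normSq_eq (h : a.IsHermitian) (v : Fin n → ℂ) :
    ∑ k, Complex.normSq ((star (h.eigenvectorUnitary : Matrix (Fin n) (Fin n) ℂ) *ᵥ v) k)
      = ∑ i, Complex.normSq (v i) := by
  have h1 := quad_fc h (fun _ => 1) v
  rw [fc_one h] at h1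
  have h2 : star v ⬝ᵥ ((1 : Matrix (Fin n) (Fin n) ℂ) *ᵥ v) = ∑ i, (Complex.normSq (v i) : ℂ) := by
    rw [Matrix.one_mulVec]
    simp only [dotProduct, Pi.star_apply]
    congr 1; funext i
    rw [Complex.star_def, ← Complex.normSq_eq_conj_mul_self]
  rw [h2] at h1
  have := h1.symm
  simp only [Complex.ofReal_one, one_mul] at this
  exact_mod_cast this

lemma quad_lower (h : a.IsHermitian) {ε : ℝ} (hev : ∀ k, ε ≤ h.eigenvalues k) (v : Fin n → ℂ) :
    ε * ∑ i, Complex.normSq (v i) ≤ (star v ⬝ᵥ (a *ᵥ v)).re := by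
  have h1 := quad_fc h (fun r => r) v
  rw [fc_id h] at h1
  rw [h1]
  rw [Complex.re_sum]
  have : ∀ k, ((h.eigenvalues k : ℂ) *
      Complex.normSq ((star (h.eigenvectorUnitary : Matrix (Fin n) (Fin n) ℂ) *ᵥ v) k)).re
      = h.eigenvalues k *
      Complex.normSq ((star (h.eigenvectorUnitary : Matrix (Fin n) (Fin n) ℂ) *ᵥ v) k) := by
    intro k
    rw [← Complex.ofReal_mul]
    exact Complex.ofReal_re _
  rw [Finset.sum_congr rfl (fun k _ => this k)]
  rw [← sum_normSq_eq h v, Finset.mul_sum]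
  apply Finset.sum_le_sum
  intro k _
  exact mul_le_mul_of_nonneg_right (hev k) (Complex.normSq_nonneg _)

lemma eig_lower {b : Matrix (Fin n) (Fin n) ℂ} (hb : b.IsHermitian) {ε : ℝ}
    (hq : ∀ v : Fin n → ℂ, ε * ∑ i, Complex.normSq (v i) ≤ (star v ⬝ᵥ (b *ᵥ v)).re) :
    ∀ k, ε ≤ hb.eigenvalues k := by
  intro k
  have hval := hb.eigenvalues_eq k
  set v : Fin n → ℂ := ⇑(hb.eigenvectorBasis k) with hv
  have hnorm : ∑ i, Complex.normSq (v i) = 1 := by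
    have h1 : ‖hb.eigenvectorBasis k‖ = 1 := hb.eigenvectorBasis.orthonormal.1 k
    have h2 := EuclideanSpace.norm_eq (hb.eigenvectorBasis k)
    rw [h1] at h2
    have h3 : Real.sqrt (∑ i, ‖v i‖ ^ 2) = 1 := h2.symm
    have h4 : (∑ i, ‖v i‖ ^ 2) = 1 := by
      rw [Real.sqrt_eq_one] at h3
      exact h3
    rw [← h4]
    congr 1; funext i
    rw [← Complex.sq_norm]
  have := hq v
  rw [hnorm, mul_one] at this
  rw [hval]
  exact le_trans this (le_of_eq rfl)

lemma eigenvalues_fc_inv_entry_bound {b : Matrix (Fin n) (Fin n) ℂ} (hb : b.IsHermitian)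
    {ε : ℝ} (hε : 0 < ε) (hev : ∀ k, ε ≤ hb.eigenvalues k) {u : ℝ} (hu : 0 ≤ u) :
    (b + (u:ℂ) • 1)⁻¹ = fc hb (fun r => (r + u)⁻¹) ∧
    ∀ i j, ‖(b + (u:ℂ) • 1)⁻¹ i j‖ ≤ n * (ε + u)⁻¹ := by
  have hne : ∀ k, hb.eigenvalues k + u ≠ 0 := by
    intro k
    have h0 := hev k
    have h1 : (0:ℝ) < hb.eigenvalues k + u := by linarith
    exact ne_of_gt h1
  have heq : (b + (u:ℂ) • 1)⁻¹ = fc hb (fun r => (r + u)⁻¹) := by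
    rw [add_smul_one_eq_fc hb u, fc_inv hb _ hne]
  refine ⟨heq, fun i j => ?_⟩
  rw [heq, fc_apply]
  refine le_trans (norm_sum_le _ _) ?_
  have hterm : ∀ k, ‖(hb.eigenvectorUnitary : Matrix (Fin n) (Fin n) ℂ) i k *
      (starRingEnd ℂ) ((hb.eigenvectorUnitary : Matrix (Fin n) (Fin n) ℂ) j k) *
      (((hb.eigenvalues k + u)⁻¹ : ℝ) : ℂ)‖ ≤ (ε + u)⁻¹ := by
    intro k
    rw [norm_mul, norm_mul]
    have h1 := unitary_entry_le_one hb i k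
    have h2 : ‖(starRingEnd ℂ) ((hb.eigenvectorUnitary : Matrix (Fin n) (Fin n) ℂ) j k)‖ ≤ 1 := by
      rw [Complex.norm_conj]; exact unitary_entry_le_one hb j k
    have h3 : ‖(((hb.eigenvalues k + u)⁻¹ : ℝ) : ℂ)‖ ≤ (ε + u)⁻¹ := by
      rw [Complex.norm_real, Real.norm_eq_abs]
      have hk := hev k
      have hpos : (0:ℝ) < hb.eigenvalues k + u := by linarith
      rw [abs_of_pos (by positivity)]
      exact inv_anti₀ (by linarith) (by linarith)
    calc ‖_‖ * ‖_‖ * ‖_‖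
        ≤ 1 * 1 * (ε + u)⁻¹ := by
          gcongr <;> first | exact h1 | exact h2 | exact h3 | positivity
      _ = (ε + u)⁻¹ := by ring
  refine le_trans (Finset.sum_le_sum (fun k _ => hterm k)) ?_
  rw [Finset.sum_const, Finset.card_univ, Fintype.card_fin]
  simp [nsmul_eq_mul]

end FCAux

lemma contOn_inv_shift {p : ℝ} (hp : 0 < p) :
    ContinuousOn (fun u : ℝ => (p + u)⁻¹) (Ioi 0) := by
  refine ContinuousOn.inv₀ ((continuous_const.add continuous_id).continuousOn) ?_
  intro u hu
  have : (0:ℝ) < u := hu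
  positivity

lemma inv_shift_le {p q u : ℝ} (hp : 0 < p) (hpq : p ≤ q) (hu : 0 ≤ u) :
    (q + u)⁻¹ ≤ (p + u)⁻¹ := by
  have h1 : (0:ℝ) < p + u := by positivity
  exact inv_anti₀ h1 (by linarith)

/-- integrability of `(p+u)⁻²` on `Ioi 0` -/
lemma intOn_sq {p : ℝ} (hp : 0 < p) :
    IntegrableOn (fun u : ℝ => ((p + u)⁻¹) ^ 2) (Ioi 0) := by
  have hderiv : ∀ u ∈ Ici (0:ℝ), HasDerivAt (fun v : ℝ => -(p + v)⁻¹) (((p + u)⁻¹) ^ 2) u := by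
    intro u hu
    have hu' : (0:ℝ) ≤ u := hu
    have hpu : p + u ≠ 0 := by positivity
    have h1 : HasDerivAt (fun v : ℝ => p + v) 1 u := by
      simpa using (hasDerivAt_id u).const_add p
    have := (h1.inv hpu).neg
    exact this.congr_deriv (by rw [inv_pow]; ring)
  have hpos : ∀ u ∈ Ioi (0:ℝ), 0 ≤ ((p + u)⁻¹) ^ 2 := fun u _ => sq_nonneg _
  have htend : Tendsto (fun v : ℝ => -(p + v)⁻¹) atTop (𝓝 0) := by
    have : Tendsto (fun v : ℝ => p + v) atTop atTop := tendsto_atTop_add_const_left _ _ tendsto_id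
    simpa using (this.inv_tendsto_atTop).neg
  exact integrableOn_Ioi_deriv_of_nonneg' hderiv hpos htend

/-- integrability of `(p+u)⁻¹(q+u)⁻¹` on `Ioi 0` -/
lemma intOn_inv_mul_inv {p q : ℝ} (hp : 0 < p) (hq : 0 < q) :
    IntegrableOn (fun u : ℝ => (p + u)⁻¹ * (q + u)⁻¹) (Ioi 0) := by
  set r := min p q with hr
  have hr0 : 0 < r := lt_min hp hq
  have hmeas : AEStronglyMeasurable (fun u : ℝ => (p + u)⁻¹ * (q + u)⁻¹)
      (volume.restrict (Ioi 0)) :=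
    ((contOn_inv_shift hp).mul (contOn_inv_shift hq)).aestronglyMeasurable measurableSet_Ioi
  refine Integrable.mono (intOn_sq hr0) hmeas ?_
  filter_upwards [ae_restrict_mem measurableSet_Ioi] with u hu
  have hu' : (0:ℝ) < u := hu
  have h1 : (0:ℝ) < p + u := by positivity
  have h2 : (0:ℝ) < q + u := by positivity
  have h3 : (0:ℝ) < r + u := by positivity
  rw [Real.norm_eq_abs, Real.norm_eq_abs, abs_of_pos (by positivity), abs_of_pos (by positivity), sq]
  exact mul_le_mul (inv_shift_le hr0 (min_le_left _ _) hu'.le)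
    (inv_shift_le hr0 (min_le_right _ _) hu'.le) (by positivity) (by positivity)

lemma int_one {p : ℝ} (hp : 0 < p) :
    ∫ u in Ioi (0:ℝ), p * ((p + u)⁻¹) ^ 2 = 1 := by
  have hderiv : ∀ u ∈ Ici (0:ℝ), HasDerivAt (fun v : ℝ => -p * (p + v)⁻¹) (p * ((p + u)⁻¹) ^ 2) u := by
    intro u hu
    have hu' : (0:ℝ) ≤ u := hu
    have hpu : p + u ≠ 0 := by positivity
    have h1 : HasDerivAt (fun v : ℝ => p + v) 1 u := by
      simpa using (hasDerivAt_id u).const_add p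
    have := (h1.inv hpu).const_mul (-p)
    exact this.congr_deriv (by rw [inv_pow]; ring)
  have htend : Tendsto (fun v : ℝ => -p * (p + v)⁻¹) atTop (𝓝 0) := by
    have : Tendsto (fun v : ℝ => p + v) atTop atTop := tendsto_atTop_add_const_left _ _ tendsto_id
    simpa using (this.inv_tendsto_atTop).const_mul (-p)
  have hint : IntegrableOn (fun u : ℝ => p * ((p + u)⁻¹) ^ 2) (Ioi 0) :=
    (intOn_sq hp).const_mul p
  have := integral_Ioi_of_hasDerivAt_of_tendsto' hderiv hint htend
  rw [this]
  field_simp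
  ring

lemma int_log {l : ℝ} (hl : 0 < l) :
    ∫ u in Ioi (0:ℝ), ((1 + u)⁻¹ - (l + u)⁻¹) = Real.log l := by
  set p := min 1 l with hp
  have hp0 : 0 < p := lt_min one_pos hl
  have hderiv : ∀ u ∈ Ici (0:ℝ), HasDerivAt (fun v : ℝ => Real.log (1 + v) - Real.log (l + v))
      ((1 + u)⁻¹ - (l + u)⁻¹) u := by
    intro u hu
    have hu0 : (0:ℝ) ≤ u := hu
    have h1 : HasDerivAt (fun v : ℝ => 1 + v) 1 u := by simpa using (hasDerivAt_id u).const_add (1:ℝ)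
    have h2 : HasDerivAt (fun v : ℝ => l + v) 1 u := by simpa using (hasDerivAt_id u).const_add l
    have e1 : (1:ℝ) + u ≠ 0 := by positivity
    have e2 : l + u ≠ 0 := by positivity
    have := (h1.log e1).sub (h2.log e2)
    simpa [Pi.sub_def] using this
  have hint : IntegrableOn (fun u : ℝ => (1 + u)⁻¹ - (l + u)⁻¹) (Ioi 0) := by
    have hmeas : AEStronglyMeasurable (fun u : ℝ => (1 + u)⁻¹ - (l + u)⁻¹)
        (volume.restrict (Ioi 0)) :=
      ((contOn_inv_shift one_pos).sub (contOn_inv_shift hl)).aestronglyMeasurable measurableSet_Ioi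
    refine Integrable.mono (((intOn_sq hp0).const_mul |1 - l|)) hmeas ?_
    filter_upwards [ae_restrict_mem measurableSet_Ioi] with u hu
    have hu0 : (0:ℝ) < u := hu
    have h1 : (0:ℝ) < 1 + u := by positivity
    have h2 : (0:ℝ) < l + u := by positivity
    have hpu : (0:ℝ) < p + u := by positivity
    have key : (1 + u)⁻¹ - (l + u)⁻¹ = (l - 1) * ((1+u)⁻¹ * (l+u)⁻¹) := by
      first
      | (field_simp; ring)
      | field_simp
    rw [Real.norm_eq_abs, Real.norm_eq_abs, key, abs_mul, abs_of_pos (show (0:ℝ) < (1+u)⁻¹*(l+u)⁻¹ by positivity)]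
    rw [abs_of_nonneg (show (0:ℝ) ≤ |1-l| * ((p+u)⁻¹)^2 by positivity)]
    have habs : |l - 1| = |1 - l| := abs_sub_comm _ _
    rw [habs, sq]
    refine mul_le_mul_of_nonneg_left ?_ (abs_nonneg _)
    exact mul_le_mul (inv_shift_le hp0 (min_le_left _ _) hu0.le)
      (inv_shift_le hp0 (min_le_right _ _) hu0.le) (by positivity) (by positivity)
  have htend : Tendsto (fun v : ℝ => Real.log (1 + v) - Real.log (l + v)) atTop (𝓝 0) := by
    have h : ∀ᶠ v in atTop, Real.log (1 + v) - Real.log (l + v) = Real.log ((1 + v) / (l + v)) := by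
      filter_upwards [eventually_gt_atTop 0] with v hv
      rw [Real.log_div (by positivity) (by positivity)]
    rw [tendsto_congr' h]
    have hratio : Tendsto (fun v : ℝ => (1 + v) / (l + v)) atTop (𝓝 1) := by
      have heq : (fun v : ℝ => (1 + v) / (l + v)) =ᶠ[atTop] fun v => 1 + (1 - l)/(l + v) := by
        filter_upwards [eventually_gt_atTop 0] with v hv
        have h2 : (0:ℝ) < l + v := by positivity
        field_simp
        ring
      rw [tendsto_congr' heq]
      have h0 : Tendsto (fun v : ℝ => (1 - l)/(l + v)) atTop (𝓝 0) :=
        tendsto_const_nhds.div_atTop (tendsto_atTop_add_const_left _ _ tendsto_id)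
      simpa using (tendsto_const_nhds (x := (1:ℝ))).add h0
    have := (Real.continuousAt_log (by norm_num)).tendsto.comp hratio
    simpa [Function.comp_def] using this
  have := integral_Ioi_of_hasDerivAt_of_tendsto' hderiv hint htend
  rw [this]
  simp

namespace FCAux
variable {n : ℕ} {a : Matrix (Fin n) (Fin n) ℂ}

lemma fc_neg (h : a.IsHermitian) (g : ℝ → ℝ) : -fc h g = fc h (fun r => -g r) := by
  have := fc_smul h (-1) g
  simpa using this

lemma fc_sub (h : a.IsHermitian) (g₁ g₂ : ℝ → ℝ) :
    fc h g₁ - fc h g₂ = fc h (fun r => g₁ r - g₂ r) := by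
  rw [sub_eq_add_neg, fc_neg h g₂, fc_add h]
  exact fc_congr h fun i => by ring

lemma const_smul_one_eq_fc (h : a.IsHermitian) (r : ℝ) :
    ((r:ℝ):ℂ) • (1 : Matrix (Fin n) (Fin n) ℂ) = fc h (fun _ => r) := by
  rw [← fc_one h, fc_smul h]
  exact fc_congr h fun i => by ring

/-- generic: entrywise integral of a family `u ↦ fc h (f u)` -/
lemma integral_fc_entry (h : a.IsHermitian) (f : ℝ → ℝ → ℝ) (F : ℝ → ℝ)
    (hint : ∀ k, IntegrableOn (fun u => f u (h.eigenvalues k)) (Ioi 0))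
    (hval : ∀ k, ∫ u in Ioi (0:ℝ), f u (h.eigenvalues k) = F (h.eigenvalues k)) (i j : Fin n) :
    IntegrableOn (fun u => (fc h (f u)) i j) (Ioi 0) ∧
    ∫ u in Ioi (0:ℝ), (fc h (f u)) i j = (fc h F) i j := by
  set U := (h.eigenvectorUnitary : Matrix (Fin n) (Fin n) ℂ) with hU
  have hterm : ∀ k : Fin n, Integrable (fun u => (U i k * (starRingEnd ℂ) (U j k)) *
      ((f u (h.eigenvalues k) : ℝ) : ℂ)) (volume.restrict (Ioi 0)) := by
    intro k
    exact ((hint k).ofReal (𝕜 := ℂ)).const_mul _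
  have hfun : ∀ u, (fc h (f u)) i j = ∑ k, (U i k * (starRingEnd ℂ) (U j k)) *
      ((f u (h.eigenvalues k) : ℝ) : ℂ) := fun u => fc_apply h (f u) i j
  constructor
  · rw [show (fun u => (fc h (f u)) i j) = fun u => ∑ k, (U i k * (starRingEnd ℂ) (U j k)) *
        ((f u (h.eigenvalues k) : ℝ) : ℂ) from funext hfun]
    exact integrable_finset_sum _ (fun k _ => hterm k)
  · rw [show (fun u => (fc h (f u)) i j) = fun u => ∑ k, (U i k * (starRingEnd ℂ) (U j k)) *
        ((f u (h.eigenvalues k) : ℝ) : ℂ) from funext hfun]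
    rw [integral_finset_sum _ (fun k _ => hterm k)]
    rw [fc_apply h F i j]
    congr 1; funext k
    rw [MeasureTheory.integral_const_mul,
      show (∫ u in Ioi (0:ℝ), ((f u (h.eigenvalues k):ℝ):ℂ))
        = ((∫ u in Ioi (0:ℝ), f u (h.eigenvalues k) : ℝ) : ℂ) from integral_ofReal, hval k]

lemma intOn_diff {l : ℝ} (hl : 0 < l) :
    IntegrableOn (fun u : ℝ => (1 + u)⁻¹ - (l + u)⁻¹) (Ioi 0) := by
  set p := min 1 l with hp
  have hp0 : 0 < p := lt_min one_pos hl
  have hmeas : AEStronglyMeasurable (fun u : ℝ => (1 + u)⁻¹ - (l + u)⁻¹)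
      (volume.restrict (Ioi 0)) :=
    ((contOn_inv_shift one_pos).sub (contOn_inv_shift hl)).aestronglyMeasurable measurableSet_Ioi
  refine Integrable.mono (((intOn_sq hp0).const_mul |1 - l|)) hmeas ?_
  filter_upwards [ae_restrict_mem measurableSet_Ioi] with u hu
  have hu0 : (0:ℝ) < u := hu
  have h1 : (0:ℝ) < 1 + u := by positivity
  have h2 : (0:ℝ) < l + u := by positivity
  have hpu : (0:ℝ) < p + u := by positivity
  have key : (1 + u)⁻¹ - (l + u)⁻¹ = (l - 1) * ((1+u)⁻¹ * (l+u)⁻¹) := by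
    field_simp
    ring
  rw [Real.norm_eq_abs, Real.norm_eq_abs, key, abs_mul,
    abs_of_pos (show (0:ℝ) < (1+u)⁻¹*(l+u)⁻¹ by positivity)]
  rw [abs_of_nonneg (show (0:ℝ) ≤ |1-l| * ((p+u)⁻¹)^2 by positivity)]
  rw [abs_sub_comm, sq]
  refine mul_le_mul_of_nonneg_left ?_ (abs_nonneg _)
  exact mul_le_mul (inv_shift_le hp0 (min_le_left _ _) hu0.le)
    (inv_shift_le hp0 (min_le_right _ _) hu0.le) (by positivity) (by positivity)

/-- log entry formula -/
lemma matLog_entry (h : a.IsHermitian) (hpos : ∀ k, 0 < h.eigenvalues k) (i j : Fin n) :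
    IntegrableOn (fun u => (fc h (fun r => (1+u)⁻¹ - (r+u)⁻¹)) i j) (Ioi 0) ∧
    ∫ u in Ioi (0:ℝ), (fc h (fun r => (1+u)⁻¹ - (r+u)⁻¹)) i j = matLog a i j := by
  have := integral_fc_entry h (fun u r => (1+u)⁻¹ - (r+u)⁻¹) Real.log
    (fun k => intOn_diff (hpos k)) (fun k => int_log (hpos k)) i j
  rw [matLog_eq_fc h]
  exact this

lemma resolvent_sq_entry (h : a.IsHermitian) (hpos : ∀ k, 0 < h.eigenvalues k) (i j : Fin n) :
    IntegrableOn (fun u => (fc h (fun r => r * ((r+u)⁻¹)^2)) i j) (Ioi 0) ∧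
    ∫ u in Ioi (0:ℝ), (fc h (fun r => r * ((r+u)⁻¹)^2)) i j = (1 : Matrix (Fin n) (Fin n) ℂ) i j := by
  have := integral_fc_entry h (fun u r => r * ((r+u)⁻¹)^2) (fun _ => 1)
    (fun k => (intOn_sq (hpos k)).const_mul _) (fun k => int_one (hpos k)) i j
  rw [← fc_one h]
  exact this

/-- identification of `fc` with resolvent difference -/
lemma fc_res_diff (h : a.IsHermitian) (hpos : ∀ k, 0 < h.eigenvalues k) {u : ℝ} (hu : 0 ≤ u) :
    fc h (fun r => (1+u)⁻¹ - (r+u)⁻¹)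
      = (((1+u)⁻¹ : ℝ) : ℂ) • (1 : Matrix (Fin n) (Fin n) ℂ) - (a + (u:ℂ) • 1)⁻¹ := by
  have hne : ∀ k, h.eigenvalues k + u ≠ 0 := fun k => by
    have := hpos k; have : (0:ℝ) < h.eigenvalues k + u := by linarith
    exact ne_of_gt this
  have e1 : (((1+u)⁻¹ : ℝ) : ℂ) • (1 : Matrix (Fin n) (Fin n) ℂ) = fc h (fun _ => (1+u)⁻¹) :=
    const_smul_one_eq_fc h ((1+u)⁻¹)
  have e2 : (a + (u:ℂ) • 1)⁻¹ = fc h (fun r => (r+u)⁻¹) := by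
    rw [add_smul_one_eq_fc h u, fc_inv h _ hne]
  rw [e1, e2, fc_sub h]

lemma fc_res_sq (h : a.IsHermitian) (hpos : ∀ k, 0 < h.eigenvalues k) {u : ℝ} (hu : 0 ≤ u) :
    fc h (fun r => r * ((r+u)⁻¹)^2)
      = (a + (u:ℂ) • 1)⁻¹ * a * (a + (u:ℂ) • 1)⁻¹ := by
  have hne : ∀ k, h.eigenvalues k + u ≠ 0 := fun k => by
    have := hpos k; have : (0:ℝ) < h.eigenvalues k + u := by linarith
    exact ne_of_gt this
  have e2 : (a + (u:ℂ) • 1)⁻¹ = fc h (fun r => (r+u)⁻¹) := by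
    rw [add_smul_one_eq_fc h u, fc_inv h _ hne]
  calc fc h (fun r => r * ((r+u)⁻¹)^2)
      = fc h (fun r => (r+u)⁻¹) * fc h (fun r => r) * fc h (fun r => (r+u)⁻¹) := by
        rw [fc_mul h, fc_mul h]
        exact fc_congr h fun i => by ring
    _ = (a + (u:ℂ) • 1)⁻¹ * a * (a + (u:ℂ) • 1)⁻¹ := by rw [fc_id h, ← e2]

end FCAux

namespace FCAux
variable {n : ℕ} {a : Matrix (Fin n) (Fin n) ℂ}

lemma triple_entry_expand (A S C : Matrix (Fin n) (Fin n) ℂ) (i j : Fin n) :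
    (A * S * C) i j = ∑ k, ∑ l, A i k * S k l * C l j := by
  rw [Matrix.mul_apply]
  simp only [Matrix.mul_apply, Finset.sum_mul]
  rw [Finset.sum_comm]

lemma entry_triple_bound (A S C : Matrix (Fin n) (Fin n) ℂ) {KA KC : ℝ}
    (hA : ∀ i j, ‖A i j‖ ≤ KA) (hC : ∀ i j, ‖C i j‖ ≤ KC)
    (hKA : 0 ≤ KA) (hKC : 0 ≤ KC) (i j : Fin n) :
    ‖(A * S * C) i j‖ ≤ KA * (∑ k, ∑ l, ‖S k l‖) * KC := by
  rw [triple_entry_expand]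
  calc ‖∑ k, ∑ l, A i k * S k l * C l j‖
      ≤ ∑ k, ∑ l, ‖A i k * S k l * C l j‖ := by
        refine le_trans (norm_sum_le _ _) ?_
        exact Finset.sum_le_sum fun k _ => norm_sum_le _ _
    _ ≤ ∑ k, ∑ l, KA * ‖S k l‖ * KC := by
        refine Finset.sum_le_sum fun k _ => Finset.sum_le_sum fun l _ => ?_
        rw [norm_mul, norm_mul]
        have h1 := hA i k
        have h2 := hC l j
        have h3 := norm_nonneg (S k l)
        have h4 := norm_nonneg (A i k)
        have h5 := norm_nonneg (C l j)
        have h6 : ‖A i k‖ * ‖S k l‖ ≤ KA * ‖S k l‖ :=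
          mul_le_mul_of_nonneg_right h1 h3
        have h7 : KA * ‖S k l‖ * ‖C l j‖ ≤ KA * ‖S k l‖ * KC :=
          mul_le_mul_of_nonneg_left h2 (by positivity)
        nlinarith
    _ = KA * (∑ k, ∑ l, ‖S k l‖) * KC := by
        simp only [Finset.mul_sum, Finset.sum_mul]

lemma inv_diff (A A' Bm B' : Matrix (Fin n) (Fin n) ℂ)
    (hA : A * A' = 1) (hB : B' * Bm = 1) :
    A' - B' = B' * (Bm - A) * A' := by
  have h1 : B' * Bm * A' = A' := by rw [hB, one_mul]
  have h2 : B' * A * A' = B' := by rw [Matrix.mul_assoc, hA, Matrix.mul_one]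
  calc A' - B' = B' * Bm * A' - B' * A * A' := by rw [h1, h2]
    _ = B' * (Bm - A) * A' := by rw [Matrix.mul_sub, Matrix.sub_mul]

lemma tendsto_mul3_entry {ι : Type*} {l : Filter ι} (A S : ι → Matrix (Fin n) (Fin n) ℂ)
    (A0 S0 C : Matrix (Fin n) (Fin n) ℂ)
    (hA : ∀ p q, Tendsto (fun t => A t p q) l (𝓝 (A0 p q)))
    (hS : ∀ p q, Tendsto (fun t => S t p q) l (𝓝 (S0 p q))) (i j : Fin n) :
    Tendsto (fun t => (A t * S t * C) i j) l (𝓝 ((A0 * S0 * C) i j)) := by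
  simp only [triple_entry_expand]
  refine tendsto_finset_sum _ fun k _ => tendsto_finset_sum _ fun m _ => ?_
  exact ((hA i k).mul (hS k m)).mul tendsto_const_nhds


lemma inv_add_eq_fc {b : Matrix (Fin n) (Fin n) ℂ} (hb : b.IsHermitian)
    (hev : ∀ k, 0 < hb.eigenvalues k) {u : ℝ} (hu : 0 ≤ u) :
    (b + (u:ℂ) • 1)⁻¹ = fc hb (fun r => (r + u)⁻¹) := by
  have hne : ∀ k, hb.eigenvalues k + u ≠ 0 := fun k => by
    have := hev k; have : (0:ℝ) < hb.eigenvalues k + u := by linarith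
    exact ne_of_gt this
  rw [add_smul_one_eq_fc hb u, fc_inv hb _ hne]

lemma mul_inv_add_one {b : Matrix (Fin n) (Fin n) ℂ} (hb : b.IsHermitian)
    (hev : ∀ k, 0 < hb.eigenvalues k) {u : ℝ} (hu : 0 ≤ u) :
    (b + (u:ℂ) • 1) * (b + (u:ℂ) • 1)⁻¹ = 1 ∧
    (b + (u:ℂ) • 1)⁻¹ * (b + (u:ℂ) • 1) = 1 := by
  have hne : ∀ k, hb.eigenvalues k + u ≠ 0 := fun k => by
    have := hev k; have : (0:ℝ) < hb.eigenvalues k + u := by linarith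
    exact ne_of_gt this
  constructor
  · rw [inv_add_eq_fc hb hev hu, add_smul_one_eq_fc hb u, fc_mul hb]
    rw [fc_congr hb (g₂ := fun _ => 1) (fun k => mul_inv_cancel₀ (hne k))]
    exact fc_one hb
  · rw [inv_add_eq_fc hb hev hu, add_smul_one_eq_fc hb u, fc_mul hb]
    rw [fc_congr hb (g₂ := fun _ => 1) (fun k => inv_mul_cancel₀ (hne k))]
    exact fc_one hb

lemma contOn_inv_entry {b : Matrix (Fin n) (Fin n) ℂ} (hb : b.IsHermitian)
    (hev : ∀ k, 0 < hb.eigenvalues k) (i j : Fin n) :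
    ContinuousOn (fun u : ℝ => ((b + (u:ℂ) • 1)⁻¹) i j) (Ioi 0) := by
  have hcont : ContinuousOn (fun u : ℝ => ∑ k,
      (hb.eigenvectorUnitary : Matrix (Fin n) (Fin n) ℂ) i k *
      (starRingEnd ℂ) ((hb.eigenvectorUnitary : Matrix (Fin n) (Fin n) ℂ) j k) *
      (((hb.eigenvalues k + u)⁻¹ : ℝ) : ℂ)) (Ioi 0) := by
    refine continuousOn_finset_sum _ fun k _ => ?_
    exact continuousOn_const.mul
      (Complex.continuous_ofReal.comp_continuousOn (contOn_inv_shift (hev k)))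
  refine hcont.congr fun u hu => ?_
  have hu0 : (0:ℝ) ≤ u := le_of_lt hu
  rw [inv_add_eq_fc hb hev hu0, fc_apply]

lemma intOn_inv_mul_mul_inv {b : Matrix (Fin n) (Fin n) ℂ} (hb : b.IsHermitian)
    {ε : ℝ} (hε : 0 < ε) (hev : ∀ k, ε ≤ hb.eigenvalues k)
    (S : Matrix (Fin n) (Fin n) ℂ) (i j : Fin n) :
    IntegrableOn (fun u : ℝ =>
      ((b + (u:ℂ) • 1)⁻¹ * S * (b + (u:ℂ) • 1)⁻¹) i j) (Ioi 0) := by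
  have hevpos : ∀ k, 0 < hb.eigenvalues k := fun k => lt_of_lt_of_le hε (hev k)
  have hmeas : AEStronglyMeasurable (fun u : ℝ =>
      ((b + (u:ℂ) • 1)⁻¹ * S * (b + (u:ℂ) • 1)⁻¹) i j) (volume.restrict (Ioi 0)) := by
    refine ContinuousOn.aestronglyMeasurable ?_ measurableSet_Ioi
    have : ContinuousOn (fun u : ℝ => ∑ k, ∑ l, ((b + (u:ℂ) • 1)⁻¹) i k * S k l *
        ((b + (u:ℂ) • 1)⁻¹) l j) (Ioi 0) := by
      refine continuousOn_finset_sum _ fun k _ => continuousOn_finset_sum _ fun m _ => ?_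
      exact ((contOn_inv_entry hb hevpos i k).mul continuousOn_const).mul
        (contOn_inv_entry hb hevpos m j)
    exact this.congr fun u hu => triple_entry_expand _ _ _ i j
  set K : ℝ := ∑ k, ∑ l, ‖S k l‖ with hK
  have hK0 : 0 ≤ K := Finset.sum_nonneg fun k _ => Finset.sum_nonneg fun l _ =>
    norm_nonneg _
  refine Integrable.mono (((intOn_inv_mul_inv hε hε).const_mul
    (((n:ℝ) * K * n))) ) hmeas ?_
  filter_upwards [ae_restrict_mem measurableSet_Ioi] with u hu
  have hu0 : (0:ℝ) ≤ u := le_of_lt hu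
  have hbd := (eigenvalues_fc_inv_entry_bound hb hε hev hu0).2
  have hn0 : (0:ℝ) ≤ (n:ℝ) * (ε + u)⁻¹ := by positivity
  have h1 : ‖((b + (u:ℂ) • 1)⁻¹ * S * (b + (u:ℂ) • 1)⁻¹) i j‖
      ≤ ((n:ℝ) * (ε + u)⁻¹) * K * ((n:ℝ) * (ε + u)⁻¹) :=
    entry_triple_bound _ S _ hbd hbd hn0 hn0 i j
  refine h1.trans (le_of_eq ?_) |>.trans (le_abs_self _)
  ring

/-- bound for the real part of a quadratic form -/
lemma quad_abs_bound (d : Matrix (Fin n) (Fin n) ℂ) (v : Fin n → ℂ) :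
    |(star v ⬝ᵥ (d *ᵥ v)).re| ≤ (∑ p, ∑ q, ‖d p q‖) * ∑ i, Complex.normSq (v i) := by
  set S : ℝ := ∑ i, Complex.normSq (v i) with hS
  have hS0 : 0 ≤ S := Finset.sum_nonneg fun i _ => Complex.normSq_nonneg _
  have hvS : ∀ p, Complex.normSq (v p) ≤ S := fun p =>
    Finset.single_le_sum (f := fun i => Complex.normSq (v i))
      (fun i _ => Complex.normSq_nonneg _) (Finset.mem_univ p)
  refine le_trans (Complex.abs_re_le_norm _) ?_
  have hexp : star v ⬝ᵥ (d *ᵥ v) = ∑ p, ∑ q, star (v p) * (d p q * v q) := by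
    simp only [dotProduct, Matrix.mulVec, Pi.star_apply, Finset.mul_sum]
    try rfl
  rw [hexp]
  refine le_trans (norm_sum_le _ _) ?_
  refine le_trans (Finset.sum_le_sum fun p _ => norm_sum_le _ _) ?_
  rw [Finset.sum_mul]
  refine Finset.sum_le_sum fun p _ => ?_
  rw [Finset.sum_mul]
  refine Finset.sum_le_sum fun q _ => ?_
  rw [norm_mul, norm_mul]
  have habs : ∀ z : ℂ, ‖star z‖ = ‖z‖ := fun z => Complex.norm_conj z
  rw [habs]
  have h1 : ‖v p‖ * ‖v q‖ ≤ S := by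
    have hp := hvS p
    have hq := hvS q
    rw [← Complex.sq_norm] at hp hq
    have h0p := norm_nonneg (v p)
    have h0q := norm_nonneg (v q)
    nlinarith
  calc ‖v p‖ * (‖d p q‖ * ‖v q‖)
      = ‖d p q‖ * (‖v p‖ * ‖v q‖) := by ring
    _ ≤ ‖d p q‖ * S := by
        exact mul_le_mul_of_nonneg_left h1 (norm_nonneg _)

end FCAux

end Helpers

open FCAux in
/-- Along the noncommutative Ricci flow starting at `c₀ = c(0)`, `t ↦ log c(t)` is
differentiable at `0`, and the scalar curvature `R₀ = −(d/dt) log c(t)|_{t=0}` satisfies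
`τ(c₀·R₀) = 0`. -/
theorem scalar_curvature_average_zero (n : ℕ) (x y : Matrix (Fin n) (Fin n) ℂ)
    (hx : x.IsHermitian) (hy : y.IsHermitian)
    (c : ℝ → Matrix (Fin n) (Fin n) ℂ)
    (hpos : ∀ t ∈ Set.Ici (0 : ℝ), (c t).PosDef)
    (hflow : ∀ t ∈ Set.Ici (0 : ℝ), ∀ i j, HasDerivWithinAt (fun s => c s i j)
      ((-(lap x y (matLog (c t)))) i j) (Set.Ici (0 : ℝ)) t) :
    ∃ R₀ : Matrix (Fin n) (Fin n) ℂ,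
      (∀ i j, HasDerivWithinAt (fun s => matLog (c s) i j) ((-R₀) i j)
        (Set.Ici (0 : ℝ)) 0) ∧
      (c 0 * R₀).trace = 0 := by
  classical
  by_cases hn0 : n = 0
  · subst hn0
    exact ⟨0, fun i j => i.elim0, by simp [Matrix.trace]⟩
  have hn : 0 < n := Nat.pos_of_ne_zero hn0
  haveI : Nonempty (Fin n) := ⟨⟨0, hn⟩⟩
  have h0pos : (c 0).PosDef := hpos 0 Set.self_mem_Ici
  have h0 : (c 0).IsHermitian := h0pos.1
  have hevpos0 : ∀ k, 0 < h0.eigenvalues k := fun k => h0pos.eigenvalues_pos k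
  set ε0 : ℝ := Finset.univ.inf' Finset.univ_nonempty h0.eigenvalues with hε0def
  have hε0 : 0 < ε0 := (Finset.lt_inf'_iff _).mpr (fun k _ => hevpos0 k)
  have hev0 : ∀ k, ε0 ≤ h0.eigenvalues k := fun k => Finset.inf'_le _ (Finset.mem_univ k)
  set ε : ℝ := ε0 / 2 with hεdef
  have hε : 0 < ε := by positivity
  set B : Matrix (Fin n) (Fin n) ℂ := -(lap x y (matLog (c 0))) with hBdef
  set Pu : ℝ → Matrix (Fin n) (Fin n) ℂ := fun u => (c 0 + (u:ℂ) • 1)⁻¹ with hPudef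
  set D : Matrix (Fin n) (Fin n) ℂ :=
    Matrix.of (fun i j => ∫ u in Set.Ioi (0:ℝ), (Pu u * B * Pu u) i j) with hDdef
  set l : Filter ℝ := nhdsWithin 0 (Set.Ioi (0:ℝ)) with hldef
  have hle : l ≤ nhdsWithin 0 (Set.Ici (0:ℝ)) := nhdsWithin_mono 0 Set.Ioi_subset_Ici_self
  have hment : ∀ᶠ t in l, t ∈ Set.Ioi (0:ℝ) := eventually_mem_nhdsWithin
  have hcont : ∀ p q, Filter.Tendsto (fun t => c t p q) (nhdsWithin 0 (Set.Ici (0:ℝ)))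
      (nhds (c 0 p q)) := fun p q =>
    (hflow 0 Set.self_mem_Ici p q).continuousWithinAt
  -- sum of entry distances tends to 0
  set m : ℝ → ℝ := fun t => ∑ p, ∑ q, ‖c t p q - c 0 p q‖ with hmdef
  have hm0 : Filter.Tendsto m l (nhds 0) := by
    have key : ∀ p q : Fin n, Filter.Tendsto (fun t => ‖c t p q - c 0 p q‖) l
        (nhds 0) := by
      intro p q
      have h1 : Filter.Tendsto (fun t => c t p q - c 0 p q) l (nhds 0) := by
        have := ((hcont p q).mono_left hle).sub_const (c 0 p q)
        simpa using this
      have h2 := (continuous_norm.tendsto (0:ℂ)).comp h1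
      simpa [Function.comp_def] using h2
    have := tendsto_finset_sum (Finset.univ : Finset (Fin n))
      (fun p _ => tendsto_finset_sum (Finset.univ : Finset (Fin n)) (fun q _ => key p q))
    simpa using this
  -- slope entries tend to B entries
  have hSt : ∀ p q, Filter.Tendsto (fun t => (t⁻¹ • (c t - c 0)) p q) l (nhds (B p q)) := by
    intro p q
    have h1 := hflow 0 Set.self_mem_Ici p q
    rw [hasDerivWithinAt_iff_tendsto_slope, Set.Ici_sdiff_left] at h1
    have h2 : ∀ t : ℝ, slope (fun s => c s p q) 0 t = (t⁻¹ • (c t - c 0)) p q := by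
      intro t
      rw [slope_def_module]
      simp [Matrix.smul_apply, Matrix.sub_apply]
    rw [show (fun t => (t⁻¹ • (c t - c 0)) p q) = slope (fun s => c s p q) 0 from
      funext fun t => (h2 t).symm]
    exact h1
  -- eventual eigenvalue lower bound for c t
  have hεt : ∀ᶠ t in l, ∀ (hh : (c t).IsHermitian) (k : Fin n), ε ≤ hh.eigenvalues k := by
    have hsmall : ∀ᶠ t in l, m t < ε := hm0.eventually (gt_mem_nhds hε)
    filter_upwards [hment, hsmall] with t ht hmt
    intro hh k
    refine eig_lower hh (fun v => ?_) k
    set S : ℝ := ∑ i, Complex.normSq (v i) with hSdef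
    have hS0 : 0 ≤ S := Finset.sum_nonneg fun i _ => Complex.normSq_nonneg _
    have hsplit : star v ⬝ᵥ (c t *ᵥ v) =
        star v ⬝ᵥ (c 0 *ᵥ v) + star v ⬝ᵥ ((c t - c 0) *ᵥ v) := by
      rw [← dotProduct_add, ← Matrix.add_mulVec]
      have : c 0 + (c t - c 0) = c t := by abel
      rw [this]
    have h1 : ε0 * S ≤ (star v ⬝ᵥ (c 0 *ᵥ v)).re := quad_lower h0 hev0 v
    have h2 : |(star v ⬝ᵥ ((c t - c 0) *ᵥ v)).re| ≤ m t * S := by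
      have := quad_abs_bound (c t - c 0) v
      simpa [hmdef, Matrix.sub_apply] using this
    have h3 : (star v ⬝ᵥ (c t *ᵥ v)).re
        = (star v ⬝ᵥ (c 0 *ᵥ v)).re + (star v ⬝ᵥ ((c t - c 0) *ᵥ v)).re := by
      rw [hsplit, Complex.add_re]
    have h4 : m t * S ≤ ε * S := mul_le_mul_of_nonneg_right (le_of_lt hmt) hS0
    have h5 : -(m t * S) ≤ (star v ⬝ᵥ ((c t - c 0) *ᵥ v)).re := neg_le_of_abs_le h2
    rw [h3]
    have : ε0 * S = ε * S + ε * S := by rw [hεdef]; ring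
    linarith
  -- eventual bound on slope entry sums
  set K : ℝ := ∑ p, ∑ q, (‖B p q‖ + 1) with hKdef
  have hK0 : 0 ≤ K := Finset.sum_nonneg fun p _ => Finset.sum_nonneg fun q _ => by positivity
  have hKt : ∀ᶠ t in l, ∑ p, ∑ q, ‖(t⁻¹ • (c t - c 0)) p q‖ ≤ K := by
    have hev : ∀ᶠ t in l, ∀ p q : Fin n,
        dist ((t⁻¹ • (c t - c 0)) p q) (B p q) < 1 := by
      rw [Filter.eventually_all]
      intro p
      rw [Filter.eventually_all]
      intro q
      exact (Metric.tendsto_nhds.mp (hSt p q)) 1 one_pos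
    filter_upwards [hev] with t hdist
    refine Finset.sum_le_sum fun p _ => Finset.sum_le_sum fun q _ => ?_
    have h1 := hdist p q
    rw [Complex.dist_eq] at h1
    have h2 : ‖(t⁻¹ • (c t - c 0)) p q‖ - ‖B p q‖
        ≤ ‖(t⁻¹ • (c t - c 0)) p q - B p q‖ := by
      simpa using norm_sub_norm_le ((t⁻¹ • (c t - c 0)) p q) (B p q)
    linarith
  -- inverse entry bounds
  have hbd0 : ∀ (u : ℝ), 0 ≤ u → ∀ p q, ‖(Pu u) p q‖ ≤ (n:ℝ) * (ε0 + u)⁻¹ :=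
    fun u hu p q => (eigenvalues_fc_inv_entry_bound h0 hε0 hev0 hu).2 p q
  -- main tendsto for each entry
  have hmain : ∀ i j, Filter.Tendsto (slope (fun s => matLog (c s) i j) 0) l
      (nhds (D i j)) := by
    intro i j
    set F : ℝ → ℝ → ℂ := fun t u =>
      ((c t + (u:ℂ) • 1)⁻¹ * (t⁻¹ • (c t - c 0)) * Pu u) i j with hFdef
    have hDC : Filter.Tendsto (fun t => ∫ u in Set.Ioi (0:ℝ), F t u) l
        (nhds (∫ u in Set.Ioi (0:ℝ), (Pu u * B * Pu u) i j)) := by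
      refine MeasureTheory.tendsto_integral_filter_of_dominated_convergence
        (bound := fun u => ((n:ℝ) * (ε + u)⁻¹) * K * ((n:ℝ) * (ε0 + u)⁻¹)) ?_ ?_ ?_ ?_
      · -- measurability
        filter_upwards [hment, hεt] with t ht hevt
        have htI : t ∈ Set.Ici (0:ℝ) := Set.mem_Ici.mpr (le_of_lt ht)
        have hht : (c t).IsHermitian := (hpos t htI).1
        have hevtpos : ∀ k, 0 < hht.eigenvalues k := fun k =>
          lt_of_lt_of_le hε (hevt hht k)
        refine ContinuousOn.aestronglyMeasurable ?_ measurableSet_Ioi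
        have hc1 : ContinuousOn (fun u : ℝ => ∑ k, ∑ r, ((c t + (u:ℂ) • 1)⁻¹) i k *
            ((t⁻¹ • (c t - c 0)) k r) * ((Pu u) r j)) (Set.Ioi 0) := by
          refine continuousOn_finset_sum _ fun k _ => continuousOn_finset_sum _ fun r _ => ?_
          exact ((contOn_inv_entry hht hevtpos i k).mul continuousOn_const).mul
            (contOn_inv_entry h0 hevpos0 r j)
        exact hc1.congr fun u hu => triple_entry_expand _ _ _ i j
      · -- bound
        filter_upwards [hment, hεt, hKt] with t ht hevt hKb
        filter_upwards [MeasureTheory.ae_restrict_mem measurableSet_Ioi] with u hu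
        have hu0 : (0:ℝ) ≤ u := le_of_lt hu
        have htI : t ∈ Set.Ici (0:ℝ) := Set.mem_Ici.mpr (le_of_lt ht)
        have hht : (c t).IsHermitian := (hpos t htI).1
        have hbdt : ∀ p q, ‖((c t + (u:ℂ) • 1)⁻¹) p q‖ ≤ (n:ℝ) * (ε + u)⁻¹ :=
          fun p q => (eigenvalues_fc_inv_entry_bound hht hε (hevt hht) hu0).2 p q
        have hA0 : (0:ℝ) ≤ (n:ℝ) * (ε + u)⁻¹ := by positivity
        have hC0 : (0:ℝ) ≤ (n:ℝ) * (ε0 + u)⁻¹ := by positivity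
        have h1 := entry_triple_bound ((c t + (u:ℂ) • 1)⁻¹) (t⁻¹ • (c t - c 0)) (Pu u)
          hbdt (hbd0 u hu0) hA0 hC0 i j
        refine h1.trans ?_
        have h2 : ((n:ℝ) * (ε + u)⁻¹) * (∑ k, ∑ r, ‖(t⁻¹ • (c t - c 0)) k r‖)
            * ((n:ℝ) * (ε0 + u)⁻¹) ≤ ((n:ℝ) * (ε + u)⁻¹) * K * ((n:ℝ) * (ε0 + u)⁻¹) := by
          refine mul_le_mul_of_nonneg_right (mul_le_mul_of_nonneg_left hKb hA0) hC0
        exact h2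
      · -- integrable bound
        have := ((intOn_inv_mul_inv hε hε0).const_mul ((n:ℝ) * K * (n:ℝ)))
        refine this.congr (Filter.Eventually.of_forall fun u => by ring)
      · -- pointwise limit
        filter_upwards [MeasureTheory.ae_restrict_mem measurableSet_Ioi] with u hu
        have hu0 : (0:ℝ) ≤ u := le_of_lt hu
        refine tendsto_mul3_entry (fun t => (c t + (u:ℂ) • 1)⁻¹)
          (fun t => t⁻¹ • (c t - c 0)) (Pu u) B (Pu u) ?_ hSt i j
        intro p q
        rw [← tendsto_sub_nhds_zero_iff]
        refine squeeze_zero_norm' (a := fun t =>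
          (((n:ℝ) * (ε + u)⁻¹) * ((n:ℝ) * (ε0 + u)⁻¹)) * m t) ?_ ?_
        · filter_upwards [hment, hεt] with t ht hevt
          have hu0' : (0:ℝ) ≤ u := hu0
          have htI : t ∈ Set.Ici (0:ℝ) := Set.mem_Ici.mpr (le_of_lt ht)
          have hht : (c t).IsHermitian := (hpos t htI).1
          have hevtpos : ∀ k, 0 < hht.eigenvalues k := fun k =>
            lt_of_lt_of_le hε (hevt hht k)
          have hBinv := mul_inv_add_one hht hevtpos hu0'
          have hAinv := mul_inv_add_one h0 hevpos0 hu0'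
          have hdiff : (Pu u) - (c t + (u:ℂ) • 1)⁻¹
              = (c t + (u:ℂ) • 1)⁻¹ * ((c t + (u:ℂ) • 1) - (c 0 + (u:ℂ) • 1)) * (Pu u) :=
            inv_diff (c 0 + (u:ℂ) • 1) (Pu u) (c t + (u:ℂ) • 1) ((c t + (u:ℂ) • 1)⁻¹)
              hAinv.1 hBinv.2
          have hmid : (c t + (u:ℂ) • 1) - (c 0 + (u:ℂ) • 1) = c t - c 0 := by abel
          rw [hmid] at hdiff
          have hentry : ((c t + (u:ℂ) • 1)⁻¹) p q - (Pu u) p q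
              = -(((c t + (u:ℂ) • 1)⁻¹ * (c t - c 0) * (Pu u)) p q) := by
            have := congrFun (congrFun hdiff p) q
            simp only [Matrix.sub_apply] at this
            linear_combination -this
          rw [hentry, norm_neg]
          have hbdt : ∀ p' q', ‖((c t + (u:ℂ) • 1)⁻¹) p' q'‖
              ≤ (n:ℝ) * (ε + u)⁻¹ := fun p' q' =>
            (eigenvalues_fc_inv_entry_bound hht hε (hevt hht) hu0').2 p' q'
          have hA0 : (0:ℝ) ≤ (n:ℝ) * (ε + u)⁻¹ := by positivity
          have hC0 : (0:ℝ) ≤ (n:ℝ) * (ε0 + u)⁻¹ := by positivity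
          have h1 := entry_triple_bound ((c t + (u:ℂ) • 1)⁻¹) (c t - c 0) (Pu u)
            hbdt (hbd0 u hu0') hA0 hC0 p q
          refine h1.trans (le_of_eq ?_)
          rw [hmdef]
          simp only [Matrix.sub_apply]
          ring
        · have := hm0.const_mul ((((n:ℝ) * (ε + u)⁻¹) * ((n:ℝ) * (ε0 + u)⁻¹)))
          simpa using this
    -- now identify slope with the integral, eventually
    have heq : ∀ᶠ t in l, ∫ u in Set.Ioi (0:ℝ), F t u
        = slope (fun s => matLog (c s) i j) 0 t := by
      filter_upwards [hment, hεt] with t ht hevt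
      have ht0 : (0:ℝ) < t := ht
      have htI : t ∈ Set.Ici (0:ℝ) := le_of_lt ht0
      have hht : (c t).IsHermitian := (hpos t htI).1
      have hevtpos : ∀ k, 0 < hht.eigenvalues k := fun k => lt_of_lt_of_le hε (hevt hht k)
      have hL1 := matLog_entry hht hevtpos i j
      have hL0 := matLog_entry h0 hevpos0 i j
      have hslope : slope (fun s => matLog (c s) i j) 0 t
          = t⁻¹ • (matLog (c t) i j - matLog (c 0) i j) := by
        rw [slope_def_module]
        rw [sub_zero]
      rw [hslope, ← hL1.2, ← hL0.2,
        ← MeasureTheory.integral_sub hL1.1 hL0.1, ← MeasureTheory.integral_smul]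
      refine MeasureTheory.setIntegral_congr_fun measurableSet_Ioi (fun u hu => ?_) |>.symm
      show t⁻¹ • (fc hht (fun r => (1+u)⁻¹ - (r+u)⁻¹) i j
          - fc h0 (fun r => (1+u)⁻¹ - (r+u)⁻¹) i j)
        = ((c t + (u:ℂ) • 1)⁻¹ * (t⁻¹ • (c t - c 0)) * Pu u) i j
      have hu0 : (0:ℝ) ≤ u := le_of_lt hu
      have e1 := fc_res_diff hht hevtpos hu0
      have e0 := fc_res_diff h0 hevpos0 hu0
      have hBinv := mul_inv_add_one hht hevtpos hu0
      have hAinv := mul_inv_add_one h0 hevpos0 hu0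
      have hdiff : (Pu u) - (c t + (u:ℂ) • 1)⁻¹
          = (c t + (u:ℂ) • 1)⁻¹ * ((c t + (u:ℂ) • 1) - (c 0 + (u:ℂ) • 1)) * (Pu u) :=
        inv_diff (c 0 + (u:ℂ) • 1) (Pu u) (c t + (u:ℂ) • 1) ((c t + (u:ℂ) • 1)⁻¹)
          hAinv.1 hBinv.2
      have hmid : (c t + (u:ℂ) • 1) - (c 0 + (u:ℂ) • 1) = c t - c 0 := by abel
      rw [hmid] at hdiff
      have hmat : fc hht (fun r => (1+u)⁻¹ - (r+u)⁻¹) - fc h0 (fun r => (1+u)⁻¹ - (r+u)⁻¹)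
          = (c t + (u:ℂ) • 1)⁻¹ * (c t - c 0) * (Pu u) := by
        rw [e1, e0, ← hdiff]
        abel
      have hsmul : (c t + (u:ℂ) • 1)⁻¹ * (t⁻¹ • (c t - c 0)) * (Pu u)
          = t⁻¹ • ((c t + (u:ℂ) • 1)⁻¹ * (c t - c 0) * (Pu u)) := by
        rw [Matrix.mul_smul, Matrix.smul_mul]
      calc t⁻¹ • (fc hht (fun r => (1+u)⁻¹ - (r+u)⁻¹) i j
              - fc h0 (fun r => (1+u)⁻¹ - (r+u)⁻¹) i j)
          = t⁻¹ • ((fc hht (fun r => (1+u)⁻¹ - (r+u)⁻¹)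
              - fc h0 (fun r => (1+u)⁻¹ - (r+u)⁻¹)) i j) := by
            rw [Matrix.sub_apply]
        _ = t⁻¹ • (((c t + (u:ℂ) • 1)⁻¹ * (c t - c 0) * (Pu u)) i j) := by rw [hmat]
        _ = (t⁻¹ • ((c t + (u:ℂ) • 1)⁻¹ * (c t - c 0) * (Pu u))) i j := by
            rw [Matrix.smul_apply]
        _ = ((c t + (u:ℂ) • 1)⁻¹ * (t⁻¹ • (c t - c 0)) * Pu u) i j := by rw [hsmul]
    have hDij : D i j = ∫ u in Set.Ioi (0:ℝ), (Pu u * B * Pu u) i j := rfl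
    rw [hDij]
    exact Filter.Tendsto.congr' heq hDC
  refine ⟨-D, fun i j => ?_, ?_⟩
  · rw [hasDerivWithinAt_iff_tendsto_slope, Set.Ici_sdiff_left]
    rw [show (-(-D)) i j = D i j by simp]
    exact hmain i j
  · -- trace part
    have hPuS : ∀ (S : Matrix (Fin n) (Fin n) ℂ) i j,
        MeasureTheory.IntegrableOn (fun u : ℝ => (Pu u * S * Pu u) i j) (Set.Ioi 0) :=
      fun S i j => intOn_inv_mul_mul_inv h0 hε0 hev0 S i j
    have htrB : B.trace = 0 := by
      rw [hBdef, Matrix.trace_neg, neg_eq_zero]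
      rw [lap, Matrix.trace_add]
      rw [show delta1 y (delta1 y (matLog (c 0)))
          = y * (delta1 y (matLog (c 0))) - (delta1 y (matLog (c 0))) * y from rfl]
      rw [show delta2 x (delta2 x (matLog (c 0)))
          = (delta2 x (matLog (c 0))) * x - x * (delta2 x (matLog (c 0))) from rfl]
      rw [Matrix.trace_sub, Matrix.trace_sub, Matrix.trace_mul_comm]
      rw [Matrix.trace_mul_comm x (delta2 x (matLog (c 0)))]
      abel
    have key : (c 0 * D).trace = B.trace := by
      have e1 : (c 0 * D).trace = ∑ i, ∑ j, c 0 i j * D j i := by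
        simp only [Matrix.trace, Matrix.diag, Matrix.mul_apply]
      rw [e1]
      have e2 : ∀ i j : Fin n, c 0 i j * D j i
          = ∫ u in Set.Ioi (0:ℝ), c 0 i j * ((Pu u * B * Pu u) j i) := by
        intro i j
        rw [hDdef]
        simp only [Matrix.of_apply]
        rw [MeasureTheory.integral_const_mul]
      calc ∑ i, ∑ j, c 0 i j * D j i
          = ∑ i, ∑ j, ∫ u in Set.Ioi (0:ℝ), c 0 i j * ((Pu u * B * Pu u) j i) :=
            Finset.sum_congr rfl fun i _ => Finset.sum_congr rfl fun j _ => e2 i j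
        _ = ∫ u in Set.Ioi (0:ℝ), ∑ i, ∑ j, c 0 i j * ((Pu u * B * Pu u) j i) := by
            have swap1 : ∀ (g : Fin n → ℝ → ℂ), (∀ i, MeasureTheory.IntegrableOn (g i)
                (Set.Ioi (0:ℝ))) → ∑ i, ∫ u in Set.Ioi (0:ℝ), g i u
                  = ∫ u in Set.Ioi (0:ℝ), ∑ i, g i u :=
              fun g hg => (MeasureTheory.integral_finset_sum _ (fun i _ => hg i)).symm
            calc ∑ i, ∑ j, ∫ u in Set.Ioi (0:ℝ), c 0 i j * ((Pu u * B * Pu u) j i)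
                = ∑ i, ∫ u in Set.Ioi (0:ℝ), ∑ j, c 0 i j * ((Pu u * B * Pu u) j i) :=
                  Finset.sum_congr rfl fun i _ =>
                    swap1 (fun j u => c 0 i j * ((Pu u * B * Pu u) j i))
                      (fun j => (hPuS B j i).const_mul _)
              _ = ∫ u in Set.Ioi (0:ℝ), ∑ i, ∑ j, c 0 i j * ((Pu u * B * Pu u) j i) :=
                  swap1 (fun i u => ∑ j, c 0 i j * ((Pu u * B * Pu u) j i))
                    (fun i => MeasureTheory.integrable_finset_sum _ fun j _ =>
                      (hPuS B j i).const_mul _)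
        _ = ∫ u in Set.Ioi (0:ℝ), ∑ k, ∑ r, (Pu u * c 0 * Pu u) k r * B r k := by
            refine MeasureTheory.integral_congr_ae (Filter.Eventually.of_forall fun u => ?_)
            show (∑ i, ∑ j, c 0 i j * ((Pu u * B * Pu u) j i))
              = ∑ k, ∑ r, (Pu u * c 0 * Pu u) k r * B r k
            have ht1 : ∑ i, ∑ j, c 0 i j * ((Pu u * B * Pu u) j i)
                = (c 0 * (Pu u * B * Pu u)).trace := by
              simp only [Matrix.trace, Matrix.diag, Matrix.mul_apply]
            have ht2 : ∑ k, ∑ r, (Pu u * c 0 * Pu u) k r * B r k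
                = ((Pu u * c 0 * Pu u) * B).trace := by
              simp only [Matrix.trace, Matrix.diag, Matrix.mul_apply]
            rw [ht1, ht2]
            have hassoc : c 0 * (Pu u * B * Pu u) = (c 0 * Pu u * B) * Pu u := by
              noncomm_ring
            rw [hassoc, Matrix.trace_mul_comm]
            congr 1
            noncomm_ring
        _ = ∑ k, ∑ r, (∫ u in Set.Ioi (0:ℝ), (Pu u * c 0 * Pu u) k r) * B r k := by
            have swap1 : ∀ (g : Fin n → ℝ → ℂ), (∀ i, MeasureTheory.IntegrableOn (g i)
                (Set.Ioi (0:ℝ))) → ∫ u in Set.Ioi (0:ℝ), ∑ i, g i u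
                  = ∑ i, ∫ u in Set.Ioi (0:ℝ), g i u :=
              fun g hg => MeasureTheory.integral_finset_sum _ (fun i _ => hg i)
            calc ∫ u in Set.Ioi (0:ℝ), ∑ k, ∑ r, (Pu u * c 0 * Pu u) k r * B r k
                = ∑ k, ∫ u in Set.Ioi (0:ℝ), ∑ r, (Pu u * c 0 * Pu u) k r * B r k :=
                  swap1 (fun k u => ∑ r, (Pu u * c 0 * Pu u) k r * B r k)
                    (fun k => MeasureTheory.integrable_finset_sum _ fun r _ =>
                      (hPuS (c 0) k r).mul_const _)
              _ = ∑ k, ∑ r, ∫ u in Set.Ioi (0:ℝ), (Pu u * c 0 * Pu u) k r * B r k :=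
                  Finset.sum_congr rfl fun k _ =>
                    swap1 (fun r u => (Pu u * c 0 * Pu u) k r * B r k)
                      (fun r => (hPuS (c 0) k r).mul_const _)
              _ = ∑ k, ∑ r, (∫ u in Set.Ioi (0:ℝ), (Pu u * c 0 * Pu u) k r) * B r k :=
                  Finset.sum_congr rfl fun k _ => Finset.sum_congr rfl fun r _ =>
                    MeasureTheory.integral_mul_const _ _
        _ = ∑ k, ∑ r, ((1 : Matrix (Fin n) (Fin n) ℂ) k r) * B r k := by
            refine Finset.sum_congr rfl fun k _ => Finset.sum_congr rfl fun r _ => ?_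
            congr 1
            have hcongr : ∫ u in Set.Ioi (0:ℝ), (Pu u * c 0 * Pu u) k r
                = ∫ u in Set.Ioi (0:ℝ), (fc h0 (fun w => w * ((w+u)⁻¹)^2)) k r := by
              refine MeasureTheory.setIntegral_congr_fun measurableSet_Ioi fun u hu => ?_
              have hu0 : (0:ℝ) ≤ u := le_of_lt hu
              rw [fc_res_sq h0 hevpos0 hu0]
            rw [hcongr]
            exact (resolvent_sq_entry h0 hevpos0 k r).2
        _ = B.trace := by
            simp [Matrix.one_apply, Matrix.trace, Matrix.diag, ite_mul]
    rw [show c 0 * -D = -(c 0 * D) from by rw [Matrix.mul_neg], Matrix.trace_neg, key, htrB,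
      neg_zero]
end
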